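/- arXiv:math/0502485 — 7 statements merged into one kernel-verified Lean document; each statement's English description precedes it below -/
import Mathlib

section
/- (Geronimus.) Let μ and ν be two nontrivial probability measures on the unit circle and suppose that for some N₀ ≥ 1 one has Φ_{N₀}(z; dμ) = Φ_{N₀}(z; dν) as polynomials. Then Φ_j(z; dμ) = Φ_j(z; dν) for j = 0, 1, …, N₀ − 1, α_j(dμ) = α_j(dν) for j = 0, 1, …, N₀ − 1, and φ_j(z; dμ) = φ_j(z; dν) for j = 0, 1, …, N₀. -/
open MeasureTheory Polynomial Filter

noncomputable section

/-- A nontrivial probability measure on the unit circle: a probability measure on `ℂ`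
supported on `{z : ‖z‖ = 1}` that is not concentrated on any finite set
(equivalently, its support is infinite). -/
structure IsNontrivialOnCircle (μ : Measure ℂ) : Prop where
  prob : IsProbabilityMeasure μ
  onCircle : μ {z : ℂ | ‖z‖ = 1}ᶜ = 0
  infiniteSupport : ∀ s : Finset ℂ, μ ((↑s : Set ℂ)ᶜ) ≠ 0

/-- `Φ` is the family of monic orthogonal polynomials for `μ`: each `Φ n` is monic of
degree `n` and orthogonal in `L²(∂𝔻, dμ)` to `z^j` for `j = 0, …, n-1`. -/
def IsMonicOPUC (μ : Measure ℂ) (Φ : ℕ → Polynomial ℂ) : Prop :=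
  ∀ n : ℕ, ((Φ n).Monic ∧ (Φ n).natDegree = n) ∧
    ∀ j < n, ∫ z, (starRingEnd ℂ) z ^ j * (Φ n).eval z ∂μ = 0

/-- Verblunsky coefficients: `α n = -conj (Φ (n+1) (0))`. -/
def verblunsky (Φ : ℕ → Polynomial ℂ) (n : ℕ) : ℂ :=
  - (starRingEnd ℂ) ((Φ (n + 1)).eval 0)

/-- Squared `L²(dμ)` norm of a polynomial. -/
def polyNormSq (μ : Measure ℂ) (P : Polynomial ℂ) : ℝ :=
  ∫ z, ‖P.eval z‖ ^ 2 ∂μ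

/-- Orthonormal polynomial: `φ = Φ / ‖Φ‖_{L²(dμ)}`. -/
def orthonormalize (μ : Measure ℂ) (P : Polynomial ℂ) : Polynomial ℂ :=
  Polynomial.C ((Real.sqrt (polyNormSq μ P) : ℂ))⁻¹ * P

/-- The reversed polynomial `P^{*,n}(z) = z^n conj (P (1/conj z))`. -/
def revStar (n : ℕ) (P : Polynomial ℂ) : Polynomial ℂ :=
  ∑ j ∈ Finset.range (n + 1),
    Polynomial.C ((starRingEnd ℂ) (P.coeff (n - j))) * Polynomial.X ^ j

namespace Ger

variable {μ : Measure ℂ}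

lemma ae_norm_one (hμ : IsNontrivialOnCircle μ) : ∀ᵐ z ∂μ, ‖z‖ = 1 := by
  rw [ae_iff]
  convert hμ.onCircle using 2
  rfl

lemma integrable_cont (hμ : IsNontrivialOnCircle μ) {E : Type*} [NormedAddCommGroup E]
    {f : ℂ → E} (hf : Continuous f) : Integrable f μ := by
  haveI := hμ.prob
  obtain ⟨C, hC⟩ := (isCompact_sphere (0:ℂ) 1).exists_bound_of_continuousOn hf.continuousOn
  refine (integrable_const C).mono' hf.aestronglyMeasurable ?_
  filter_upwards [ae_norm_one hμ] with z hz
  exact hC z (by simpa [Metric.mem_sphere, dist_zero_right] using hz)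

lemma conj_mul_self {z : ℂ} (hz : ‖z‖ = 1) : (starRingEnd ℂ) z * z = 1 := by
  rw [mul_comm, Complex.mul_conj, Complex.normSq_eq_norm_sq, hz]
  norm_num

lemma pow_conj_pow {z : ℂ} (hz : ‖z‖ = 1) {i n : ℕ} (h : i ≤ n) :
    z ^ n * (starRingEnd ℂ) z ^ i = z ^ (n - i) := by
  have h1 : z * (starRingEnd ℂ) z = 1 := by rw [mul_comm]; exact conj_mul_self hz
  calc z ^ n * (starRingEnd ℂ) z ^ i
      = z ^ (n-i) * (z ^ i * (starRingEnd ℂ) z ^ i) := by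
        rw [← mul_assoc, ← pow_add, Nat.sub_add_cancel h]
    _ = z ^ (n-i) * ((z * (starRingEnd ℂ) z) ^ i) := by rw [mul_pow]
    _ = z ^ (n-i) := by rw [h1, one_pow, mul_one]

lemma cont_eval (P : Polynomial ℂ) : Continuous fun z : ℂ => P.eval z := P.continuous

lemma int_cc (hμ : IsNontrivialOnCircle μ) {f g : ℂ → ℂ} (hf : Continuous f)
    (hg : Continuous g) : Integrable (fun z => (starRingEnd ℂ) (f z) * g z) μ :=
  integrable_cont hμ ((Complex.continuous_conj.comp hf).mul hg)

lemma int_pow (hμ : IsNontrivialOnCircle μ) (j : ℕ) {g : ℂ → ℂ} (hg : Continuous g) :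
    Integrable (fun z => (starRingEnd ℂ) z ^ j * g z) μ :=
  integrable_cont hμ ((Complex.continuous_conj.pow j).mul hg)

lemma ip_self (μ : Measure ℂ) (P : Polynomial ℂ) :
    ∫ z, (starRingEnd ℂ) (P.eval z) * P.eval z ∂μ = ((polyNormSq μ P : ℝ) : ℂ) := by
  have h : ∫ z, ((‖P.eval z‖ ^ 2 : ℝ) : ℂ) ∂μ = ((∫ z, ‖P.eval z‖ ^ 2 ∂μ : ℝ) : ℂ) :=
    integral_ofReal
  rw [polyNormSq, ← h]
  congr 1
  funext z
  rw [mul_comm, Complex.mul_conj, Complex.normSq_eq_norm_sq]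

lemma ip_eq_zero_of_orth (hμ : IsNontrivialOnCircle μ) {n : ℕ} {Q R : Polynomial ℂ}
    (horth : ∀ j < n, ∫ z, (starRingEnd ℂ) z ^ j * R.eval z ∂μ = 0)
    (hQ : Q.natDegree < n) :
    ∫ z, (starRingEnd ℂ) (Q.eval z) * R.eval z ∂μ = 0 := by
  have h1 : ∀ z : ℂ, (starRingEnd ℂ) (Q.eval z) * R.eval z
      = ∑ j ∈ Finset.range n, (starRingEnd ℂ) (Q.coeff j) *
          ((starRingEnd ℂ) z ^ j * R.eval z) := by
    intro z
    rw [eval_eq_sum_range' hQ z, map_sum, Finset.sum_mul]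
    refine Finset.sum_congr rfl fun j _ => ?_
    rw [map_mul, map_pow]; ring
  simp only [h1]
  rw [integral_finset_sum _ (fun j _ => (int_pow hμ j (cont_eval R)).const_mul _)]
  refine Finset.sum_eq_zero fun j hj => ?_
  rw [integral_const_mul, horth j (Finset.mem_range.mp hj), mul_zero]

lemma eq_zero_of_polyNormSq_eq_zero (hμ : IsNontrivialOnCircle μ) {P : Polynomial ℂ}
    (h : polyNormSq μ P = 0) : P = 0 := by
  by_contra hP
  have hint : Integrable (fun z => ‖P.eval z‖ ^ 2) μ :=
    integrable_cont hμ ((cont_eval P).norm.pow 2)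
  have hae : (fun z => ‖P.eval z‖ ^ 2) =ᵐ[μ] 0 :=
    (integral_eq_zero_iff_of_nonneg (fun z => sq_nonneg _) hint).mp h
  have hroot : ∀ᵐ z ∂μ, P.IsRoot z := by
    filter_upwards [hae] with z hz
    have : ‖P.eval z‖ = 0 := by
      have := hz
      simp only [Pi.zero_apply] at this
      nlinarith [norm_nonneg (P.eval z)]
    simpa [Polynomial.IsRoot] using norm_eq_zero.mp this
  have hfin := Polynomial.finite_setOf_isRoot hP
  refine hμ.infiniteSupport hfin.toFinset ?_
  have : μ {z : ℂ | ¬ P.IsRoot z} = 0 := by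
    rw [ae_iff] at hroot; exact hroot
  convert this using 2
  ext z
  simp [Set.Finite.mem_toFinset]

lemma eq_zero_of_orth_self (hμ : IsNontrivialOnCircle μ) {n : ℕ} {P : Polynomial ℂ}
    (hdeg : P.natDegree < n)
    (horth : ∀ j < n, ∫ z, (starRingEnd ℂ) z ^ j * P.eval z ∂μ = 0) : P = 0 := by
  have h0 : ((polyNormSq μ P : ℝ) : ℂ) = 0 := by
    rw [← ip_self]; exact ip_eq_zero_of_orth hμ horth hdeg
  exact eq_zero_of_polyNormSq_eq_zero hμ (by exact_mod_cast h0)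

/-! ### revStar lemmas -/

lemma revStar_coeff (n : ℕ) (P : Polynomial ℂ) (k : ℕ) :
    (revStar n P).coeff k = if k ≤ n then (starRingEnd ℂ) (P.coeff (n - k)) else 0 := by
  rw [revStar, Polynomial.finset_sum_coeff]
  simp only [Polynomial.coeff_C_mul, Polynomial.coeff_X_pow, mul_ite, mul_one, mul_zero]
  rw [Finset.sum_ite_eq (Finset.range (n+1)) k
    (fun j => (starRingEnd ℂ) (P.coeff (n - j)))]
  simp [Finset.mem_range, Nat.lt_succ_iff]

lemma natDegree_revStar_le (n : ℕ) (P : Polynomial ℂ) : (revStar n P).natDegree ≤ n := by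
  rw [Polynomial.natDegree_le_iff_coeff_eq_zero]
  intro N hN
  rw [revStar_coeff, if_neg (by omega)]

lemma eval_revStar {z : ℂ} (hz : ‖z‖ = 1) {n : ℕ} {P : Polynomial ℂ}
    (hP : P.natDegree ≤ n) :
    (revStar n P).eval z = z ^ n * (starRingEnd ℂ) (P.eval z) := by
  rw [revStar, Polynomial.eval_finset_sum]
  rw [eval_eq_sum_range' (lt_of_le_of_lt hP (Nat.lt_succ_self n)) z, map_sum,
    Finset.mul_sum]
  rw [← Finset.sum_range_reflect]
  refine Finset.sum_congr rfl fun j hj => ?_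
  have hj' : j ≤ n := Nat.lt_succ_iff.mp (Finset.mem_range.mp hj)
  have h1 : n + 1 - 1 - j = n - j := by omega
  have h2 : n - (n - j) = j := by omega
  rw [h1, h2]
  simp only [Polynomial.eval_mul, Polynomial.eval_C, Polynomial.eval_pow, Polynomial.eval_X,
    map_mul, map_pow, Complex.conj_conj]
  have h3 : z ^ n * (starRingEnd ℂ) z ^ j = z ^ (n - j) := pow_conj_pow hz hj'
  linear_combination (-(starRingEnd ℂ) (P.coeff j)) * h3

lemma revStar_X_mul (n : ℕ) (P : Polynomial ℂ) : revStar (n+1) (X * P) = revStar n P := by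
  ext k
  rw [revStar_coeff, revStar_coeff]
  by_cases h1 : k ≤ n
  · rw [if_pos h1, if_pos (by omega)]
    have h2 : n + 1 - k = (n - k) + 1 := by omega
    rw [h2, Polynomial.coeff_X_mul]
  · by_cases h2 : k = n + 1
    · subst h2
      rw [if_pos le_rfl, if_neg h1]
      have : n + 1 - (n + 1) = 0 := by omega
      rw [this]
      simp [Polynomial.mul_coeff_zero]
    · rw [if_neg (by omega), if_neg h1]

lemma revStar_revStar {n : ℕ} {P : Polynomial ℂ} (hP : P.natDegree ≤ n) :
    revStar (n+1) (revStar n P) = X * P := by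
  ext k
  rw [revStar_coeff]
  cases k with
  | zero =>
    rw [if_pos (by omega)]
    have : n + 1 - 0 = n + 1 := rfl
    rw [this, revStar_coeff, if_neg (by omega)]
    simp [Polynomial.mul_coeff_zero]
  | succ m =>
    by_cases h1 : m + 1 ≤ n + 1
    · rw [if_pos h1, revStar_coeff, if_pos (by omega), Complex.conj_conj,
        Polynomial.coeff_X_mul]
      congr 1
      omega
    · rw [if_neg h1, Polynomial.coeff_X_mul]
      exact (Polynomial.coeff_eq_zero_of_natDegree_lt (by omega)).symm

lemma revStar_add (n : ℕ) (P Q : Polynomial ℂ) :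
    revStar n (P + Q) = revStar n P + revStar n Q := by
  ext k
  rw [Polynomial.coeff_add, revStar_coeff, revStar_coeff, revStar_coeff]
  split
  · rw [Polynomial.coeff_add, map_add]
  · rw [add_zero]

lemma revStar_C_mul (n : ℕ) (c : ℂ) (P : Polynomial ℂ) :
    revStar n (C c * P) = C ((starRingEnd ℂ) c) * revStar n P := by
  ext k
  rw [Polynomial.coeff_C_mul, revStar_coeff, revStar_coeff]
  split
  · rw [Polynomial.coeff_C_mul, map_mul]
  · rw [mul_zero]


/-! ### Szegő recursion -/

theorem szego (hμ : IsNontrivialOnCircle μ) {Φ : ℕ → Polynomial ℂ} (hΦ : IsMonicOPUC μ Φ)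
    (n : ℕ) :
    Φ (n+1) = X * Φ n + C ((Φ (n+1)).eval 0) * revStar n (Φ n) := by
  have hPm : (Φ n).Monic := (hΦ n).1.1
  have hPd : (Φ n).natDegree = n := (hΦ n).1.2
  have hQm : (Φ (n+1)).Monic := (hΦ (n+1)).1.1
  have hQd : (Φ (n+1)).natDegree = n + 1 := (hΦ (n+1)).1.2
  set a := (Φ (n+1)).eval 0 with ha
  set S := revStar n (Φ n) with hS
  set D := Φ (n+1) - (X * Φ n + C a * S) with hD
  have hSd : S.natDegree ≤ n := natDegree_revStar_le n (Φ n)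
  suffices hD0 : D = 0 by
    exact sub_eq_zero.mp hD0
  -- degree bound
  have hdeg : D.natDegree ≤ n := by
    rw [Polynomial.natDegree_le_iff_coeff_eq_zero]
    intro N hN
    rw [hD]
    simp only [Polynomial.coeff_sub, Polynomial.coeff_add, Polynomial.coeff_C_mul]
    rcases eq_or_lt_of_le (Nat.succ_le_of_lt hN) with h | h
    · -- N = n+1
      have hN1 : N = n + 1 := h.symm
      subst hN1
      rw [Polynomial.coeff_X_mul]
      have c1 : (Φ (n+1)).coeff (n+1) = 1 := by
        have := hQm.coeff_natDegree; rwa [hQd] at this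
      have c2 : (Φ n).coeff n = 1 := by
        have := hPm.coeff_natDegree; rwa [hPd] at this
      have c3 : S.coeff (n+1) = 0 :=
        Polynomial.coeff_eq_zero_of_natDegree_lt (lt_of_le_of_lt hSd (Nat.lt_succ_self n))
      rw [c1, c2, c3, mul_zero]; ring
    · -- N > n+1
      have c1 : (Φ (n+1)).coeff N = 0 :=
        Polynomial.coeff_eq_zero_of_natDegree_lt (by omega)
      have c3 : S.coeff N = 0 :=
        Polynomial.coeff_eq_zero_of_natDegree_lt (by omega)
      have c2 : (X * Φ n).coeff N = 0 := by
        obtain ⟨M, rfl⟩ : ∃ M, N = M + 1 := ⟨N - 1, by omega⟩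
        rw [Polynomial.coeff_X_mul]
        exact Polynomial.coeff_eq_zero_of_natDegree_lt (by omega)
      rw [c1, c2, c3, mul_zero]; ring
  -- constant coefficient
  have hc0 : D.coeff 0 = 0 := by
    rw [hD]
    simp only [Polynomial.coeff_sub, Polynomial.coeff_add, Polynomial.coeff_C_mul,
      Polynomial.mul_coeff_zero, Polynomial.coeff_X_zero, zero_mul,
      Polynomial.coeff_C_zero]
    have c1 : (Φ (n+1)).coeff 0 = a := by rw [Polynomial.coeff_zero_eq_eval_zero]
    have c2 : S.coeff 0 = 1 := by
      rw [hS, revStar_coeff, if_pos (Nat.zero_le n)]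
      have : (Φ n).coeff (n - 0) = 1 := by
        have := hPm.coeff_natDegree; rw [hPd] at this; simpa using this
      rw [this, map_one]
    rw [c1, c2, mul_one]; ring
  -- orthogonality of D to z^j for 1 ≤ j ≤ n
  have horthD : ∀ j, 1 ≤ j → j ≤ n → ∫ z, (starRingEnd ℂ) z ^ j * D.eval z ∂μ = 0 := by
    intro j hj1 hjn
    have hsplit : ∀ z : ℂ, (starRingEnd ℂ) z ^ j * D.eval z
        = (starRingEnd ℂ) z ^ j * (Φ (n+1)).eval z
          - ((starRingEnd ℂ) z ^ j * (z * (Φ n).eval z)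
             + a * ((starRingEnd ℂ) z ^ j * S.eval z)) := by
      intro z
      rw [hD]
      simp only [Polynomial.eval_sub, Polynomial.eval_add, Polynomial.eval_mul,
        Polynomial.eval_C, Polynomial.eval_X]
      ring
    simp only [hsplit]
    have i1 : Integrable (fun z => (starRingEnd ℂ) z ^ j * (Φ (n+1)).eval z) μ :=
      int_pow hμ j (cont_eval _)
    have i2 : Integrable (fun z => (starRingEnd ℂ) z ^ j * (z * (Φ n).eval z)) μ :=
      int_pow hμ j (continuous_id.mul (cont_eval _))
    have i3 : Integrable (fun z => a * ((starRingEnd ℂ) z ^ j * S.eval z)) μ :=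
      (int_pow hμ j (cont_eval _)).const_mul a
    have hi := integral_sub i1 (i2.add i3)
    simp only [Pi.add_apply] at hi
    -- term 1
    have t1 : ∫ z, (starRingEnd ℂ) z ^ j * (Φ (n+1)).eval z ∂μ = 0 :=
      (hΦ (n+1)).2 j (by omega)
    -- term 2
    have t2 : ∫ z, (starRingEnd ℂ) z ^ j * (z * (Φ n).eval z) ∂μ = 0 := by
      have : (fun z => (starRingEnd ℂ) z ^ j * (z * (Φ n).eval z)) =ᵐ[μ]
          (fun z => (starRingEnd ℂ) z ^ (j-1) * (Φ n).eval z) := by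
        filter_upwards [ae_norm_one hμ] with z hz
        have h1 : (starRingEnd ℂ) z ^ j = (starRingEnd ℂ) z ^ (j-1) * (starRingEnd ℂ) z := by
          rw [← pow_succ]; congr 1; omega
        rw [h1]
        have h2 : (starRingEnd ℂ) z * z = 1 := conj_mul_self hz
        linear_combination ((starRingEnd ℂ) z ^ (j-1) * (Φ n).eval z) * h2
      rw [integral_congr_ae this]
      exact (hΦ n).2 (j-1) (by omega)
    -- term 3
    have t3 : ∫ z, (starRingEnd ℂ) z ^ j * S.eval z ∂μ = 0 := by
      have : (fun z => (starRingEnd ℂ) z ^ j * S.eval z) =ᵐ[μ]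
          (fun z => (starRingEnd ℂ) ((starRingEnd ℂ) z ^ (n-j) * (Φ n).eval z)) := by
        filter_upwards [ae_norm_one hμ] with z hz
        rw [hS, eval_revStar hz (le_of_eq hPd)]
        rw [map_mul, map_pow, Complex.conj_conj]
        have h3 : z ^ n * (starRingEnd ℂ) z ^ j = z ^ (n - j) := pow_conj_pow hz hjn
        linear_combination ((starRingEnd ℂ) ((Φ n).eval z)) * h3
      rw [integral_congr_ae this, integral_conj]
      rw [(hΦ n).2 (n-j) (by omega), map_zero]
    rw [hi, integral_add i2 i3, integral_const_mul, t1, t2, t3, mul_zero]; ring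
  -- conclude
  rcases Nat.eq_zero_or_pos n with hn | hn
  · subst hn
    have := Polynomial.eq_C_of_natDegree_le_zero hdeg
    rw [this, hc0, map_zero]
  · have hDx : D = X * D.divX := by
      conv_lhs => rw [← Polynomial.X_mul_divX_add D]
      rw [hc0, map_zero, add_zero]
    set E := D.divX with hE
    have hEd : E.natDegree < n := by
      have : E.natDegree ≤ n - 1 := by
        rw [Polynomial.natDegree_le_iff_coeff_eq_zero]
        intro N hN
        rw [hE, Polynomial.coeff_divX]
        exact Polynomial.natDegree_le_iff_coeff_eq_zero.mp hdeg _ (by omega)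
      omega
    have hEorth : ∀ j < n, ∫ z, (starRingEnd ℂ) z ^ j * E.eval z ∂μ = 0 := by
      intro j hj
      have h1 := horthD (j+1) (by omega) (by omega)
      have : (fun z => (starRingEnd ℂ) z ^ (j+1) * D.eval z) =ᵐ[μ]
          (fun z => (starRingEnd ℂ) z ^ j * E.eval z) := by
        filter_upwards [ae_norm_one hμ] with z hz
        rw [hDx]
        simp only [Polynomial.eval_mul, Polynomial.eval_X]
        have h2 : (starRingEnd ℂ) z * z = 1 := conj_mul_self hz
        rw [pow_succ]
        linear_combination ((starRingEnd ℂ) z ^ j * E.eval z) * h2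
      rw [← integral_congr_ae this]
      exact h1
    have hE0 : E = 0 := eq_zero_of_orth_self hμ hEd hEorth
    rw [hDx, hE0, mul_zero]


/-! ### Norm identity -/

lemma norm_step (hμ : IsNontrivialOnCircle μ) (P Q S : Polynomial ℂ) (a : ℂ)
    (hrec : Q = X * P + C a * S)
    (hSQ : ∫ z, (starRingEnd ℂ) (S.eval z) * Q.eval z ∂μ = 0)
    (hSS : ∫ z, (starRingEnd ℂ) (S.eval z) * S.eval z ∂μ = ((polyNormSq μ P : ℝ) : ℂ))
    (hzPzP : ∫ z, (starRingEnd ℂ) (z * P.eval z) * (z * P.eval z) ∂μ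
      = ((polyNormSq μ P : ℝ) : ℂ)) :
    ((polyNormSq μ Q : ℝ) : ℂ)
      = (1 - (Complex.normSq a : ℂ)) * ((polyNormSq μ P : ℝ) : ℂ) := by
  have izPS : Integrable (fun z => (starRingEnd ℂ) (z * P.eval z) * S.eval z) μ :=
    int_cc hμ (continuous_id.mul (cont_eval P)) (cont_eval S)
  have iSzP : Integrable (fun z => (starRingEnd ℂ) (S.eval z) * (z * P.eval z)) μ :=
    int_cc hμ (cont_eval S) (continuous_id.mul (cont_eval P))
  have iSS : Integrable (fun z => (starRingEnd ℂ) (S.eval z) * S.eval z) μ :=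
    int_cc hμ (cont_eval S) (cont_eval S)
  have izPzP : Integrable (fun z => (starRingEnd ℂ) (z * P.eval z) * (z * P.eval z)) μ :=
    int_cc hμ (continuous_id.mul (cont_eval P)) (continuous_id.mul (cont_eval P))
  have iSQ : Integrable (fun z => (starRingEnd ℂ) (S.eval z) * Q.eval z) μ :=
    int_cc hμ (cont_eval S) (cont_eval Q)
  -- ⟨S, zP⟩ = -a ⟨P,P⟩
  have hSzP : ∫ z, (starRingEnd ℂ) (S.eval z) * (z * P.eval z) ∂μ
      = - a * ((polyNormSq μ P : ℝ) : ℂ) := by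
    have hpt : (fun z => (starRingEnd ℂ) (S.eval z) * (z * P.eval z))
        = fun z => (starRingEnd ℂ) (S.eval z) * Q.eval z
            - a * ((starRingEnd ℂ) (S.eval z) * S.eval z) := by
      funext z
      rw [hrec]
      simp only [Polynomial.eval_add, Polynomial.eval_mul, Polynomial.eval_C,
        Polynomial.eval_X]
      ring
    rw [hpt, integral_sub iSQ (iSS.const_mul a), integral_const_mul, hSQ, hSS]
    ring
  -- ⟨zP, S⟩ = -conj a ⟨P,P⟩
  have hzPS : ∫ z, (starRingEnd ℂ) (z * P.eval z) * S.eval z ∂μ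
      = - (starRingEnd ℂ) a * ((polyNormSq μ P : ℝ) : ℂ) := by
    have h1 : (fun z => (starRingEnd ℂ) (z * P.eval z) * S.eval z)
        = fun z => (starRingEnd ℂ) ((starRingEnd ℂ) (S.eval z) * (z * P.eval z)) := by
      funext z
      simp only [map_mul, Complex.conj_conj]
      ring
    rw [h1, integral_conj, hSzP, map_mul, map_neg]
    congr 1
    rw [Complex.conj_ofReal]
  -- main expansion
  have h3 : a * (starRingEnd ℂ) a = (Complex.normSq a : ℂ) := Complex.mul_conj a
  have h1 : (fun z => (starRingEnd ℂ) (Q.eval z) * Q.eval z)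
      = fun z => (starRingEnd ℂ) (z * P.eval z) * (z * P.eval z)
          + (a * ((starRingEnd ℂ) (z * P.eval z) * S.eval z)
            + ((starRingEnd ℂ) a * ((starRingEnd ℂ) (S.eval z) * (z * P.eval z))
              + (a * (starRingEnd ℂ) a) * ((starRingEnd ℂ) (S.eval z) * S.eval z))) := by
    funext z
    rw [hrec]
    simp only [Polynomial.eval_add, Polynomial.eval_mul, Polynomial.eval_C,
      Polynomial.eval_X, map_add, map_mul]
    ring
  have X1 := izPS.const_mul a
  have X2 := iSzP.const_mul ((starRingEnd ℂ) a)
  have X3 := iSS.const_mul (a * (starRingEnd ℂ) a)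
  have e1 := integral_add izPzP (X1.add (X2.add X3))
  have e2 := integral_add X1 (X2.add X3)
  have e3 := integral_add X2 X3
  simp only [Pi.add_apply] at e1 e2 e3
  rw [← ip_self μ Q, h1, e1, e2, e3,
    integral_const_mul, integral_const_mul, integral_const_mul,
    hzPzP, hzPS, hSzP, hSS]
  linear_combination (-((polyNormSq μ P : ℝ) : ℂ)) * h3

theorem normSq_succ (hμ : IsNontrivialOnCircle μ) {Φ : ℕ → Polynomial ℂ}
    (hΦ : IsMonicOPUC μ Φ) (n : ℕ) :
    polyNormSq μ (Φ (n+1)) =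
      (1 - Complex.normSq ((Φ (n+1)).eval 0)) * polyNormSq μ (Φ n) := by
  have hPd : (Φ n).natDegree = n := (hΦ n).1.2
  have hSd : (revStar n (Φ n)).natDegree ≤ n := natDegree_revStar_le n (Φ n)
  have hrec : Φ (n+1) = X * Φ n + C ((Φ (n+1)).eval 0) * revStar n (Φ n) := szego hμ hΦ n
  have hSQ : ∫ z, (starRingEnd ℂ) ((revStar n (Φ n)).eval z) * (Φ (n+1)).eval z ∂μ = 0 :=
    ip_eq_zero_of_orth hμ ((hΦ (n+1)).2) (lt_of_le_of_lt hSd (Nat.lt_succ_self n))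
  have hSS : ∫ z, (starRingEnd ℂ) ((revStar n (Φ n)).eval z) * (revStar n (Φ n)).eval z ∂μ
      = ((polyNormSq μ (Φ n) : ℝ) : ℂ) := by
    rw [← ip_self μ (Φ n)]
    apply integral_congr_ae
    filter_upwards [ae_norm_one hμ] with z hz
    rw [eval_revStar hz (le_of_eq hPd), map_mul, map_pow, Complex.conj_conj]
    have h1 : (starRingEnd ℂ) z ^ n * z ^ n = 1 := by
      rw [← mul_pow, conj_mul_self hz, one_pow]
    linear_combination ((Φ n).eval z * (starRingEnd ℂ) ((Φ n).eval z)) * h1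
  have hzPzP : ∫ z, (starRingEnd ℂ) (z * (Φ n).eval z) * (z * (Φ n).eval z) ∂μ
      = ((polyNormSq μ (Φ n) : ℝ) : ℂ) := by
    rw [← ip_self μ (Φ n)]
    apply integral_congr_ae
    filter_upwards [ae_norm_one hμ] with z hz
    rw [map_mul]
    have h1 : (starRingEnd ℂ) z * z = 1 := conj_mul_self hz
    linear_combination ((starRingEnd ℂ) ((Φ n).eval z) * (Φ n).eval z) * h1
  have main := norm_step hμ (Φ n) (Φ (n+1)) (revStar n (Φ n)) ((Φ (n+1)).eval 0)
    hrec hSQ hSS hzPzP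
  rw [show ((1 : ℂ) - Complex.normSq ((Φ (n+1)).eval 0))
      = (((1 - Complex.normSq ((Φ (n+1)).eval 0) : ℝ)) : ℂ) by push_cast; ring] at main
  rw [← Complex.ofReal_mul] at main
  exact_mod_cast main

lemma polyNormSq_ne_zero (hμ : IsNontrivialOnCircle μ) {Φ : ℕ → Polynomial ℂ}
    (hΦ : IsMonicOPUC μ Φ) (n : ℕ) : polyNormSq μ (Φ n) ≠ 0 := by
  intro h
  have h0 := eq_zero_of_polyNormSq_eq_zero hμ h
  exact (hΦ n).1.1.ne_zero h0

lemma one_sub_normSq_ne_zero (hμ : IsNontrivialOnCircle μ) {Φ : ℕ → Polynomial ℂ}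
    (hΦ : IsMonicOPUC μ Φ) (n : ℕ) :
    (1 : ℂ) - Complex.normSq ((Φ (n+1)).eval 0) ≠ 0 := by
  have h := normSq_succ hμ hΦ n
  have h1 := polyNormSq_ne_zero hμ hΦ (n+1)
  have h2 : (1 - Complex.normSq ((Φ (n+1)).eval 0) : ℝ) ≠ 0 := by
    intro hc
    rw [hc, zero_mul] at h
    exact h1 h
  intro hc
  apply h2
  exact_mod_cast hc

/-! ### Inverse recursion -/

theorem inv_rec (hμ : IsNontrivialOnCircle μ) {Φ : ℕ → Polynomial ℂ}
    (hΦ : IsMonicOPUC μ Φ) (n : ℕ) :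
    Φ (n+1) - C ((Φ (n+1)).eval 0) * revStar (n+1) (Φ (n+1))
      = C (1 - (Complex.normSq ((Φ (n+1)).eval 0) : ℂ)) * (X * Φ n) := by
  have hPd : (Φ n).natDegree = n := (hΦ n).1.2
  set a := (Φ (n+1)).eval 0 with ha
  have hrec : Φ (n+1) = X * Φ n + C a * revStar n (Φ n) := szego hμ hΦ n
  have hstar : revStar (n+1) (Φ (n+1))
      = revStar n (Φ n) + C ((starRingEnd ℂ) a) * (X * Φ n) := by
    conv_lhs => rw [hrec]
    rw [revStar_add, revStar_X_mul, revStar_C_mul, revStar_revStar (le_of_eq hPd)]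
  conv_lhs => rw [hstar, hrec]
  have hC : C (1 - (Complex.normSq a : ℂ)) = 1 - C a * C ((starRingEnd ℂ) a) := by
    rw [← Complex.mul_conj a, ← map_mul, map_sub, map_one]
  rw [hC]
  ring

end Ger

/-- Geronimus: if `Φ_{N₀}(·; dμ) = Φ_{N₀}(·; dν)` then the monic orthogonal
polynomials, Verblunsky coefficients (for `j < N₀`), and orthonormal polynomials
(for `j ≤ N₀`) of `μ` and `ν` agree. -/
theorem stmt3 (μ ν : Measure ℂ) (hμ : IsNontrivialOnCircle μ) (hν : IsNontrivialOnCircle ν)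
    (Φμ Φν : ℕ → Polynomial ℂ) (hΦμ : IsMonicOPUC μ Φμ) (hΦν : IsMonicOPUC ν Φν)
    (N₀ : ℕ) (hN₀ : 1 ≤ N₀) (heq : Φμ N₀ = Φν N₀) :
    (∀ j < N₀, Φμ j = Φν j) ∧
    (∀ j < N₀, verblunsky Φμ j = verblunsky Φν j) ∧
    (∀ j ≤ N₀, orthonormalize μ (Φμ j) = orthonormalize ν (Φν j)) := by
  have key : ∀ k, k ≤ N₀ → Φμ (N₀ - k) = Φν (N₀ - k) := by
    intro k
    induction k with
    | zero => intro _; simpa using heq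
    | succ k ih =>
      intro hk
      have h1 : Φμ (N₀ - k) = Φν (N₀ - k) := ih (by omega)
      have hm : N₀ - k = (N₀ - (k+1)) + 1 := by omega
      set m := N₀ - (k+1) with hmdef
      rw [hm] at h1
      have hμr := Ger.inv_rec hμ hΦμ m
      have hνr := Ger.inv_rec hν hΦν m
      rw [h1] at hμr
      have hcc : C (1 - (Complex.normSq ((Φν (m+1)).eval 0) : ℂ)) * (X * Φμ m)
          = C (1 - (Complex.normSq ((Φν (m+1)).eval 0) : ℂ)) * (X * Φν m) := by
        rw [← hμr, ← hνr]
      have hc : (1 - (Complex.normSq ((Φν (m+1)).eval 0) : ℂ)) ≠ 0 :=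
        Ger.one_sub_normSq_ne_zero hν hΦν m
      have h2 : X * Φμ m = X * Φν m :=
        mul_left_cancel₀ (Polynomial.C_ne_zero.mpr hc) hcc
      exact mul_left_cancel₀ Polynomial.X_ne_zero h2
  have keyle : ∀ j ≤ N₀, Φμ j = Φν j := by
    intro j hj
    have := key (N₀ - j) (by omega)
    rwa [Nat.sub_sub_self hj] at this
  have normeq : ∀ i ≤ N₀, polyNormSq μ (Φμ i) = polyNormSq ν (Φν i) := by
    intro i
    induction i with
    | zero =>
      intro _
      have h1 : Φμ 0 = 1 := ((hΦμ 0).1.1.natDegree_eq_zero).mp (hΦμ 0).1.2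
      have h2 : Φν 0 = 1 := ((hΦν 0).1.1.natDegree_eq_zero).mp (hΦν 0).1.2
      have hone : ∀ (κ : Measure ℂ), IsProbabilityMeasure κ → polyNormSq κ 1 = 1 := by
        intro κ hκ
        haveI := hκ
        rw [polyNormSq]
        simp
      rw [h1, h2, hone μ hμ.prob, hone ν hν.prob]
    | succ i ih =>
      intro hi
      rw [Ger.normSq_succ hμ hΦμ i, Ger.normSq_succ hν hΦν i, ih (by omega),
        keyle (i+1) hi]
  refine ⟨fun j hj => keyle j (le_of_lt hj), fun j hj => ?_, fun j hj => ?_⟩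
  · rw [verblunsky, verblunsky, keyle (j+1) (by omega)]
  · rw [orthonormalize, orthonormalize, normeq j hj, keyle j hj]

end
end

section
/- (Christoffel–Darboux formula for OPUC.) Let μ be a nontrivial probability measure on the unit circle with orthonormal polynomials φ_n. Then for all z, ζ ∈ ℂ and all n ≥ 0: (1 − z·conj(ζ))·∑_{j=0}^n conj(φ_j(ζ))·φ_j(z) = conj(φ_{n+1}^*(ζ))·φ_{n+1}^*(z) − conj(φ_{n+1}(ζ))·φ_{n+1}(z). -/
open MeasureTheory Polynomial Filter

noncomputable section

namespace CD
open Polynomial MeasureTheory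

variable {μ : Measure ℂ} {Φ : ℕ → Polynomial ℂ}

local notation "conj'" => starRingEnd ℂ

lemma ae_one (hμ : IsNontrivialOnCircle μ) : ∀ᵐ z ∂μ, ‖z‖ = 1 := by
  rw [ae_iff]; exact hμ.onCircle

lemma integ (hμ : IsNontrivialOnCircle μ) {E : Type*} [NormedAddCommGroup E]
    {f : ℂ → E} (hf : Continuous f) : Integrable f μ := by
  haveI := hμ.prob
  obtain ⟨C, hC⟩ := (isCompact_sphere (0:ℂ) 1).exists_bound_of_continuousOn hf.continuousOn
  refine Integrable.mono' (integrable_const C) hf.aestronglyMeasurable ?_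
  filter_upwards [ae_one hμ] with z hz
  exact hC z (by simpa [mem_sphere_iff_norm] using hz)

lemma contCP (P : Polynomial ℂ) : Continuous fun z => conj' (P.eval z) :=
  Complex.continuous_conj.comp P.continuous

/-- The L² inner product of polynomials. -/
def ip (μ : Measure ℂ) (P Q : Polynomial ℂ) : ℂ :=
  ∫ z, conj' (P.eval z) * Q.eval z ∂μ

lemma int_ip (hμ : IsNontrivialOnCircle μ) (P Q : Polynomial ℂ) :
    Integrable (fun z => conj' (P.eval z) * Q.eval z) μ :=
  integ hμ ((contCP P).mul Q.continuous)

lemma ip_add_left (hμ : IsNontrivialOnCircle μ) (P Q R : Polynomial ℂ) :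
    ip μ (P + Q) R = ip μ P R + ip μ Q R := by
  unfold ip
  rw [← integral_add (int_ip hμ P R) (int_ip hμ Q R)]
  simp [add_mul]

lemma ip_sub_left (hμ : IsNontrivialOnCircle μ) (P Q R : Polynomial ℂ) :
    ip μ (P - Q) R = ip μ P R - ip μ Q R := by
  unfold ip
  rw [← integral_sub (int_ip hμ P R) (int_ip hμ Q R)]
  simp [sub_mul]

lemma ip_sub_right (hμ : IsNontrivialOnCircle μ) (P Q R : Polynomial ℂ) :
    ip μ P (Q - R) = ip μ P Q - ip μ P R := by
  unfold ip
  rw [← integral_sub (int_ip hμ P Q) (int_ip hμ P R)]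
  simp [mul_sub]

lemma ip_C_mul_left (hμ : IsNontrivialOnCircle μ) (c : ℂ) (P Q : Polynomial ℂ) :
    ip μ (Polynomial.C c * P) Q = conj' c * ip μ P Q := by
  unfold ip
  rw [← integral_const_mul]
  simp [mul_assoc]

lemma ip_C_mul_right (hμ : IsNontrivialOnCircle μ) (c : ℂ) (P Q : Polynomial ℂ) :
    ip μ P (Polynomial.C c * Q) = c * ip μ P Q := by
  unfold ip
  rw [← integral_const_mul]
  congr 1; ext z; simp; ring

lemma ip_conj (P Q : Polynomial ℂ) : conj' (ip μ P Q) = ip μ Q P := by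
  unfold ip
  rw [← integral_conj]
  congr 1; ext z
  simp [mul_comm]

lemma ip_sum_left (hμ : IsNontrivialOnCircle μ) {ι : Type*} (s : Finset ι)
    (f : ι → Polynomial ℂ) (Q : Polynomial ℂ) :
    ip μ (∑ i ∈ s, f i) Q = ∑ i ∈ s, ip μ (f i) Q := by
  classical
  induction s using Finset.induction_on with
  | empty => simp [ip]
  | insert _ _ h ih => rw [Finset.sum_insert h, ip_add_left hμ, ih, Finset.sum_insert h]

lemma ip_self (hμ : IsNontrivialOnCircle μ) (P : Polynomial ℂ) :
    ip μ P P = ((polyNormSq μ P : ℝ) : ℂ) := by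
  unfold ip polyNormSq
  rw [show (((∫ z, ‖P.eval z‖ ^ 2 ∂μ : ℝ)) : ℂ) = ∫ z, ((‖P.eval z‖ ^ 2 : ℝ) : ℂ) ∂μ from
    (integral_ofReal).symm]
  congr 1; ext z
  rw [Complex.ofReal_pow]
  rw [← Complex.ofReal_pow, Complex.sq_norm, Complex.normSq_eq_conj_mul_self]

lemma polyNormSq_pos (hμ : IsNontrivialOnCircle μ) {P : Polynomial ℂ} (hP : P ≠ 0) :
    0 < polyNormSq μ P := by
  haveI := hμ.prob
  have hint : Integrable (fun z => ‖P.eval z‖ ^ 2) μ := integ hμ (by continuity)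
  rcases lt_or_eq_of_le (integral_nonneg (fun z => by positivity) :
      (0:ℝ) ≤ polyNormSq μ P) with h | h
  · exact h
  exfalso
  have hz : ∀ᵐ z ∂μ, ‖P.eval z‖ ^ 2 = 0 := by
    have := (integral_eq_zero_iff_of_nonneg (fun z => by positivity) hint).1 h.symm
    filter_upwards [this] with z hz using hz
  have hroots : {z : ℂ | P.eval z = 0} ⊆ ↑P.roots.toFinset := by
    intro z hz
    rw [Finset.mem_coe, Multiset.mem_toFinset, mem_roots hP]
    exact hz
  apply hμ.infiniteSupport P.roots.toFinset
  rw [← le_zero_iff]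
  calc μ ((↑P.roots.toFinset : Set ℂ)ᶜ) ≤ μ {z : ℂ | P.eval z = 0}ᶜ := by
        apply measure_mono; intro z hz hmem; exact hz (hroots hmem)
    _ = 0 := by
        have : {z : ℂ | P.eval z = 0}ᶜ = {z : ℂ | ¬ (P.eval z = 0)} := rfl
        rw [this, ← ae_iff]
        filter_upwards [hz] with z h
        simpa using h

lemma ip_self_ne_zero (hμ : IsNontrivialOnCircle μ) {P : Polynomial ℂ} (hP : P ≠ 0) :
    ip μ P P ≠ 0 := by
  rw [ip_self hμ]
  exact_mod_cast (polyNormSq_pos hμ hP).ne'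

lemma revStar_coeff (n k : ℕ) (P : Polynomial ℂ) :
    (revStar n P).coeff k = if k ≤ n then conj' (P.coeff (n - k)) else 0 := by
  unfold revStar
  rw [finset_sum_coeff]
  simp only [coeff_C_mul, coeff_X_pow, mul_ite, mul_one, mul_zero]
  rw [Finset.sum_ite_eq (Finset.range (n+1)) k (fun j => conj' (P.coeff (n - j)))]
  simp [Nat.lt_succ_iff]

lemma revStar_natDegree_le (n : ℕ) (P : Polynomial ℂ) : (revStar n P).natDegree ≤ n := by
  rw [natDegree_le_iff_coeff_eq_zero]
  intro m hm
  rw [revStar_coeff]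
  simp [Nat.not_le.mpr hm]

lemma revStar_add (n : ℕ) (P Q : Polynomial ℂ) :
    revStar n (P + Q) = revStar n P + revStar n Q := by
  unfold revStar
  rw [← Finset.sum_add_distrib]
  apply Finset.sum_congr rfl
  intro j _
  rw [coeff_add, map_add, C_add, add_mul]

lemma revStar_C_mul (n : ℕ) (c : ℂ) (P : Polynomial ℂ) :
    revStar n (Polynomial.C c * P) = Polynomial.C (conj' c) * revStar n P := by
  unfold revStar
  rw [Finset.mul_sum]
  apply Finset.sum_congr rfl
  intro j _
  rw [coeff_C_mul, map_mul, C_mul, mul_assoc]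

lemma revStar_X_mul (n : ℕ) (P : Polynomial ℂ) : revStar (n + 1) (X * P) = revStar n P := by
  unfold revStar
  rw [Finset.sum_range_succ]
  have h0 : (X * P).coeff (n + 1 - (n + 1)) = 0 := by
    simp [Polynomial.mul_coeff_zero]
  rw [h0]
  simp only [map_zero, C_0, zero_mul, add_zero]
  apply Finset.sum_congr rfl
  intro j hj
  rw [Finset.mem_range] at hj
  have h1 : n + 1 - j = (n - j) + 1 := by omega
  rw [h1, coeff_X_mul]

lemma revStar_revStar (n : ℕ) {P : Polynomial ℂ} (hP : P.natDegree ≤ n) :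
    revStar (n + 1) (revStar n P) = X * P := by
  ext k
  rw [revStar_coeff]
  match k with
  | 0 =>
    simp only [Nat.zero_le, if_true, Nat.sub_zero, revStar_coeff]
    rw [if_neg (by omega)]
    simp [Polynomial.mul_coeff_zero]
  | (k+1) =>
    rw [coeff_X_mul]
    by_cases hk : k + 1 ≤ n + 1
    · rw [if_pos hk, revStar_coeff, if_pos (by omega)]
      have : n - (n + 1 - (k+1)) = k := by omega
      rw [this]
      simp
    · rw [if_neg hk]
      symm
      exact coeff_eq_zero_of_natDegree_lt (by omega)

lemma mul_conj_one {z : ℂ} (hz : ‖z‖ = 1) : z * conj' z = 1 := by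
  rw [Complex.mul_conj]
  norm_cast
  rw [Complex.normSq_eq_norm_sq, hz, one_pow]

lemma eval_revStar {n : ℕ} {P : Polynomial ℂ} (hP : P.natDegree ≤ n) {z : ℂ}
    (hz : ‖z‖ = 1) :
    (revStar n P).eval z = z ^ n * conj' (P.eval z) := by
  have h1 : z * conj' z = 1 := mul_conj_one hz
  have hev : P.eval z = ∑ k ∈ Finset.range (n + 1), P.coeff k * z ^ k :=
    eval_eq_sum_range' (lt_of_le_of_lt hP (Nat.lt_succ_self n)) z
  unfold revStar
  rw [eval_finset_sum, hev, map_sum, Finset.mul_sum]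
  rw [← Finset.sum_range_reflect (fun k => z ^ n * conj' (P.coeff k * z ^ k)) (n+1)]
  apply Finset.sum_congr rfl
  intro j hj
  rw [Finset.mem_range, Nat.lt_succ_iff] at hj
  simp only [eval_mul, eval_C, eval_pow, eval_X, map_mul, map_pow]
  have h2 : n + 1 - 1 - j = n - j := by omega
  rw [h2]
  have h3 : z ^ n = z ^ j * z ^ (n - j) := by rw [← pow_add]; congr 1; omega
  rw [h3]
  have h4 : (z * conj' z) ^ (n - j) = 1 := by rw [h1, one_pow]
  linear_combination (-(conj' (P.coeff (n - j)) * z ^ j)) * h4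

lemma ip_X_mul (hμ : IsNontrivialOnCircle μ) (P Q : Polynomial ℂ) :
    ip μ (X * P) (X * Q) = ip μ P Q := by
  unfold ip
  apply integral_congr_ae
  filter_upwards [ae_one hμ] with z hz
  have h1 := mul_conj_one hz
  simp only [eval_mul, eval_X, map_mul]
  linear_combination (conj' (P.eval z) * Q.eval z) * h1

lemma ip_pow_mul (hμ : IsNontrivialOnCircle μ) (j : ℕ) (P : Polynomial ℂ) :
    ip μ (X ^ (j + 1)) (X * P) = ip μ (X ^ j) P := by
  unfold ip
  apply integral_congr_ae
  filter_upwards [ae_one hμ] with z hz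
  have h1 := mul_conj_one hz
  simp only [eval_mul, eval_X, eval_pow, map_mul, map_pow, pow_succ]
  linear_combination (conj' z ^ j * P.eval z) * h1

lemma ip_pow_revStar (hμ : IsNontrivialOnCircle μ) {j n : ℕ} (hj : j ≤ n)
    {P : Polynomial ℂ} (hP : P.natDegree ≤ n) :
    ip μ (X ^ j) (revStar n P) = conj' (ip μ (X ^ (n - j)) P) := by
  unfold ip
  rw [← integral_conj]
  apply integral_congr_ae
  filter_upwards [ae_one hμ] with z hz
  have h1 := mul_conj_one hz
  rw [eval_revStar hP hz]
  simp only [eval_pow, eval_X, map_mul, map_pow, Complex.conj_conj]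
  have h3 : z ^ n = z ^ (n - j) * z ^ j := by rw [← pow_add]; congr 1; omega
  rw [h3]
  have h4 : (z * conj' z) ^ j = 1 := by rw [h1, one_pow]
  linear_combination (z ^ (n - j) * conj' (P.eval z)) * h4

lemma ip_revStar_self (hμ : IsNontrivialOnCircle μ) {n : ℕ} {P : Polynomial ℂ}
    (hP : P.natDegree ≤ n) :
    ip μ (revStar n P) (revStar n P) = ip μ P P := by
  unfold ip
  apply integral_congr_ae
  filter_upwards [ae_one hμ] with z hz
  have h1 := mul_conj_one hz
  rw [eval_revStar hP hz]
  simp only [map_mul, map_pow, Complex.conj_conj]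
  have h4 : (z * conj' z) ^ n = 1 := by rw [h1, one_pow]
  linear_combination (conj' (P.eval z) * P.eval z) * h4

lemma ip_pow_Phi (hΦ : IsMonicOPUC μ Φ) {j n : ℕ} (hj : j < n) :
    ip μ (X ^ j) (Φ n) = 0 := by
  have := (hΦ n).2 j hj
  unfold ip
  simpa [map_pow] using this

lemma ip_lowdeg (hμ : IsNontrivialOnCircle μ) (hΦ : IsMonicOPUC μ Φ) {n : ℕ}
    {R : Polynomial ℂ} (hR : R.natDegree < n) : ip μ R (Φ n) = 0 := by
  conv_lhs => rw [as_sum_range' R n hR]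
  rw [ip_sum_left hμ]
  apply Finset.sum_eq_zero
  intro j hj
  rw [Finset.mem_range] at hj
  rw [← C_mul_X_pow_eq_monomial, ip_C_mul_left hμ, ip_pow_Phi hΦ hj, mul_zero]

lemma phi_ne_zero (hΦ : IsMonicOPUC μ Φ) (n : ℕ) : Φ n ≠ 0 := (hΦ n).1.1.ne_zero

lemma coeff0_starPhi (hΦ : IsMonicOPUC μ Φ) (n : ℕ) : (revStar n (Φ n)).coeff 0 = 1 := by
  rw [revStar_coeff, if_pos (Nat.zero_le n), Nat.sub_zero]
  have h1 : (Φ n).coeff n = 1 := by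
    have := (hΦ n).1.1.coeff_natDegree
    rwa [(hΦ n).1.2] at this
  rw [h1, map_one]

lemma zero_lemma (hμ : IsNontrivialOnCircle μ) (hΦ : IsMonicOPUC μ Φ) {n : ℕ}
    {R : Polynomial ℂ} (hR : R.natDegree ≤ n)
    (h1 : ∀ j, 1 ≤ j → j ≤ n → ip μ (X ^ j) R = 0)
    (h2 : ip μ (revStar n (Φ n)) R = 0) : R = 0 := by
  by_contra hne
  set Q := revStar n (Φ n) with hQ
  set S := R - Polynomial.C (R.coeff 0) * Q with hS
  have hSdeg : S.natDegree ≤ n := by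
    apply le_trans (natDegree_sub_le _ _)
    simp only [max_le_iff]
    exact ⟨hR, le_trans (natDegree_C_mul_le _ _) (revStar_natDegree_le n (Φ n))⟩
  have hS0 : S.coeff 0 = 0 := by
    rw [hS, coeff_sub, coeff_C_mul, coeff0_starPhi hΦ n, mul_one, sub_self]
  have key : ip μ R R = 0 := by
    have hsplit : ip μ R R = ip μ (Polynomial.C (R.coeff 0) * Q + S) R := by
      congr 1
      rw [hS]; ring
    rw [hsplit, ip_add_left hμ, ip_C_mul_left hμ, h2, mul_zero, zero_add]
    have hSsum : S = ∑ j ∈ Finset.range (n + 1), (monomial j) (S.coeff j) :=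
      as_sum_range' S (n + 1) (by omega)
    conv_lhs => rw [hSsum]
    rw [ip_sum_left hμ]
    apply Finset.sum_eq_zero
    intro j hj
    rw [Finset.mem_range, Nat.lt_succ_iff] at hj
    rw [← C_mul_X_pow_eq_monomial, ip_C_mul_left hμ]
    match j with
    | 0 => rw [hS0, map_zero, zero_mul]
    | (j+1) => rw [h1 (j+1) (by omega) hj, mul_zero]
  exact ip_self_ne_zero hμ hne key

lemma szego (hμ : IsNontrivialOnCircle μ) (hΦ : IsMonicOPUC μ Φ) (n : ℕ) :
    Φ (n + 1) = X * Φ n +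
      Polynomial.C ((Φ (n + 1)).coeff 0) * revStar n (Φ n) := by
  set Q := revStar n (Φ n) with hQdef
  have hdegΦ : (Φ n).natDegree = n := (hΦ n).1.2
  have hdegΦ' : (Φ (n+1)).natDegree = n + 1 := (hΦ (n+1)).1.2
  have hQdeg : Q.natDegree ≤ n := revStar_natDegree_le n (Φ n)
  have hNc : ip μ (Φ n) (Φ n) ≠ 0 := ip_self_ne_zero hμ (phi_ne_zero hΦ n)
  set c := -(ip μ Q (X * Φ n)) / ip μ (Φ n) (Φ n) with hc
  set R := Φ (n + 1) - X * Φ n - Polynomial.C c * Q with hRdef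
  have hXdeg : (X * Φ n).natDegree ≤ n + 1 := by
    apply le_trans (natDegree_mul_le)
    simp only [natDegree_X, hdegΦ]
    omega
  have hRdeg : R.natDegree ≤ n := by
    rw [natDegree_le_iff_coeff_eq_zero]
    intro m hm
    rw [hRdef]
    simp only [coeff_sub, coeff_C_mul]
    rcases Nat.lt_or_ge m (n + 2) with hm2 | hm2
    · have hmeq : m = n + 1 := by omega
      subst hmeq
      rw [coeff_X_mul]
      have e1 : (Φ (n+1)).coeff (n+1) = 1 := by
        have := (hΦ (n+1)).1.1.coeff_natDegree
        rwa [hdegΦ'] at this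
      have e2 : (Φ n).coeff n = 1 := by
        have := (hΦ n).1.1.coeff_natDegree
        rwa [hdegΦ] at this
      have e3 : Q.coeff (n+1) = 0 := coeff_eq_zero_of_natDegree_lt (by omega)
      rw [e1, e2, e3, mul_zero]
      ring
    · have e1 : (Φ (n+1)).coeff m = 0 := coeff_eq_zero_of_natDegree_lt (by omega)
      have e2 : (X * Φ n).coeff m = 0 := coeff_eq_zero_of_natDegree_lt (by omega)
      have e3 : Q.coeff m = 0 := coeff_eq_zero_of_natDegree_lt (by omega)
      rw [e1, e2, e3, mul_zero]
      ring
  have hR0 : R = 0 := by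
    apply zero_lemma hμ hΦ hRdeg
    · intro j hj1 hjn
      rw [hRdef, ip_sub_right hμ, ip_sub_right hμ]
      have t1 : ip μ (X ^ j) (Φ (n+1)) = 0 := ip_pow_Phi hΦ (by omega)
      have t2 : ip μ (X ^ j) (X * Φ n) = 0 := by
        obtain ⟨j', rfl⟩ : ∃ j', j = j' + 1 := ⟨j - 1, by omega⟩
        rw [ip_pow_mul hμ]
        exact ip_pow_Phi hΦ (by omega)
      have t3 : ip μ (X ^ j) (Polynomial.C c * Q) = 0 := by
        rw [ip_C_mul_right hμ, hQdef, ip_pow_revStar hμ hjn (le_of_eq hdegΦ),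
          ip_pow_Phi hΦ (by omega), map_zero, mul_zero]
      rw [t1, t2, t3]; ring
    · rw [hRdef, ip_sub_right hμ, ip_sub_right hμ]
      have t1 : ip μ Q (Φ (n+1)) = 0 := ip_lowdeg hμ hΦ (by omega)
      have t3 : ip μ Q (Polynomial.C c * Q) = -(ip μ Q (X * Φ n)) := by
        rw [ip_C_mul_right hμ, hQdef, ip_revStar_self hμ (le_of_eq hdegΦ), hc,
          div_mul_cancel₀ _ hNc]
      rw [t1, t3]; ring
  have hid : Φ (n + 1) = X * Φ n + Polynomial.C c * Q := by
    have : Φ (n + 1) - X * Φ n - Polynomial.C c * Q = 0 := hR0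
    linear_combination this
  have hcoeff : (Φ (n + 1)).coeff 0 = c := by
    rw [hid]
    simp only [coeff_add, coeff_C_mul, Polynomial.mul_coeff_zero, coeff_X_zero,
      coeff0_starPhi hΦ n, mul_one, zero_mul, zero_add, coeff_C_zero]
    rw [hQdef, coeff0_starPhi hΦ n, mul_one]
  rw [hcoeff]
  exact hid

lemma norm_rel (hμ : IsNontrivialOnCircle μ) (hΦ : IsMonicOPUC μ Φ) (n : ℕ) :
    ip μ (Φ (n + 1)) (Φ (n + 1)) =
      (1 - conj' ((Φ (n + 1)).coeff 0) * (Φ (n + 1)).coeff 0) * ip μ (Φ n) (Φ n) := by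
  set β := (Φ (n + 1)).coeff 0 with hβ
  set Q := revStar n (Φ n) with hQdef
  have hdegΦ : (Φ n).natDegree = n := (hΦ n).1.2
  have hQdeg : Q.natDegree ≤ n := revStar_natDegree_le n (Φ n)
  have hX : X * Φ n = Φ (n + 1) - Polynomial.C β * Q := by
    have := szego hμ hΦ n
    rw [← hβ, ← hQdef] at this
    linear_combination -this
  have e0 : ip μ (X * Φ n) (X * Φ n) = ip μ (Φ n) (Φ n) := ip_X_mul hμ (Φ n) (Φ n)
  have eQA : ip μ Q (Φ (n + 1)) = 0 := ip_lowdeg hμ hΦ (by omega)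
  have eAQ : ip μ (Φ (n + 1)) Q = 0 := by
    rw [← ip_conj, eQA, map_zero]
  have eQQ : ip μ Q Q = ip μ (Φ n) (Φ n) := ip_revStar_self hμ (le_of_eq hdegΦ)
  have expand : ip μ (Φ (n+1) - Polynomial.C β * Q) (Φ (n+1) - Polynomial.C β * Q)
      = ip μ (Φ (n+1)) (Φ (n+1)) - β * ip μ (Φ (n+1)) Q - conj' β * ip μ Q (Φ (n+1))
        + conj' β * β * ip μ Q Q := by
    simp only [ip_sub_left hμ, ip_sub_right hμ, ip_C_mul_left hμ, ip_C_mul_right hμ]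
    ring
  rw [hX, expand, eQA, eAQ, eQQ] at e0
  linear_combination e0

end CD

namespace CD
open Polynomial MeasureTheory

variable {μ : Measure ℂ} {Φ : ℕ → Polynomial ℂ}

local notation "conj'" => starRingEnd ℂ

/-- The normalizing constant. -/
def kr (μ : Measure ℂ) (Φ : ℕ → Polynomial ℂ) (m : ℕ) : ℝ :=
  (Real.sqrt (polyNormSq μ (Φ m)))⁻¹

lemma orth_eq (m : ℕ) :
    orthonormalize μ (Φ m) = Polynomial.C ((kr μ Φ m : ℝ) : ℂ) * Φ m := by
  unfold orthonormalize kr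
  rw [Complex.ofReal_inv]

lemma conj_kc (m : ℕ) : conj' ((kr μ Φ m : ℝ) : ℂ) = ((kr μ Φ m : ℝ) : ℂ) :=
  Complex.conj_ofReal _

lemma kr_sq (hμ : IsNontrivialOnCircle μ) (hΦ : IsMonicOPUC μ Φ) (m : ℕ) :
    (kr μ Φ m) ^ 2 * polyNormSq μ (Φ m) = 1 := by
  have h := polyNormSq_pos hμ (phi_ne_zero hΦ m)
  rw [kr, inv_pow, Real.sq_sqrt h.le]
  field_simp

lemma kr_rel (hμ : IsNontrivialOnCircle μ) (hΦ : IsMonicOPUC μ Φ) (n : ℕ) :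
    ((kr μ Φ (n+1) : ℝ) : ℂ) ^ 2 * (1 - conj' ((Φ (n + 1)).coeff 0) * (Φ (n + 1)).coeff 0)
      = ((kr μ Φ n : ℝ) : ℂ) ^ 2 := by
  set β := (Φ (n + 1)).coeff 0 with hβ
  have e3 : ((polyNormSq μ (Φ (n+1)) : ℝ) : ℂ)
      = (1 - conj' β * β) * ((polyNormSq μ (Φ n) : ℝ) : ℂ) := by
    rw [← ip_self hμ, ← ip_self hμ]
    exact norm_rel hμ hΦ n
  have e1 : ((kr μ Φ (n+1) : ℝ) : ℂ) ^ 2 * ((polyNormSq μ (Φ (n+1)) : ℝ) : ℂ) = 1 := by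
    exact_mod_cast congrArg (fun r : ℝ => (r : ℂ)) (kr_sq hμ hΦ (n+1))
  have e2 : ((kr μ Φ n : ℝ) : ℂ) ^ 2 * ((polyNormSq μ (Φ n) : ℝ) : ℂ) = 1 := by
    exact_mod_cast congrArg (fun r : ℝ => (r : ℂ)) (kr_sq hμ hΦ n)
  linear_combination (((kr μ Φ n : ℝ) : ℂ) ^ 2) * e1
    - (((kr μ Φ (n+1) : ℝ) : ℂ) ^ 2 * (1 - conj' β * β)) * e2
    - (((kr μ Φ n : ℝ) : ℂ) ^ 2 * ((kr μ Φ (n+1) : ℝ) : ℂ) ^ 2) * e3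

lemma revStar_phi (m : ℕ) :
    revStar m (orthonormalize μ (Φ m))
      = Polynomial.C ((kr μ Φ m : ℝ) : ℂ) * revStar m (Φ m) := by
  rw [orth_eq m, revStar_C_mul, conj_kc]

lemma revStar_succ (hμ : IsNontrivialOnCircle μ) (hΦ : IsMonicOPUC μ Φ) (m : ℕ) :
    revStar (m + 1) (Φ (m + 1))
      = revStar m (Φ m) + Polynomial.C (conj' ((Φ (m + 1)).coeff 0)) * (X * Φ m) := by
  conv_lhs => rw [szego hμ hΦ m]
  rw [revStar_add, revStar_X_mul, revStar_C_mul, revStar_revStar m (le_of_eq (hΦ m).1.2)]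

lemma step (hμ : IsNontrivialOnCircle μ) (hΦ : IsMonicOPUC μ Φ) (m : ℕ) (z ζ : ℂ) :
    conj' ((revStar (m + 1) (orthonormalize μ (Φ (m + 1)))).eval ζ) *
        (revStar (m + 1) (orthonormalize μ (Φ (m + 1)))).eval z
      - conj' ((orthonormalize μ (Φ (m + 1))).eval ζ) * (orthonormalize μ (Φ (m + 1))).eval z
    = conj' ((revStar m (orthonormalize μ (Φ m))).eval ζ) *
          (revStar m (orthonormalize μ (Φ m))).eval z
      - conj' ((orthonormalize μ (Φ m)).eval ζ) * (orthonormalize μ (Φ m)).eval z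
      + (1 - z * conj' ζ) *
          (conj' ((orthonormalize μ (Φ m)).eval ζ) * (orthonormalize μ (Φ m)).eval z) := by
  set β := (Φ (m + 1)).coeff 0 with hβ
  have hrel := kr_rel hμ hΦ m
  have hrec := szego hμ hΦ m
  have hrecstar := revStar_succ hμ hΦ m
  rw [← hβ] at hrel hrec hrecstar
  rw [revStar_phi m, revStar_phi (m+1), hrecstar, orth_eq m, orth_eq (m+1)]
  conv_lhs => rw [hrec]
  simp only [eval_mul, eval_add, eval_C, eval_X, map_mul, map_add, Complex.conj_conj,
    Complex.conj_ofReal]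
  set A := (Φ m).eval z
  set B := (revStar m (Φ m)).eval z
  set A' := conj' ((Φ m).eval ζ)
  set B' := conj' ((revStar m (Φ m)).eval ζ)
  linear_combination (B' * B - (conj' ζ) * z * (A' * A)) * hrel

lemma revStar_zero (P : Polynomial ℂ) : revStar 0 P = Polynomial.C (conj' (P.coeff 0)) := by
  unfold revStar
  simp

lemma base (hΦ : IsMonicOPUC μ Φ) (z ζ : ℂ) :
    conj' ((revStar 0 (orthonormalize μ (Φ 0))).eval ζ) *
        (revStar 0 (orthonormalize μ (Φ 0))).eval z
      - conj' ((orthonormalize μ (Φ 0)).eval ζ) * (orthonormalize μ (Φ 0)).eval z = 0 := by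
  have h0 : Φ 0 = 1 := (hΦ 0).1.1.natDegree_eq_zero.mp (hΦ 0).1.2
  rw [orth_eq 0, h0, mul_one, revStar_zero]
  simp only [coeff_C_zero, eval_C, Complex.conj_ofReal, Complex.conj_conj]
  ring

end CD

/-- Christoffel–Darboux formula for OPUC. -/
theorem stmt4 (μ : Measure ℂ) (hμ : IsNontrivialOnCircle μ)
    (Φ : ℕ → Polynomial ℂ) (hΦ : IsMonicOPUC μ Φ) :
    ∀ (z ζ : ℂ) (n : ℕ),
      (1 - z * (starRingEnd ℂ) ζ) *
          ∑ j ∈ Finset.range (n + 1),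
            (starRingEnd ℂ) ((orthonormalize μ (Φ j)).eval ζ) * (orthonormalize μ (Φ j)).eval z
        = (starRingEnd ℂ) ((revStar (n + 1) (orthonormalize μ (Φ (n + 1)))).eval ζ) *
              (revStar (n + 1) (orthonormalize μ (Φ (n + 1)))).eval z
          - (starRingEnd ℂ) ((orthonormalize μ (Φ (n + 1))).eval ζ) *
              (orthonormalize μ (Φ (n + 1))).eval z := by
  intro z ζ n
  induction n with
  | zero =>
    rw [Finset.sum_range_one]
    have hs := CD.step hμ hΦ 0 z ζ
    have hb := CD.base hΦ z ζ
    linear_combination -hs - hb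
  | succ n ih =>
    rw [Finset.sum_range_succ]
    have hs := CD.step hμ hΦ (n + 1) z ζ
    linear_combination ih - hs

end
end

section
/- Let μ be a nontrivial probability measure on the unit circle with orthonormal polynomials φ_n. Then for every z₀ ∈ 𝔻 and every n ≥ 0, |φ_n^*(z₀)| ≥ (1 − |z₀|²)^{1/2}. -/
open MeasureTheory Polynomial Filter

noncomputable section

namespace OPUC

local notation "conj'" => starRingEnd ℂ

variable {μ : Measure ℂ}

/-! ### Polynomial lemmas about `revStar` -/

lemma revStar_coeff (n : ℕ) (P : Polynomial ℂ) (k : ℕ) :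
    (revStar n P).coeff k = if k ≤ n then conj' (P.coeff (n - k)) else 0 := by
  unfold revStar
  rw [Polynomial.finset_sum_coeff]
  simp_rw [Polynomial.coeff_C_mul, Polynomial.coeff_X_pow, mul_ite, mul_one, mul_zero]
  rw [Finset.sum_ite_eq (Finset.range (n+1)) k]
  simp [Nat.lt_succ_iff]

lemma natDegree_revStar_le (n : ℕ) (P : Polynomial ℂ) : (revStar n P).natDegree ≤ n := by
  rw [Polynomial.natDegree_le_iff_coeff_eq_zero]
  intro m hm
  rw [revStar_coeff]
  simp [Nat.not_le.mpr hm]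

lemma revStar_C_mul (n : ℕ) (c : ℂ) (P : Polynomial ℂ) :
    revStar n (Polynomial.C c * P) = Polynomial.C (conj' c) * revStar n P := by
  ext k
  rw [revStar_coeff, Polynomial.coeff_C_mul, Polynomial.coeff_C_mul, revStar_coeff]
  split <;> simp [map_mul]

lemma revStar_sub (n : ℕ) (P Q : Polynomial ℂ) :
    revStar n (P - Q) = revStar n P - revStar n Q := by
  ext k
  rw [Polynomial.coeff_sub, revStar_coeff, revStar_coeff, revStar_coeff,
    Polynomial.coeff_sub]
  split <;> simp [map_sub]

lemma revStar_X_mul (n : ℕ) (P : Polynomial ℂ) (hdeg : P.natDegree ≤ n) :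
    revStar (n + 1) (Polynomial.X * P) = revStar n P := by
  ext k
  rw [revStar_coeff, revStar_coeff]
  rcases Nat.lt_or_ge k (n + 1) with hk | hk
  · have hk' : k ≤ n := Nat.lt_succ_iff.mp hk
    have h1 : k ≤ n + 1 := by omega
    rw [if_pos h1, if_pos hk']
    have h2 : n + 1 - k = (n - k) + 1 := by omega
    rw [h2, Polynomial.coeff_X_mul]
  · rcases Nat.eq_or_lt_of_le hk with hk2 | hk2
    · rw [← hk2]
      rw [if_pos (le_refl _), if_neg (by omega)]
      simp [Polynomial.coeff_X_mul_zero]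
    · rw [if_neg (by omega), if_neg (by omega)]

lemma revStar_shift (n : ℕ) (Q : Polynomial ℂ) (hdeg : Q.natDegree ≤ n) :
    revStar (n + 1) Q = Polynomial.X * revStar n Q := by
  ext k
  rw [revStar_coeff]
  rcases k with _ | k'
  · rw [Polynomial.coeff_X_mul_zero, if_pos (by omega)]
    have h2 : Q.coeff (n + 1) = 0 :=
      Polynomial.coeff_eq_zero_of_natDegree_lt (by omega)
    simpa using h2
  · rw [Polynomial.coeff_X_mul, revStar_coeff]
    rcases Nat.lt_or_ge k' (n + 1) with hk | hk
    · rw [if_pos (by omega), if_pos (by omega)]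
      congr 2
      omega
    · rw [if_neg (by omega), if_neg (by omega)]

lemma revStar_revStar (n : ℕ) (P : Polynomial ℂ) (hdeg : P.natDegree ≤ n) :
    revStar n (revStar n P) = P := by
  ext k
  rw [revStar_coeff, revStar_coeff]
  rcases Nat.lt_or_ge n k with hk | hk
  · rw [if_neg (by omega)]
    exact (Polynomial.coeff_eq_zero_of_natDegree_lt (lt_of_le_of_lt hdeg hk)).symm
  · rw [if_pos (by omega), if_pos (by omega)]
    have : n - (n - k) = k := by omega
    rw [this, Complex.conj_conj]

lemma eval_revStar_circle (n : ℕ) (P : Polynomial ℂ) (hdeg : P.natDegree ≤ n)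
    {z : ℂ} (hz : ‖z‖ = 1) : (revStar n P).eval z = z ^ n * conj' (P.eval z) := by
  have hzc : conj' z * z = 1 := by
    have := Complex.mul_conj z
    rw [mul_comm] at this
    rw [this, Complex.normSq_eq_norm_sq, hz]; norm_num
  have hP : P.eval z = ∑ k ∈ Finset.range (n + 1), P.coeff k * z ^ k :=
    P.eval_eq_sum_range' (Nat.lt_succ_of_le hdeg) z
  unfold revStar
  rw [Polynomial.eval_finset_sum, hP, map_sum, Finset.mul_sum]
  rw [← Finset.sum_range_reflect (fun i => z ^ n * conj' (P.coeff i * z ^ i)) (n+1)]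
  apply Finset.sum_congr rfl
  intro j hj
  rw [Finset.mem_range, Nat.lt_succ_iff] at hj
  simp only [Nat.add_sub_cancel]
  simp only [Polynomial.eval_mul, Polynomial.eval_C, Polynomial.eval_pow,
    Polynomial.eval_X, map_mul, map_pow]
  have hzn : z ^ n = z ^ j * z ^ (n - j) := by rw [← pow_add, Nat.add_sub_cancel' hj]
  have h1 : z ^ (n - j) * conj' z ^ (n - j) = 1 := by
    rw [← mul_pow, mul_comm, hzc, one_pow]
  calc conj' (P.coeff (n - j)) * z ^ j
      = conj' (P.coeff (n - j)) * z ^ j * (z ^ (n - j) * conj' z ^ (n - j)) := by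
        rw [h1, mul_one]
    _ = (z ^ j * z ^ (n - j)) * (conj' (P.coeff (n - j)) * conj' z ^ (n - j)) := by ring
    _ = z ^ n * (conj' (P.coeff (n - j)) * conj' z ^ (n - j)) := by rw [← hzn]

/-! ### The inner product -/

def ip (μ : Measure ℂ) (P Q : Polynomial ℂ) : ℂ :=
  ∫ z, conj' (P.eval z) * Q.eval z ∂μ

lemma ae_circle (hμ : IsNontrivialOnCircle μ) : ∀ᵐ z ∂μ, ‖z‖ = 1 := by
  rw [ae_iff]; exact hμ.onCircle

lemma conj_mul_self {z : ℂ} (h : ‖z‖ = 1) : conj' z * z = 1 := by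
  have := Complex.mul_conj z
  rw [mul_comm] at this
  rw [this, Complex.normSq_eq_norm_sq, h]
  norm_num

lemma integrable_of_continuous (hμ : IsNontrivialOnCircle μ) (f : ℂ → ℂ)
    (hf : Continuous f) : Integrable f μ := by
  have : IsProbabilityMeasure μ := hμ.prob
  obtain ⟨M, hM⟩ := (isCompact_sphere (0:ℂ) 1).exists_bound_of_continuousOn
    hf.continuousOn
  refine Integrable.mono' (integrable_const M) hf.aestronglyMeasurable ?_
  filter_upwards [ae_circle hμ] with z hz
  exact hM z (by simpa [Complex.dist_eq] using hz)

lemma integrable_ip (hμ : IsNontrivialOnCircle μ) (P Q : Polynomial ℂ) :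
    Integrable (fun z => conj' (P.eval z) * Q.eval z) μ :=
  integrable_of_continuous hμ _
    ((Complex.continuous_conj.comp P.continuous_aeval).mul Q.continuous_aeval)

lemma ip_mono_eq (j : ℕ) (Q : Polynomial ℂ) :
    ip μ (Polynomial.X ^ j) Q = ∫ z, conj' z ^ j * Q.eval z ∂μ := by
  unfold ip; simp

lemma ip_left_expand (hμ : IsNontrivialOnCircle μ) (P Q : Polynomial ℂ) :
    ip μ P Q = ∑ j ∈ Finset.range (P.natDegree + 1),
        conj' (P.coeff j) * ip μ (Polynomial.X ^ j) Q := by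
  have key : ∀ z : ℂ, conj' (P.eval z) * Q.eval z
      = ∑ j ∈ Finset.range (P.natDegree + 1),
          conj' (P.coeff j) * (conj' z ^ j * Q.eval z) := by
    intro z
    rw [P.eval_eq_sum_range, map_sum, Finset.sum_mul]
    congr 1; ext j
    rw [map_mul, map_pow]; ring
  unfold ip
  simp_rw [key]
  rw [integral_finset_sum]
  · congr 1; ext j
    rw [integral_const_mul]
    congr 1
    rw [← ip_mono_eq]
    unfold ip
    rfl
  · intro j _
    have := (integrable_ip hμ (Polynomial.X ^ j) Q).const_mul (conj' (P.coeff j))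
    simpa using this

lemma ip_sub_right (hμ : IsNontrivialOnCircle μ) (P Q R : Polynomial ℂ) :
    ip μ P (Q - R) = ip μ P Q - ip μ P R := by
  unfold ip
  simp_rw [Polynomial.eval_sub, mul_sub]
  exact integral_sub (integrable_ip hμ P Q) (integrable_ip hμ P R)

lemma ip_add_right (hμ : IsNontrivialOnCircle μ) (P Q R : Polynomial ℂ) :
    ip μ P (Q + R) = ip μ P Q + ip μ P R := by
  unfold ip
  simp_rw [Polynomial.eval_add, mul_add]
  exact integral_add (integrable_ip hμ P Q) (integrable_ip hμ P R)

lemma ip_C_mul_right (c : ℂ) (P Q : Polynomial ℂ) :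
    ip μ P (Polynomial.C c * Q) = c * ip μ P Q := by
  unfold ip
  simp_rw [Polynomial.eval_mul, Polynomial.eval_C]
  rw [← integral_const_mul]
  congr 1; ext z; ring

lemma ip_self_eq (P : Polynomial ℂ) : ip μ P P = (polyNormSq μ P : ℂ) := by
  unfold ip polyNormSq
  calc ∫ z, conj' (P.eval z) * P.eval z ∂μ
      = ∫ z, ((‖P.eval z‖ ^ 2 : ℝ) : ℂ) ∂μ := by
        apply integral_congr_ae
        filter_upwards with z
        rw [mul_comm, Complex.mul_conj, Complex.normSq_eq_norm_sq]
    _ = ((∫ z, ‖P.eval z‖ ^ 2 ∂μ : ℝ) : ℂ) := integral_ofReal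

lemma polyNormSq_nonneg (P : Polynomial ℂ) : 0 ≤ polyNormSq μ P :=
  integral_nonneg fun z => by positivity

lemma eq_zero_of_polyNormSq (hμ : IsNontrivialOnCircle μ) (P : Polynomial ℂ)
    (h : polyNormSq μ P = 0) : P = 0 := by
  by_contra hP
  have hint : Integrable (fun z => ‖P.eval z‖ ^ 2) μ := by
    have := (integrable_ip hμ P P).norm
    refine this.congr ?_
    filter_upwards with z
    simp [norm_mul, sq]
  have hae : ∀ᵐ z ∂μ, P.eval z = 0 := by
    have h0 := (integral_eq_zero_iff_of_nonneg (fun z => by positivity) hint).mp h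
    filter_upwards [h0] with z hz
    have : ‖P.eval z‖ ^ 2 = 0 := hz
    simpa using this
  have hsub : (↑P.roots.toFinset : Set ℂ)ᶜ ⊆ {z : ℂ | ¬ P.eval z = 0} := by
    intro z hz
    simp only [Set.mem_compl_iff, Multiset.mem_toFinset, Finset.mem_coe] at hz
    intro h0
    exact hz ((Polynomial.mem_roots hP).mpr h0)
  have : μ ((↑P.roots.toFinset : Set ℂ)ᶜ) = 0 :=
    measure_mono_null hsub (by rw [← ae_iff] at *; exact hae)
  exact hμ.infiniteSupport _ this

lemma polyNormSq_pos (hμ : IsNontrivialOnCircle μ) {P : Polynomial ℂ} (hP : P ≠ 0) :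
    0 < polyNormSq μ P :=
  lt_of_le_of_ne (polyNormSq_nonneg P)
    (fun h => hP (eq_zero_of_polyNormSq hμ P h.symm))

lemma ip_shift (hμ : IsNontrivialOnCircle μ) (j : ℕ) (Q : Polynomial ℂ) :
    ip μ (Polynomial.X ^ (j+1)) (Polynomial.X * Q) = ip μ (Polynomial.X ^ j) Q := by
  rw [ip_mono_eq, ip_mono_eq]
  refine integral_congr_ae ?_
  filter_upwards [ae_circle hμ] with z hz
  have hc := conj_mul_self hz
  simp only [Polynomial.eval_mul, Polynomial.eval_X]
  calc conj' z ^ (j+1) * (z * Q.eval z)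
      = conj' z ^ j * Q.eval z * (conj' z * z) := by ring
    _ = conj' z ^ j * Q.eval z := by rw [hc, mul_one]

lemma ip_mono_star (hμ : IsNontrivialOnCircle μ) {n j : ℕ} (hj : j ≤ n)
    (P : Polynomial ℂ) (hdeg : P.natDegree ≤ n) :
    ip μ (Polynomial.X ^ j) (revStar n P)
      = conj' (ip μ (Polynomial.X ^ (n - j)) P) := by
  rw [ip_mono_eq, ip_mono_eq, ← integral_conj]
  refine integral_congr_ae ?_
  filter_upwards [ae_circle hμ] with z hz
  have hc := conj_mul_self hz
  rw [eval_revStar_circle n P hdeg hz, map_mul, map_pow, Complex.conj_conj]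
  have hzn : z ^ n = z ^ j * z ^ (n - j) := by rw [← pow_add, Nat.add_sub_cancel' hj]
  rw [hzn]
  calc conj' z ^ j * (z ^ j * z ^ (n - j) * conj' (P.eval z))
      = (conj' z * z) ^ j * (z ^ (n - j) * conj' (P.eval z)) := by
        rw [mul_pow]; ring
    _ = z ^ (n - j) * conj' (P.eval z) := by rw [hc, one_pow, one_mul]

lemma ip_mono_star_succ (hμ : IsNontrivialOnCircle μ) (n : ℕ)
    (P : Polynomial ℂ) (hdeg : P.natDegree ≤ n) :
    ip μ (Polynomial.X ^ (n+1)) (revStar n P)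
      = conj' (ip μ (Polynomial.X ^ 0) (Polynomial.X * P)) := by
  rw [ip_mono_eq, ip_mono_eq, ← integral_conj]
  refine integral_congr_ae ?_
  filter_upwards [ae_circle hμ] with z hz
  have hc := conj_mul_self hz
  rw [eval_revStar_circle n P hdeg hz]
  simp only [pow_zero, map_mul, map_pow, Complex.conj_conj, one_mul,
    Polynomial.eval_mul, Polynomial.eval_X]
  calc conj' z ^ (n+1) * (z ^ n * conj' (P.eval z))
      = (conj' z * z) ^ n * (conj' z * conj' (P.eval z)) := by
        rw [mul_pow, pow_succ]; ring
    _ = conj' z * conj' (P.eval z) := by rw [hc, one_pow, one_mul]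

section Szego

variable {Φ : ℕ → Polynomial ℂ}

lemma hmon (hΦ : IsMonicOPUC μ Φ) (n : ℕ) : (Φ n).Monic := (hΦ n).1.1
lemma hdeg (hΦ : IsMonicOPUC μ Φ) (n : ℕ) : (Φ n).natDegree = n := (hΦ n).1.2

lemma ip_X_pow_Phi (hΦ : IsMonicOPUC μ Φ) {j n : ℕ} (hjn : j < n) :
    ip μ (Polynomial.X ^ j) (Φ n) = 0 := by
  rw [ip_mono_eq]
  exact (hΦ n).2 j hjn

lemma ip_lowdeg (hμ : IsNontrivialOnCircle μ) (hΦ : IsMonicOPUC μ Φ)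
    {P : Polynomial ℂ} {n : ℕ} (hP : P.natDegree < n) : ip μ P (Φ n) = 0 := by
  rw [ip_left_expand hμ]
  apply Finset.sum_eq_zero
  intro j hj
  rw [Finset.mem_range, Nat.lt_succ_iff] at hj
  rw [ip_X_pow_Phi hΦ (lt_of_le_of_lt hj hP), mul_zero]

lemma ip_star_ortho (hμ : IsNontrivialOnCircle μ) (hΦ : IsMonicOPUC μ Φ)
    {j n : ℕ} (hj1 : 1 ≤ j) (hjn : j ≤ n) :
    ip μ (Polynomial.X ^ j) (revStar n (Φ n)) = 0 := by
  rw [ip_mono_star hμ hjn (Φ n) (le_of_eq (hdeg hΦ n))]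
  rw [ip_X_pow_Phi hΦ (by omega : n - j < n), map_zero]

/-- The Szegő recursion. -/
theorem szego (hμ : IsNontrivialOnCircle μ) (hΦ : IsMonicOPUC μ Φ) (n : ℕ) :
    Φ (n + 1) = Polynomial.X * Φ n
      - Polynomial.C (conj' (verblunsky Φ n)) * revStar n (Φ n) := by
  set Φs := revStar n (Φ n) with hΦs
  set R := Φ (n + 1) - Polynomial.X * Φ n with hR
  have hdegXΦ : (Polynomial.X * Φ n).natDegree = n + 1 := by
    rw [Polynomial.natDegree_X_mul (hmon hΦ n).ne_zero, hdeg hΦ n]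
  have hRdeg : R.natDegree ≤ n := by
    rw [Polynomial.natDegree_le_iff_coeff_eq_zero]
    intro m hm
    rw [hR, Polynomial.coeff_sub]
    rcases Nat.eq_or_lt_of_le (Nat.succ_le_of_lt hm) with h | h
    · have e1 : (Φ (n+1)).coeff m = 1 := by
        have h1 := (hmon hΦ (n+1)).coeff_natDegree
        rw [hdeg hΦ (n+1)] at h1
        rw [← h]; exact h1
      have e2 : (Polynomial.X * Φ n).coeff m = 1 := by
        have hm1 : (Polynomial.X * Φ n).Monic := (Polynomial.monic_X).mul (hmon hΦ n)
        have h1 := hm1.coeff_natDegree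
        rw [hdegXΦ] at h1
        rw [← h]; exact h1
      rw [e1, e2, sub_self]
    · have e1 : (Φ (n+1)).coeff m = 0 :=
        Polynomial.coeff_eq_zero_of_natDegree_lt (by rw [hdeg hΦ (n+1)]; omega)
      have e2 : (Polynomial.X * Φ n).coeff m = 0 :=
        Polynomial.coeff_eq_zero_of_natDegree_lt (by rw [hdegXΦ]; omega)
      rw [e1, e2, sub_self]
  have hΦs0 : Φs.coeff 0 = 1 := by
    have h1 := (hmon hΦ n).coeff_natDegree
    rw [hdeg hΦ n] at h1
    rw [hΦs, revStar_coeff, if_pos (Nat.zero_le n), Nat.sub_zero, h1, map_one]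
  set S := R - Polynomial.C (R.coeff 0) * Φs with hS
  have hS0 : S.coeff 0 = 0 := by
    rw [hS, Polynomial.coeff_sub, Polynomial.coeff_C_mul, hΦs0, mul_one, sub_self]
  obtain ⟨T, hT⟩ := (Polynomial.X_dvd_iff).mpr hS0
  have hSdeg : S.natDegree ≤ n := by
    rw [hS]
    refine le_trans (Polynomial.natDegree_sub_le _ _) ?_
    rw [max_le_iff]
    exact ⟨hRdeg, le_trans (Polynomial.natDegree_C_mul_le _ _) (natDegree_revStar_le n _)⟩
  -- orthogonality of S to X^j for 1 ≤ j ≤ n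
  have hSorth : ∀ j, 1 ≤ j → j ≤ n → ip μ (Polynomial.X ^ j) S = 0 := by
    intro j hj1 hjn
    rw [hS, ip_sub_right hμ, ip_C_mul_right, hR, ip_sub_right hμ]
    rw [ip_X_pow_Phi hΦ (by omega : j < n + 1)]
    obtain ⟨j', rfl⟩ : ∃ j', j = j' + 1 := ⟨j - 1, by omega⟩
    rw [ip_shift hμ, ip_X_pow_Phi hΦ (by omega : j' < n)]
    rw [ip_star_ortho hμ hΦ hj1 hjn]
    ring
  -- T is zero
  have hTzero : T = 0 := by
    by_contra hTne
    have hTdeg : T.natDegree < n := by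
      have : S.natDegree = T.natDegree + 1 := by
        rw [hT, Polynomial.natDegree_X_mul hTne]
      omega
    have hTorth : ∀ j, j ≤ T.natDegree → ip μ (Polynomial.X ^ j) T = 0 := by
      intro j hj
      have := hSorth (j + 1) (by omega) (by omega)
      rw [hT, ip_shift hμ] at this
      exact this
    have : ip μ T T = 0 := by
      rw [ip_left_expand hμ]
      apply Finset.sum_eq_zero
      intro j hj
      rw [Finset.mem_range, Nat.lt_succ_iff] at hj
      rw [hTorth j hj, mul_zero]
    rw [ip_self_eq] at this
    exact hTne (eq_zero_of_polyNormSq hμ T (by exact_mod_cast this))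
  have hSzero : S = 0 := by rw [hT, hTzero, mul_zero]
  have hReq : R = Polynomial.C (R.coeff 0) * Φs := by
    have := sub_eq_zero.mp hSzero
    exact this
  have hR0 : R.coeff 0 = - conj' (verblunsky Φ n) := by
    rw [hR, Polynomial.coeff_sub, Polynomial.coeff_X_mul_zero, sub_zero,
      Polynomial.coeff_zero_eq_eval_zero]
    unfold verblunsky
    rw [map_neg, Complex.conj_conj]
    ring
  have : Φ (n + 1) - Polynomial.X * Φ n
      = Polynomial.C (- conj' (verblunsky Φ n)) * Φs := by
    rw [← hR0, ← hReq, hR]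
  rw [sub_eq_iff_eq_add] at this
  rw [this]
  rw [map_neg]
  ring

end Szego

section Main

variable {Φ : ℕ → Polynomial ℂ}

lemma conj_ofReal' (x : ℝ) : conj' ((x : ℝ) : ℂ) = ((x : ℝ) : ℂ) := Complex.conj_ofReal x

lemma ip_top (hμ : IsNontrivialOnCircle μ) (hΦ : IsMonicOPUC μ Φ) (m : ℕ) :
    ip μ (Polynomial.X ^ m) (Φ m) = ((polyNormSq μ (Φ m) : ℝ) : ℂ) := by
  have h1 := ip_left_expand hμ (Φ m) (Φ m)
  rw [hdeg hΦ m, Finset.sum_range_succ] at h1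
  have h2 : ∀ j ∈ Finset.range m,
      conj' ((Φ m).coeff j) * ip μ (Polynomial.X ^ j) (Φ m) = 0 := by
    intro j hj
    rw [Finset.mem_range] at hj
    rw [ip_X_pow_Phi hΦ hj, mul_zero]
  rw [Finset.sum_eq_zero h2, zero_add] at h1
  have h3 : (Φ m).coeff m = 1 := by
    have := (hmon hΦ m).coeff_natDegree
    rwa [hdeg hΦ m] at this
  rw [h3, map_one, one_mul] at h1
  rw [← h1, ip_self_eq]

lemma mul_conj_norm (α : ℂ) : conj' α * α = ((‖α‖ ^ 2 : ℝ) : ℂ) := by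
  rw [mul_comm, Complex.mul_conj, Complex.normSq_eq_norm_sq]

lemma verblunsky_norm (hμ : IsNontrivialOnCircle μ) (hΦ : IsMonicOPUC μ Φ) (n : ℕ) :
    polyNormSq μ (Φ (n + 1))
      = (1 - ‖verblunsky Φ n‖ ^ 2) * polyNormSq μ (Φ n) := by
  set α := verblunsky Φ n with hα
  set Φs := revStar n (Φ n) with hΦs
  set w := polyNormSq μ (Φ n) with hw
  have hdegn : (Φ n).natDegree ≤ n := le_of_eq (hdeg hΦ n)
  have hXΦ : Polynomial.X * Φ n = Φ (n+1) + Polynomial.C (conj' α) * Φs := by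
    rw [szego hμ hΦ n]; ring
  have h1 : ip μ (Polynomial.X ^ 0) Φs = ((w : ℝ) : ℂ) := by
    rw [hΦs, ip_mono_star hμ (Nat.zero_le n) (Φ n) hdegn, Nat.sub_zero,
      ip_top hμ hΦ n, conj_ofReal']
  have h2 : ip μ (Polynomial.X ^ 0) (Polynomial.X * Φ n) = conj' α * ((w : ℝ) : ℂ) := by
    rw [hXΦ, ip_add_right hμ, ip_C_mul_right,
      ip_X_pow_Phi hΦ (Nat.succ_pos n), h1, zero_add]
  have h3 : ip μ (Polynomial.X ^ (n+1)) Φs = α * ((w : ℝ) : ℂ) := by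
    rw [hΦs, ip_mono_star_succ hμ n (Φ n) hdegn, h2, map_mul,
      Complex.conj_conj, conj_ofReal']
  have h4 : ip μ (Polynomial.X ^ (n+1)) (Φ (n+1))
      = ((w : ℝ) : ℂ) - conj' α * (α * ((w : ℝ) : ℂ)) := by
    conv_lhs => rw [szego hμ hΦ n]
    rw [ip_sub_right hμ, ip_C_mul_right, ← hΦs, h3, ip_shift hμ, ip_top hμ hΦ n, ← hw]
  rw [ip_top hμ hΦ (n+1)] at h4
  apply Complex.ofReal_injective
  rw [h4]
  have h5 : conj' α * α = ((‖α‖ ^ 2 : ℝ) : ℂ) := mul_conj_norm α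
  push_cast
  calc (w : ℂ) - conj' α * (α * w) = (w : ℂ) - (conj' α * α) * w := by ring
    _ = (w : ℂ) - (‖α‖ ^ 2 : ℝ) * w := by rw [h5]
    _ = (1 - (‖α‖:ℂ) ^ 2) * w := by push_cast; ring

lemma starrec (hμ : IsNontrivialOnCircle μ) (hΦ : IsMonicOPUC μ Φ) (n : ℕ) :
    revStar (n + 1) (Φ (n + 1)) = revStar n (Φ n)
      - Polynomial.C (verblunsky Φ n) * (Polynomial.X * Φ n) := by
  have hdegn : (Φ n).natDegree ≤ n := le_of_eq (hdeg hΦ n)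
  conv_lhs => rw [szego hμ hΦ n]
  rw [revStar_sub, revStar_X_mul n (Φ n) hdegn, revStar_C_mul, Complex.conj_conj]
  congr 1
  rw [revStar_shift n (revStar n (Φ n)) (natDegree_revStar_le n _),
    revStar_revStar n (Φ n) hdegn]

lemma normAlg (a b z α : ℂ) :
    ‖b - α * (z * a)‖ ^ 2 - ‖z * a - conj' α * b‖ ^ 2
      = (1 - ‖α‖ ^ 2) * (‖b‖ ^ 2 - ‖z‖ ^ 2 * ‖a‖ ^ 2) := by
  have h : ∀ w : ℂ, ‖w‖ ^ 2 = Complex.normSq w := fun w => by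
    rw [Complex.sq_norm]
  rw [h, h, h, h, h, h]
  simp only [Complex.normSq_apply, Complex.sub_re, Complex.sub_im, Complex.mul_re,
    Complex.mul_im, Complex.conj_re, Complex.conj_im]
  ring

lemma Phi_zero (hΦ : IsMonicOPUC μ Φ) : Φ 0 = 1 :=
  (hmon hΦ 0).natDegree_eq_zero.mp (hdeg hΦ 0)

lemma revStar_one : revStar 0 (1 : Polynomial ℂ) = 1 := by
  unfold revStar
  simp

lemma polyNormSq_one (hμ : IsNontrivialOnCircle μ) : polyNormSq μ 1 = 1 := by
  have : IsProbabilityMeasure μ := hμ.prob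
  unfold polyNormSq
  simp

/-- The key induction. -/
lemma key_ineq (hμ : IsNontrivialOnCircle μ) (hΦ : IsMonicOPUC μ Φ)
    (z₀ : ℂ) (hz₀ : ‖z₀‖ < 1) (n : ℕ) :
    (1 - ‖z₀‖ ^ 2) * polyNormSq μ (Φ n)
      ≤ ‖(revStar n (Φ n)).eval z₀‖ ^ 2 - ‖z₀‖ ^ 2 * ‖(Φ n).eval z₀‖ ^ 2 := by
  induction n with
  | zero =>
    rw [Phi_zero hΦ, revStar_one, polyNormSq_one hμ]
    simp only [Polynomial.eval_one, norm_one, one_pow, mul_one]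
    nlinarith [norm_nonneg z₀]
  | succ n ih =>
    set α := verblunsky Φ n with hα
    set a := (Φ n).eval z₀ with ha
    set b := (revStar n (Φ n)).eval z₀ with hb
    have heva : (Φ (n+1)).eval z₀ = z₀ * a - conj' α * b := by
      rw [szego hμ hΦ n]
      simp only [Polynomial.eval_sub, Polynomial.eval_mul, Polynomial.eval_C,
        Polynomial.eval_X, ha, hb, hα]
    have hevb : (revStar (n+1) (Φ (n+1))).eval z₀ = b - α * (z₀ * a) := by
      rw [starrec hμ hΦ n]
      simp only [Polynomial.eval_sub, Polynomial.eval_mul, Polynomial.eval_C,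
        Polynomial.eval_X, ha, hb, hα]
    have halg := normAlg a b z₀ α
    have hwrel := verblunsky_norm hμ hΦ n
    have hwpos : 0 < polyNormSq μ (Φ n) := polyNormSq_pos hμ (hmon hΦ n).ne_zero
    have hwpos' : 0 < polyNormSq μ (Φ (n+1)) :=
      polyNormSq_pos hμ (hmon hΦ (n+1)).ne_zero
    have hαlt : 0 < 1 - ‖α‖ ^ 2 := by
      rw [hwrel] at hwpos'
      rcases mul_pos_iff.mp hwpos' with ⟨h, _⟩ | ⟨_, h⟩
      · exact h
      · linarith
    have hz2 : ‖z₀‖ ^ 2 < 1 := by nlinarith [norm_nonneg z₀]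
    rw [heva, hevb, hwrel]
    have hn1 : ‖z₀‖ ^ 2 * ‖z₀ * a - conj' α * b‖ ^ 2 ≤ ‖z₀ * a - conj' α * b‖ ^ 2 := by
      nlinarith [sq_nonneg (‖z₀ * a - conj' α * b‖), norm_nonneg (z₀ * a - conj' α * b)]
    nlinarith [hαlt, hwpos, ih, sq_nonneg ‖a‖, mul_le_mul_of_nonneg_left
      ih (le_of_lt hαlt)]

end Main


theorem stmt5_aux (hμ : IsNontrivialOnCircle μ) (hΦ : IsMonicOPUC μ Φ) :
    ∀ z₀ : ℂ, ‖z₀‖ < 1 → ∀ n : ℕ,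
      Real.sqrt (1 - ‖z₀‖ ^ 2) ≤ ‖(revStar n (orthonormalize μ (Φ n))).eval z₀‖ := by
  intro z₀ hz₀ n
  set w := polyNormSq μ (Φ n) with hw
  have hwpos : 0 < w := polyNormSq_pos hμ (hmon hΦ n).ne_zero
  have hkey := key_ineq hμ hΦ z₀ hz₀ n
  set b := (revStar n (Φ n)).eval z₀ with hb
  have hr0 : (0:ℝ) ≤ 1 - ‖z₀‖ ^ 2 := by nlinarith [norm_nonneg z₀]
  have hb2 : (1 - ‖z₀‖ ^ 2) * w ≤ ‖b‖ ^ 2 := by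
    have h0 : 0 ≤ ‖z₀‖ ^ 2 * ‖(Φ n).eval z₀‖ ^ 2 := by positivity
    linarith
  have h6 : Real.sqrt (1 - ‖z₀‖ ^ 2) * Real.sqrt w ≤ ‖b‖ := by
    have h7 := Real.sqrt_le_sqrt hb2
    rwa [Real.sqrt_mul hr0, Real.sqrt_sq (norm_nonneg b)] at h7
  have horth : orthonormalize μ (Φ n)
      = Polynomial.C (((Real.sqrt w : ℝ) : ℂ))⁻¹ * Φ n := rfl
  rw [horth, revStar_C_mul, Polynomial.eval_mul, Polynomial.eval_C, norm_mul]
  have hc : ‖conj' ((((Real.sqrt w : ℝ)) : ℂ))⁻¹‖ = (Real.sqrt w)⁻¹ := by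
    rw [map_inv₀, Complex.conj_ofReal, norm_inv, Complex.norm_real,
      Real.norm_eq_abs, abs_of_nonneg (Real.sqrt_nonneg w)]
  rw [hc]
  have hsw : 0 < Real.sqrt w := Real.sqrt_pos.mpr hwpos
  rw [le_inv_mul_iff₀ hsw]
  calc Real.sqrt w * Real.sqrt (1 - ‖z₀‖ ^ 2)
      = Real.sqrt (1 - ‖z₀‖ ^ 2) * Real.sqrt w := mul_comm _ _
    _ ≤ ‖b‖ := h6


end OPUC

/-- for `z₀ ∈ 𝔻` and all `n`, `|φ_n^*(z₀)| ≥ (1 − |z₀|²)^{1/2}`. -/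
theorem stmt5 (μ : Measure ℂ) (hμ : IsNontrivialOnCircle μ)
    (Φ : ℕ → Polynomial ℂ) (hΦ : IsMonicOPUC μ Φ) :
    ∀ z₀ : ℂ, ‖z₀‖ < 1 → ∀ n : ℕ,
      Real.sqrt (1 - ‖z₀‖ ^ 2) ≤ ‖(revStar n (orthonormalize μ (Φ n))).eval z₀‖ :=
  OPUC.stmt5_aux hμ hΦ

end
end

section
/- (Geronimus' theorem.) Let μ be a nontrivial probability measure on the unit circle, let F(z) = ∫ (e^{iθ} + z)/(e^{iθ} − z) dμ(θ) be its Carathéodory function, let f be its Schur function defined by F(z) = (1 + z·f(z))/(1 − z·f(z)) on 𝔻, and let γ_n(f) be the Schur parameters of f obtained from the Schur algorithm. Then γ_n(f) = α_n(dμ) for all n ≥ 0. -/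
open MeasureTheory Polynomial Filter

noncomputable section

def pB (p : Polynomial ℂ) : ℝ := ∑ i ∈ Finset.range (p.natDegree + 1), ‖p.coeff i‖

lemma eval_bound (p : Polynomial ℂ) {w : ℂ} (hw : ‖w‖ = 1) : ‖p.eval w‖ ≤ pB p := by
  rw [Polynomial.eval_eq_sum_range]
  refine le_trans (norm_sum_le _ _) ?_
  apply Finset.sum_le_sum
  intro i _
  rw [norm_mul, norm_pow, hw, one_pow, mul_one]

variable {μ : Measure ℂ}

lemma hae (hμ : IsNontrivialOnCircle μ) : ∀ᵐ w ∂μ, ‖w‖ = 1 := by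
  rw [MeasureTheory.ae_iff]
  exact hμ.onCircle

lemma circ_mul_conj {w : ℂ} (hw : ‖w‖ = 1) : w * (starRingEnd ℂ) w = 1 := by
  rw [Complex.mul_conj, Complex.normSq_eq_norm_sq, hw]; norm_num

lemma circ_conj_mul {w : ℂ} (hw : ‖w‖ = 1) : (starRingEnd ℂ) w * w = 1 := by
  rw [mul_comm]; exact circ_mul_conj hw

lemma circ_sub_ne {w z : ℂ} (hw : ‖w‖ = 1) (hz : ‖z‖ < 1) : w - z ≠ 0 := by
  intro h
  rw [sub_eq_zero] at h
  rw [← h, hw] at hz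
  exact lt_irrefl 1 hz

lemma integ_of_bound (hμ : IsNontrivialOnCircle μ) {g : ℂ → ℂ}
    (hm : AEStronglyMeasurable g μ) {C : ℝ} (h : ∀ w : ℂ, ‖w‖ = 1 → ‖g w‖ ≤ C) :
    Integrable g μ := by
  have := hμ.prob
  exact (integrable_const C).mono' hm ((hae hμ).mono fun w hw => h w hw)

lemma integ_of_bound_real (hμ : IsNontrivialOnCircle μ) {g : ℂ → ℝ}
    (hm : AEStronglyMeasurable g μ) {C : ℝ} (h : ∀ w : ℂ, ‖w‖ = 1 → ‖g w‖ ≤ C) :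
    Integrable g μ := by
  have := hμ.prob
  exact (integrable_const C).mono' hm ((hae hμ).mono fun w hw => h w hw)

lemma meas_kernel (z : ℂ) : Measurable fun w : ℂ => (w + z) / (w - z) :=
  (measurable_id.add_const z).div (measurable_id.sub_const z)

-- integrability of (kernel-type factor) * polynomial
lemma int_kmul (hμ : IsNontrivialOnCircle μ) {k : ℂ → ℂ} (hk : AEStronglyMeasurable k μ)
    {C : ℝ} (hkb : ∀ w : ℂ, ‖w‖ = 1 → ‖k w‖ ≤ C) (p : Polynomial ℂ) :
    Integrable (fun w => k w * p.eval w) μ := by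
  refine integ_of_bound hμ (hk.mul ?_) (C := C * pB p) fun w hw => ?_
  · exact (Polynomial.continuous p).aestronglyMeasurable
  · rw [norm_mul]
    have h1 := hkb w hw
    have h2 := eval_bound p hw
    have : (0:ℝ) ≤ ‖k w‖ := norm_nonneg _
    nlinarith [norm_nonneg (p.eval w), norm_nonneg (k w)]

lemma int_conjpow_poly (hμ : IsNontrivialOnCircle μ) (j : ℕ) (p : Polynomial ℂ) :
    Integrable (fun w => (starRingEnd ℂ) w ^ j * p.eval w) μ := by
  refine int_kmul hμ ?_ (C := 1) (fun w hw => ?_) p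
  · exact ((Complex.continuous_conj.pow j)).aestronglyMeasurable
  · rw [norm_pow, RCLike.norm_conj, hw, one_pow]

lemma int_kernel_poly (hμ : IsNontrivialOnCircle μ) {z : ℂ} (hz : ‖z‖ < 1) (p : Polynomial ℂ) :
    Integrable (fun w => (w + z) / (w - z) * p.eval w) μ := by
  refine int_kmul hμ (meas_kernel z).aestronglyMeasurable (C := 2 / (1 - ‖z‖)) (fun w hw => ?_) p
  rw [norm_div]
  have h1 : ‖w + z‖ ≤ 2 := by
    calc ‖w + z‖ ≤ ‖w‖ + ‖z‖ := norm_add_le _ _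
    _ ≤ 2 := by rw [hw]; linarith
  have h2 : 1 - ‖z‖ ≤ ‖w - z‖ := by
    have := norm_sub_norm_le w z
    rw [hw] at this; linarith
  have h3 : 0 < 1 - ‖z‖ := by linarith
  have h4 : (0:ℝ) < ‖w - z‖ := lt_of_lt_of_le h3 h2
  rw [div_le_div_iff₀ h4 h3]
  nlinarith

lemma int_rem_poly (hμ : IsNontrivialOnCircle μ) {z : ℂ} (hz : ‖z‖ < 1) (j : ℕ) (p : Polynomial ℂ) :
    Integrable (fun w => (starRingEnd ℂ) w ^ j * p.eval w / (w - z)) μ := by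
  have : (fun w => (starRingEnd ℂ) w ^ j * p.eval w / (w - z))
      = fun w => ((starRingEnd ℂ) w ^ j / (w - z)) * p.eval w := by
    funext w; ring
  rw [this]
  refine int_kmul hμ ?_ (C := 1 / (1 - ‖z‖)) (fun w hw => ?_) p
  · exact (((Complex.continuous_conj.measurable.pow_const j)).div ((measurable_id.sub_const z))).aestronglyMeasurable
  · rw [norm_div, norm_pow, RCLike.norm_conj, hw, one_pow]
    have h2 : 1 - ‖z‖ ≤ ‖w - z‖ := by
      have := norm_sub_norm_le w z
      rw [hw] at this; linarith
    have h3 : 0 < 1 - ‖z‖ := by linarith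
    have h4 : (0:ℝ) < ‖w - z‖ := lt_of_lt_of_le h3 h2
    rw [div_le_div_iff₀ h4 h3]
    nlinarith


lemma circ_pow {w : ℂ} (hw : ‖w‖ = 1) {i n : ℕ} (hi : i ≤ n) :
    (starRingEnd ℂ) w ^ i * w ^ n = w ^ (n - i) := by
  have h1 : w ^ n = w ^ (n - i) * w ^ i := by rw [← pow_add]; congr 1; omega
  rw [h1, mul_comm (w ^ (n-i)) (w ^ i), ← mul_assoc, ← mul_pow, circ_conj_mul hw, one_pow, one_mul]

lemma conj_eval (p : Polynomial ℂ) (n : ℕ) (hn : p.natDegree ≤ n) (w : ℂ) :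
    (starRingEnd ℂ) (p.eval w)
      = ∑ i ∈ Finset.range (n+1), (starRingEnd ℂ) (p.coeff i) * (starRingEnd ℂ) w ^ i := by
  rw [Polynomial.eval_eq_sum_range' (lt_of_le_of_lt hn (Nat.lt_succ_self n)), map_sum]
  refine Finset.sum_congr rfl fun i _ => ?_
  rw [map_mul, map_pow]

lemma conj_mul_self (a : ℂ) : (starRingEnd ℂ) a * a = ((‖a‖ ^ 2 : ℝ) : ℂ) := by
  rw [mul_comm, Complex.mul_conj, Complex.normSq_eq_norm_sq]

lemma npos (hμ : IsNontrivialOnCircle μ) {p : Polynomial ℂ} (hp : p ≠ 0) :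
    0 < polyNormSq μ p := by
  have hint : Integrable (fun w => ‖p.eval w‖ ^ 2) μ := by
    refine integ_of_bound_real hμ (((Polynomial.continuous p).norm.pow 2).aestronglyMeasurable)
      (C := pB p ^ 2) fun w hw => ?_
    have h1 := eval_bound p hw
    have h2 := norm_nonneg (p.eval w)
    rw [Real.norm_eq_abs, abs_of_nonneg (by positivity)]
    nlinarith
  have hnn : 0 ≤ polyNormSq μ p := integral_nonneg fun w => by positivity
  rcases hnn.lt_or_eq with h | h
  · exact h
  exfalso
  have hz := (integral_eq_zero_iff_of_nonneg (fun w => by positivity) hint).mp h.symm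
  have hane : μ {w : ℂ | ¬ p.eval w = 0} = 0 := by
    have h2 : ∀ᵐ w ∂μ, p.eval w = 0 := by
      filter_upwards [hz] with w hw
      simpa using hw
    rw [MeasureTheory.ae_iff] at h2
    exact h2
  apply hμ.infiniteSupport p.roots.toFinset
  refine measure_mono_null ?_ hane
  intro w hw
  simp only [Set.mem_compl_iff, Finset.mem_coe, Multiset.mem_toFinset] at hw
  intro hev
  exact hw ((Polynomial.mem_roots hp).mpr hev)

section withOPUC
variable {Φ : ℕ → Polynomial ℂ}

lemma phi0 (hΦ : IsMonicOPUC μ Φ) : Φ 0 = 1 :=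
  ((hΦ 0).1.1.natDegree_eq_zero).mp (hΦ 0).1.2

lemma N_zero (hμ : IsNontrivialOnCircle μ) (hΦ : IsMonicOPUC μ Φ) : polyNormSq μ (Φ 0) = 1 := by
  have := hμ.prob
  simp [phi0 hΦ, polyNormSq]

lemma momn (hμ : IsNontrivialOnCircle μ) (hΦ : IsMonicOPUC μ Φ) (n : ℕ) :
    ∫ w, (starRingEnd ℂ) w ^ n * (Φ n).eval w ∂μ = ((polyNormSq μ (Φ n) : ℝ) : ℂ) := by
  set p := Φ n with hp
  have hdeg : p.natDegree = n := (hΦ n).1.2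
  have hmon : p.Monic := (hΦ n).1.1
  have key : ∀ w : ℂ, (starRingEnd ℂ) w ^ n * p.eval w
      = (starRingEnd ℂ) (p.eval w) * p.eval w
        - ∑ i ∈ Finset.range n, (starRingEnd ℂ) (p.coeff i) * ((starRingEnd ℂ) w ^ i * p.eval w) := by
    intro w
    have h1 := conj_eval p n hdeg.le w
    rw [Finset.sum_range_succ] at h1
    have hcn : p.coeff n = 1 := by
      have h := hmon.coeff_natDegree
      rwa [hdeg] at h
    rw [hcn, map_one, one_mul] at h1
    rw [h1, add_mul, Finset.sum_mul]
    have h4 : ∀ i ∈ Finset.range n,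
        (starRingEnd ℂ) (p.coeff i) * (starRingEnd ℂ) w ^ i * p.eval w
        = (starRingEnd ℂ) (p.coeff i) * ((starRingEnd ℂ) w ^ i * p.eval w) := by
      intro i _; ring
    rw [Finset.sum_congr rfl h4]
    ring
  have hint1 : Integrable (fun w => (starRingEnd ℂ) (p.eval w) * p.eval w) μ := by
    have h : (fun w => (starRingEnd ℂ) (p.eval w) * p.eval w)
        = fun w => ((starRingEnd ℂ) ∘ fun x => p.eval x) w * p.eval w := rfl
    refine int_kmul hμ (Complex.continuous_conj.comp (Polynomial.continuous p)).aestronglyMeasurable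
      (C := pB p) (fun w hw => ?_) p
    show ‖(starRingEnd ℂ) (p.eval w)‖ ≤ pB p
    simpa [RCLike.norm_conj] using eval_bound p hw
  have hint2 : Integrable (fun w => ∑ i ∈ Finset.range n,
      (starRingEnd ℂ) (p.coeff i) * ((starRingEnd ℂ) w ^ i * p.eval w)) μ := by
    refine MeasureTheory.integrable_finset_sum _ fun i hi => ?_
    exact (int_conjpow_poly hμ i p).const_mul _
  rw [MeasureTheory.integral_congr_ae (Filter.Eventually.of_forall key),
    MeasureTheory.integral_sub hint1 hint2, MeasureTheory.integral_finset_sum _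
      (fun i hi => (int_conjpow_poly hμ i p).const_mul _)]
  have h2 : ∀ i ∈ Finset.range n,
      ∫ w, (starRingEnd ℂ) (p.coeff i) * ((starRingEnd ℂ) w ^ i * p.eval w) ∂μ = 0 := by
    intro i hi
    rw [MeasureTheory.integral_const_mul, (hΦ n).2 i (Finset.mem_range.mp hi), mul_zero]
  rw [Finset.sum_congr rfl h2, Finset.sum_const, smul_zero, sub_zero]
  have h3 : ∀ w : ℂ, (starRingEnd ℂ) (p.eval w) * p.eval w = ((‖p.eval w‖ ^ 2 : ℝ) : ℂ) :=
    fun w => conj_mul_self _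
  rw [MeasureTheory.integral_congr_ae (Filter.Eventually.of_forall h3)]
  exact integral_ofReal
end withOPUC

lemma revStar_coeff (n : ℕ) (p : Polynomial ℂ) (k : ℕ) :
    (revStar n p).coeff k = if k ≤ n then (starRingEnd ℂ) (p.coeff (n - k)) else 0 := by
  rw [revStar, Polynomial.finset_sum_coeff]
  have : ∀ j ∈ Finset.range (n+1),
      (Polynomial.C ((starRingEnd ℂ) (p.coeff (n - j))) * Polynomial.X ^ j).coeff k
        = if k = j then (starRingEnd ℂ) (p.coeff (n - j)) else 0 := by
    intro j _
    rw [Polynomial.coeff_C_mul, Polynomial.coeff_X_pow]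
    by_cases h : k = j
    · rw [if_pos h, if_pos h, mul_one]
    · rw [if_neg h, if_neg h, mul_zero]
  rw [Finset.sum_congr rfl this]
  have h2 : ∀ j ∈ Finset.range (n+1),
      (if k = j then (starRingEnd ℂ) (p.coeff (n - j)) else 0)
      = (if j = k then (starRingEnd ℂ) (p.coeff (n - j)) else 0) := by
    intro j _
    by_cases h : j = k
    · rw [if_pos h, if_pos h.symm]
    · rw [if_neg h, if_neg (fun hh => h hh.symm)]
  rw [Finset.sum_congr rfl h2, Finset.sum_ite_eq' (Finset.range (n+1)) k
    (fun j => (starRingEnd ℂ) (p.coeff (n - j)))]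
  simp [Finset.mem_range, Nat.lt_succ_iff]

lemma revStar_natDegree_le (n : ℕ) (p : Polynomial ℂ) : (revStar n p).natDegree ≤ n := by
  rw [Polynomial.natDegree_le_iff_coeff_eq_zero]
  intro m hm
  rw [revStar_coeff]
  simp [Nat.not_le.mpr hm]

lemma revStar_eval_circ {n : ℕ} {p : Polynomial ℂ} (hn : p.natDegree ≤ n) {w : ℂ}
    (hw : ‖w‖ = 1) : (revStar n p).eval w = w ^ n * (starRingEnd ℂ) (p.eval w) := by
  rw [revStar, Polynomial.eval_finset_sum]
  rw [conj_eval p n hn w, Finset.mul_sum]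
  have h1 : ∀ i ∈ Finset.range (n+1),
      w ^ n * ((starRingEnd ℂ) (p.coeff i) * (starRingEnd ℂ) w ^ i)
      = (starRingEnd ℂ) (p.coeff i) * w ^ (n - i) := by
    intro i hi
    rw [← circ_pow hw (Nat.lt_succ_iff.mp (Finset.mem_range.mp hi)) (w := w)]
    ring
  rw [Finset.sum_congr rfl h1]
  have h2 : ∀ j ∈ Finset.range (n+1),
      (Polynomial.C ((starRingEnd ℂ) (p.coeff (n - j))) * Polynomial.X ^ j).eval w
      = (fun j => (starRingEnd ℂ) (p.coeff j) * w ^ (n - j)) (n - j) := by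
    intro j hj
    have hj' : j ≤ n := Nat.lt_succ_iff.mp (Finset.mem_range.mp hj)
    simp only [Polynomial.eval_mul, Polynomial.eval_C, Polynomial.eval_pow, Polynomial.eval_X]
    congr 2
    omega
  rw [Finset.sum_congr rfl h2]
  have h3 := Finset.sum_range_reflect
    (fun j => (starRingEnd ℂ) (p.coeff j) * w ^ (n - j)) (n+1)
  simp only [Nat.add_sub_cancel] at h3
  exact h3


lemma circ_shift {w : ℂ} (hw : ‖w‖ = 1) (j : ℕ) (g : ℂ) :
    (starRingEnd ℂ) w ^ (j+1) * (w * g) = (starRingEnd ℂ) w ^ j * g := by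
  have h : (starRingEnd ℂ) w ^ (j+1) * (w * g)
      = (starRingEnd ℂ) w ^ j * (((starRingEnd ℂ) w * w) * g) := by ring
  rw [h, circ_conj_mul hw, one_mul]

lemma normSq_eq_sum (hμ : IsNontrivialOnCircle μ) (Q : Polynomial ℂ) :
    ((polyNormSq μ Q : ℝ) : ℂ)
      = ∑ i ∈ Finset.range (Q.natDegree + 1),
          (starRingEnd ℂ) (Q.coeff i) * ∫ w, (starRingEnd ℂ) w ^ i * Q.eval w ∂μ := by
  have key : ∀ w : ℂ, ((‖Q.eval w‖ ^ 2 : ℝ) : ℂ)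
      = ∑ i ∈ Finset.range (Q.natDegree + 1),
          (starRingEnd ℂ) (Q.coeff i) * ((starRingEnd ℂ) w ^ i * Q.eval w) := by
    intro w
    rw [← conj_mul_self, conj_eval Q Q.natDegree le_rfl w, Finset.sum_mul]
    refine Finset.sum_congr rfl fun i _ => ?_
    ring
  have h0 : ((polyNormSq μ Q : ℝ) : ℂ) = ∫ w, ((‖Q.eval w‖ ^ 2 : ℝ) : ℂ) ∂μ :=
    (integral_ofReal).symm
  rw [h0, MeasureTheory.integral_congr_ae (Filter.Eventually.of_forall key),
    MeasureTheory.integral_finset_sum _ (fun i _ => (int_conjpow_poly hμ i Q).const_mul _)]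
  exact Finset.sum_congr rfl fun i _ => MeasureTheory.integral_const_mul _ _

section szego
variable {Φ : ℕ → Polynomial ℂ}

lemma momstar (hμ : IsNontrivialOnCircle μ) (hΦ : IsMonicOPUC μ Φ) (n j : ℕ) (hj : j ≤ n) :
    ∫ w, (starRingEnd ℂ) w ^ j * (revStar n (Φ n)).eval w ∂μ
      = if j = 0 then ((polyNormSq μ (Φ n) : ℝ) : ℂ) else 0 := by
  have hdeg : (Φ n).natDegree = n := (hΦ n).1.2
  have hrw : ∀ᵐ w ∂μ, (starRingEnd ℂ) w ^ j * (revStar n (Φ n)).eval w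
      = (starRingEnd ℂ) ((starRingEnd ℂ) w ^ (n - j) * (Φ n).eval w) := by
    filter_upwards [hae hμ] with w hw
    rw [revStar_eval_circ hdeg.le hw, ← mul_assoc, circ_pow hw hj, map_mul, map_pow,
      Complex.conj_conj]
  rw [MeasureTheory.integral_congr_ae hrw, integral_conj]
  by_cases h : j = 0
  · subst h
    rw [if_pos rfl]
    simp only [Nat.sub_zero]
    rw [momn hμ hΦ n]
    exact Complex.conj_ofReal _
  · rw [if_neg h, (hΦ n).2 (n - j) (by omega), map_zero]

lemma szego (hμ : IsNontrivialOnCircle μ) (hΦ : IsMonicOPUC μ Φ) (n : ℕ) :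
    Φ (n+1) = Polynomial.X * Φ n
      + Polynomial.C ((Φ (n+1)).eval 0) * revStar n (Φ n) := by
  have hdp : (Φ n).natDegree = n := (hΦ n).1.2
  have hdq : (Φ (n+1)).natDegree = n+1 := (hΦ (n+1)).1.2
  have hmp : (Φ n).Monic := (hΦ n).1.1
  have hmq : (Φ (n+1)).Monic := (hΦ (n+1)).1.1
  set P := Φ (n+1) - Polynomial.X * Φ n with hP
  have hdegP : P.natDegree ≤ n := by
    rw [Polynomial.natDegree_le_iff_coeff_eq_zero]
    intro m hm
    rw [hP, Polynomial.coeff_sub]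
    rcases m with _ | k
    · omega
    · rw [Polynomial.coeff_X_mul]
      by_cases hk : k = n
      · have h1 : (Φ (n+1)).coeff (n+1) = 1 := by
          have h := hmq.coeff_natDegree; rwa [hdq] at h
        have h2 : (Φ n).coeff n = 1 := by
          have h := hmp.coeff_natDegree; rwa [hdp] at h
        rw [hk, h1, h2, sub_self]
      · have h1 : (Φ (n+1)).coeff (k+1) = 0 :=
          Polynomial.coeff_eq_zero_of_natDegree_lt (by omega)
        have h2 : (Φ n).coeff k = 0 :=
          Polynomial.coeff_eq_zero_of_natDegree_lt (by omega)
        rw [h1, h2, sub_self]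
  have horthP : ∀ i : ℕ, i + 1 ≤ n → ∫ w, (starRingEnd ℂ) w ^ (i+1) * P.eval w ∂μ = 0 := by
    intro i hi
    have hsplit : ∀ᵐ w ∂μ, (starRingEnd ℂ) w ^ (i+1) * P.eval w
        = (starRingEnd ℂ) w ^ (i+1) * (Φ (n+1)).eval w
          - (starRingEnd ℂ) w ^ i * (Φ n).eval w := by
      filter_upwards [hae hμ] with w hw
      rw [hP, Polynomial.eval_sub, Polynomial.eval_mul, Polynomial.eval_X, mul_sub,
        circ_shift hw]
    rw [MeasureTheory.integral_congr_ae hsplit,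
      MeasureTheory.integral_sub (int_conjpow_poly hμ (i+1) _) (int_conjpow_poly hμ i _),
      (hΦ (n+1)).2 (i+1) (by omega), (hΦ n).2 i (by omega), sub_self]
  set c := P.coeff 0 with hc
  set R := P - Polynomial.C c * revStar n (Φ n) with hR
  have hpcn : (Φ n).coeff n = 1 := by
    have h := hmp.coeff_natDegree; rwa [hdp] at h
  have hR0 : R.coeff 0 = 0 := by
    rw [hR, Polynomial.coeff_sub, Polynomial.coeff_C_mul, revStar_coeff]
    rw [if_pos (Nat.zero_le n), Nat.sub_zero, hpcn, map_one, mul_one, sub_self]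
  have hdegR : R.natDegree ≤ n := by
    refine le_trans (Polynomial.natDegree_sub_le _ _) ?_
    refine max_le hdegP (le_trans (Polynomial.natDegree_C_mul_le _ _) (revStar_natDegree_le n _))
  have horthR : ∀ i : ℕ, i + 1 ≤ n → ∫ w, (starRingEnd ℂ) w ^ (i+1) * R.eval w ∂μ = 0 := by
    intro i hi
    have hsplit : ∀ w : ℂ, (starRingEnd ℂ) w ^ (i+1) * R.eval w
        = (starRingEnd ℂ) w ^ (i+1) * P.eval w
          - c * ((starRingEnd ℂ) w ^ (i+1) * (revStar n (Φ n)).eval w) := by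
      intro w
      rw [hR, Polynomial.eval_sub, Polynomial.eval_mul, Polynomial.eval_C]
      ring
    rw [MeasureTheory.integral_congr_ae (Filter.Eventually.of_forall hsplit),
      MeasureTheory.integral_sub (int_conjpow_poly hμ (i+1) _)
        ((int_conjpow_poly hμ (i+1) _).const_mul _),
      MeasureTheory.integral_const_mul, horthP i hi, momstar hμ hΦ n (i+1) hi,
      if_neg (Nat.succ_ne_zero i), mul_zero, sub_self]
  obtain ⟨Q, hQ⟩ := Polynomial.X_dvd_iff.mpr hR0
  have hQzero : Q = 0 := by
    by_contra hQz
    have hdQ : Q.natDegree + 1 ≤ n := by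
      have h1 := Polynomial.natDegree_X_mul hQz
      rw [← hQ] at h1
      omega
    have hQorth : ∀ i, i ≤ Q.natDegree → ∫ w, (starRingEnd ℂ) w ^ i * Q.eval w ∂μ = 0 := by
      intro i hi
      have hsplit : ∀ᵐ w ∂μ, (starRingEnd ℂ) w ^ (i+1) * R.eval w
          = (starRingEnd ℂ) w ^ i * Q.eval w := by
        filter_upwards [hae hμ] with w hw
        rw [hQ, Polynomial.eval_mul, Polynomial.eval_X, circ_shift hw]
      rw [← MeasureTheory.integral_congr_ae hsplit]
      exact horthR i (by omega)
    have hzero : ((polyNormSq μ Q : ℝ) : ℂ) = 0 := by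
      rw [normSq_eq_sum hμ Q]
      refine Finset.sum_eq_zero fun i hi => ?_
      rw [hQorth i (Nat.lt_succ_iff.mp (Finset.mem_range.mp hi)), mul_zero]
    have := npos hμ hQz
    rw [Complex.ofReal_eq_zero] at hzero
    linarith
  have hRzero : R = 0 := by rw [hQ, hQzero, mul_zero]
  have hPc : P = Polynomial.C c * revStar n (Φ n) := by
    have := sub_eq_zero.mp hRzero
    exact this
  have hc' : c = (Φ (n+1)).eval 0 := by
    rw [hc, hP, Polynomial.coeff_sub, Polynomial.mul_coeff_zero, Polynomial.coeff_X_zero,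
      zero_mul, sub_zero, Polynomial.coeff_zero_eq_eval_zero]
  rw [← hc']
  have : Φ (n+1) = Polynomial.X * Φ n + P := by rw [hP]; ring
  rw [this, hPc]

lemma eval0_phi (n : ℕ) : (Φ (n+1)).eval 0 = - (starRingEnd ℂ) (verblunsky Φ n) := by
  rw [verblunsky, map_neg, Complex.conj_conj, neg_neg]

lemma int_wphi (hμ : IsNontrivialOnCircle μ) (hΦ : IsMonicOPUC μ Φ) (n : ℕ) :
    ∫ w, w * (Φ n).eval w ∂μ
      = (starRingEnd ℂ) (verblunsky Φ n) * ((polyNormSq μ (Φ n) : ℝ) : ℂ) := by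
  have hs := szego hμ hΦ n
  have hXp : ∀ w : ℂ, w * (Φ n).eval w
      = (Φ (n+1)).eval w - (Φ (n+1)).eval 0 * (revStar n (Φ n)).eval w := by
    intro w
    conv_lhs => rw [show w * (Φ n).eval w = (Polynomial.X * Φ n).eval w by
      rw [Polynomial.eval_mul, Polynomial.eval_X]]
    conv_rhs => rw [show (Φ (n+1)).eval w
        = (Polynomial.X * Φ n).eval w + (Φ (n+1)).eval 0 * (revStar n (Φ n)).eval w by
      conv_lhs => rw [hs]
      simp only [Polynomial.eval_add, Polynomial.eval_mul, Polynomial.eval_C]]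
    ring
  have hint1 : Integrable (fun w => (starRingEnd ℂ) w ^ 0 * (Φ (n+1)).eval w) μ :=
    int_conjpow_poly hμ 0 _
  simp only [pow_zero, one_mul] at hint1
  have hint2 : Integrable (fun w => (starRingEnd ℂ) w ^ 0 * (revStar n (Φ n)).eval w) μ :=
    int_conjpow_poly hμ 0 _
  simp only [pow_zero, one_mul] at hint2
  rw [MeasureTheory.integral_congr_ae (Filter.Eventually.of_forall hXp),
    MeasureTheory.integral_sub hint1 (hint2.const_mul _), MeasureTheory.integral_const_mul]
  have h1 : ∫ w, (Φ (n+1)).eval w ∂μ = 0 := by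
    have h := (hΦ (n+1)).2 0 (Nat.succ_pos n)
    simpa using h
  have h2 : ∫ w, (revStar n (Φ n)).eval w ∂μ = ((polyNormSq μ (Φ n) : ℝ) : ℂ) := by
    have h := momstar hμ hΦ n 0 (Nat.zero_le n)
    simpa using h
  rw [h1, h2, eval0_phi, zero_sub, neg_mul, neg_neg]

lemma momstar_top (hμ : IsNontrivialOnCircle μ) (hΦ : IsMonicOPUC μ Φ) (n : ℕ) :
    ∫ w, (starRingEnd ℂ) w ^ (n+1) * (revStar n (Φ n)).eval w ∂μ
      = verblunsky Φ n * ((polyNormSq μ (Φ n) : ℝ) : ℂ) := by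
  have hdeg : (Φ n).natDegree = n := (hΦ n).1.2
  have hrw : ∀ᵐ w ∂μ, (starRingEnd ℂ) w ^ (n+1) * (revStar n (Φ n)).eval w
      = (starRingEnd ℂ) (w * (Φ n).eval w) := by
    filter_upwards [hae hμ] with w hw
    rw [revStar_eval_circ hdeg.le hw, map_mul]
    have h1 : (starRingEnd ℂ) w ^ (n+1) * (w ^ n * (starRingEnd ℂ) ((Φ n).eval w))
        = ((starRingEnd ℂ) w ^ n * w ^ n) * (starRingEnd ℂ) w * (starRingEnd ℂ) ((Φ n).eval w) := by
      ring
    rw [h1, ← mul_pow, circ_conj_mul hw, one_pow, one_mul]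
  rw [MeasureTheory.integral_congr_ae hrw, integral_conj, int_wphi hμ hΦ n, map_mul,
    Complex.conj_conj, Complex.conj_ofReal]

lemma Nrec (hμ : IsNontrivialOnCircle μ) (hΦ : IsMonicOPUC μ Φ) (n : ℕ) :
    ((polyNormSq μ (Φ (n+1)) : ℝ) : ℂ)
      = ((polyNormSq μ (Φ n) : ℝ) : ℂ)
        - (starRingEnd ℂ) (verblunsky Φ n) * (verblunsky Φ n * ((polyNormSq μ (Φ n) : ℝ) : ℂ)) := by
  have hs := szego hμ hΦ n
  have key : ∀ᵐ w ∂μ, (starRingEnd ℂ) w ^ (n+1) * (Φ (n+1)).eval w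
      = (starRingEnd ℂ) w ^ n * (Φ n).eval w
        + (Φ (n+1)).eval 0 * ((starRingEnd ℂ) w ^ (n+1) * (revStar n (Φ n)).eval w) := by
    filter_upwards [hae hμ] with w hw
    conv_lhs => rw [hs]
    simp only [Polynomial.eval_add, Polynomial.eval_mul, Polynomial.eval_C, Polynomial.eval_X]
    rw [mul_add, circ_shift hw]
    ring
  have h := momn hμ hΦ (n+1)
  rw [MeasureTheory.integral_congr_ae key,
    MeasureTheory.integral_add (int_conjpow_poly hμ n _)
      ((int_conjpow_poly hμ (n+1) _).const_mul _),
    MeasureTheory.integral_const_mul, momn hμ hΦ n, momstar_top hμ hΦ n, eval0_phi] at h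
  rw [← h]
  ring
end szego


/-! ## Analytic layer -/

variable (μ) in
def uI (Φ : ℕ → Polynomial ℂ) (n : ℕ) (z : ℂ) : ℂ :=
  ∫ w, (w + z) / (w - z) * (Φ n).eval w ∂μ

variable (μ) in
def sI (Φ : ℕ → Polynomial ℂ) (n : ℕ) (z : ℂ) : ℂ :=
  ∫ w, (w + z) / (w - z) * (revStar n (Φ n)).eval w ∂μ

variable (μ) in
def VV (Φ : ℕ → Polynomial ℂ) (n : ℕ) (z : ℂ) : ℂ :=
  sI μ Φ n z - ((polyNormSq μ (Φ n) : ℝ) : ℂ)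

variable (μ) in
def UU (Φ : ℕ → Polynomial ℂ) (n : ℕ) (z : ℂ) : ℂ :=
  uI μ Φ n z + (if n = 0 then 1 else 0)

lemma kdecomp {w z : ℂ} (hw : ‖w‖ = 1) (hz : ‖z‖ < 1) (m : ℕ) :
    (w + z) / (w - z)
      = 1 + 2 * ∑ k ∈ Finset.range m, z^(k+1) * (starRingEnd ℂ) w^(k+1)
        + 2 * z^(m+1) * (starRingEnd ℂ) w^m / (w - z) := by
  have hne := circ_sub_ne hw hz
  have hc := circ_conj_mul hw
  induction m with
  | zero =>
    simp only [Finset.range_zero, Finset.sum_empty, mul_zero, add_zero, pow_zero, pow_one,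
      mul_one]
    field_simp
    ring
  | succ m ih =>
    rw [Finset.sum_range_succ, ih]
    have h2 : 2 * z^(m+1) * (starRingEnd ℂ) w^m
        = 2*(z^(m+1) * (starRingEnd ℂ) w^(m+1))*(w-z) + 2*z^(m+1+1)*(starRingEnd ℂ) w^(m+1) := by
      linear_combination (-(2*z^(m+1)*(starRingEnd ℂ) w^m)) * hc
    have key : 2 * z^(m+1) * (starRingEnd ℂ) w^m / (w - z)
        = 2*(z^(m+1) * (starRingEnd ℂ) w^(m+1))
          + 2*z^(m+1+1)*(starRingEnd ℂ) w^(m+1) / (w-z) := by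
      rw [h2, add_div, mul_div_cancel_right₀ _ hne]
    rw [key]
    ring

lemma int_expand (hμ : IsNontrivialOnCircle μ) {z : ℂ} (hz : ‖z‖ < 1)
    (p : Polynomial ℂ) (m : ℕ) :
    ∫ w, (w + z) / (w - z) * p.eval w ∂μ
      = (∫ w, p.eval w ∂μ)
        + ∑ k ∈ Finset.range m, (2 * z^(k+1)) * ∫ w, (starRingEnd ℂ) w^(k+1) * p.eval w ∂μ
        + (2 * z^(m+1)) * ∫ w, (starRingEnd ℂ) w^m * p.eval w / (w - z) ∂μ := by
  have hrw : ∀ᵐ w ∂μ, (w + z) / (w - z) * p.eval w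
      = p.eval w
        + (∑ k ∈ Finset.range m, (2 * z^(k+1)) * ((starRingEnd ℂ) w^(k+1) * p.eval w))
        + (2 * z^(m+1)) * ((starRingEnd ℂ) w^m * p.eval w / (w - z)) := by
    filter_upwards [hae hμ] with w hw
    rw [kdecomp hw hz m, add_mul, add_mul, one_mul]
    congr 1
    · congr 1
      rw [mul_assoc, Finset.sum_mul, Finset.mul_sum]
      exact Finset.sum_congr rfl fun k _ => by ring
    · ring
  have i1 : Integrable (fun w => p.eval w) μ := by
    have h := int_conjpow_poly hμ 0 p
    simpa using h
  have i2 : Integrable (fun w => ∑ k ∈ Finset.range m,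
      (2*z^(k+1)) * ((starRingEnd ℂ) w^(k+1) * p.eval w)) μ :=
    MeasureTheory.integrable_finset_sum _ fun k _ => (int_conjpow_poly hμ (k+1) p).const_mul _
  have i3 : Integrable (fun w => (starRingEnd ℂ) w^m * p.eval w / (w - z)) μ :=
    int_rem_poly hμ hz m p
  have i12 : Integrable (fun w => p.eval w + ∑ k ∈ Finset.range m,
      (2*z^(k+1)) * ((starRingEnd ℂ) w^(k+1) * p.eval w)) μ := i1.add i2
  rw [MeasureTheory.integral_congr_ae hrw,
    MeasureTheory.integral_add i12 (i3.const_mul _),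
    MeasureTheory.integral_add i1 i2,
    MeasureTheory.integral_finset_sum _ (fun k _ => (int_conjpow_poly hμ (k+1) p).const_mul _),
    MeasureTheory.integral_const_mul]
  congr 1
  congr 1
  exact Finset.sum_congr rfl fun k _ => MeasureTheory.integral_const_mul _ _

section analytic
variable {Φ : ℕ → Polynomial ℂ}

lemma intphi (hμ : IsNontrivialOnCircle μ) (hΦ : IsMonicOPUC μ Φ) (n : ℕ) :
    ∫ w, (Φ n).eval w ∂μ = if n = 0 then 1 else 0 := by
  rcases n with _ | n
  · have := hμ.prob
    rw [if_pos rfl, phi0 hΦ]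
    simp
  · rw [if_neg (Nat.succ_ne_zero n)]
    have h := (hΦ (n+1)).2 0 (Nat.succ_pos n)
    simpa using h

lemma Uexp (hμ : IsNontrivialOnCircle μ) (hΦ : IsMonicOPUC μ Φ) (n : ℕ) {z : ℂ}
    (hz : ‖z‖ < 1) :
    UU μ Φ n z = 2 * ((polyNormSq μ (Φ n) : ℝ) : ℂ) * z^n
      + (2 * z^(n+1)) * ∫ w, (starRingEnd ℂ) w^n * (Φ n).eval w / (w - z) ∂μ := by
  rcases n with _ | n
  · rw [UU, if_pos rfl, uI, int_expand hμ hz _ 0, intphi hμ hΦ 0, if_pos rfl,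
      N_zero hμ hΦ]
    simp only [Finset.range_zero, Finset.sum_empty, pow_zero, pow_one]
    push_cast
    ring
  · rw [UU, if_neg (Nat.succ_ne_zero n), add_zero, uI, int_expand hμ hz _ (n+1),
      intphi hμ hΦ (n+1), if_neg (Nat.succ_ne_zero n)]
    have hsum : ∑ k ∈ Finset.range (n+1),
        (2 * z^(k+1)) * ∫ w, (starRingEnd ℂ) w^(k+1) * (Φ (n+1)).eval w ∂μ
        = (2 * z^(n+1)) * ((polyNormSq μ (Φ (n+1)) : ℝ) : ℂ) := by
      rw [Finset.sum_eq_single_of_mem n (Finset.self_mem_range_succ n)]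
      · rw [momn hμ hΦ (n+1)]
      · intro k hk hkn
        rw [(hΦ (n+1)).2 (k+1) (by
          have := Finset.mem_range.mp hk
          omega), mul_zero]
    rw [hsum]
    ring

lemma Vexp (hμ : IsNontrivialOnCircle μ) (hΦ : IsMonicOPUC μ Φ) (n : ℕ) {z : ℂ}
    (hz : ‖z‖ < 1) :
    VV μ Φ n z = (2 * z^(n+1)) * (verblunsky Φ n * ((polyNormSq μ (Φ n) : ℝ) : ℂ))
      + (2 * z^(n+2)) * ∫ w, (starRingEnd ℂ) w^(n+1) * (revStar n (Φ n)).eval w / (w - z) ∂μ := by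
  rw [VV, sI, int_expand hμ hz _ (n+1)]
  have h0 : ∫ w, (revStar n (Φ n)).eval w ∂μ = ((polyNormSq μ (Φ n) : ℝ) : ℂ) := by
    have h := momstar hμ hΦ n 0 (Nat.zero_le n)
    simpa using h
  have hsum : ∑ k ∈ Finset.range (n+1),
      (2 * z^(k+1)) * ∫ w, (starRingEnd ℂ) w^(k+1) * (revStar n (Φ n)).eval w ∂μ
      = (2 * z^(n+1)) * (verblunsky Φ n * ((polyNormSq μ (Φ n) : ℝ) : ℂ)) := by
    rw [Finset.sum_eq_single_of_mem n (Finset.self_mem_range_succ n)]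
    · rw [momstar_top hμ hΦ n]
    · intro k hk hkn
      have hk' : k + 1 ≤ n := by
        have := Finset.mem_range.mp hk
        omega
      rw [momstar hμ hΦ n (k+1) hk', if_neg (Nat.succ_ne_zero k), mul_zero]
  rw [h0, hsum]
  ring

lemma int_xphi (hμ : IsNontrivialOnCircle μ) (p : Polynomial ℂ) :
    Integrable (fun w => w * p.eval w) μ := by
  refine int_kmul hμ measurable_id.aestronglyMeasurable (C := 1) (fun w hw => ?_) p
  simp [hw]

lemma int_kernel_xphi (hμ : IsNontrivialOnCircle μ) (hΦ : IsMonicOPUC μ Φ) (n : ℕ) {z : ℂ}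
    (hz : ‖z‖ < 1) :
    ∫ w, (w + z) / (w - z) * (w * (Φ n).eval w) ∂μ
      = (starRingEnd ℂ) (verblunsky Φ n) * ((polyNormSq μ (Φ n) : ℝ) : ℂ)
        + z * (if n = 0 then 1 else 0) + z * uI μ Φ n z := by
  have hrw : ∀ᵐ w ∂μ, (w + z) / (w - z) * (w * (Φ n).eval w)
      = w * (Φ n).eval w + z * (Φ n).eval w + z * ((w + z) / (w - z) * (Φ n).eval w) := by
    filter_upwards [hae hμ] with w hw
    have hne := circ_sub_ne hw hz
    field_simp
    ring
  have i1 := int_xphi hμ (p := Φ n)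
  have i2 : Integrable (fun w => (Φ n).eval w) μ := by
    have h := int_conjpow_poly hμ 0 (Φ n)
    simpa using h
  have i3 := int_kernel_poly hμ hz (Φ n)
  have i12 : Integrable (fun w => w * (Φ n).eval w + z * (Φ n).eval w) μ :=
    i1.add (i2.const_mul z)
  rw [MeasureTheory.integral_congr_ae hrw,
    MeasureTheory.integral_add i12 (i3.const_mul z),
    MeasureTheory.integral_add i1 (i2.const_mul z),
    MeasureTheory.integral_const_mul, MeasureTheory.integral_const_mul,
    int_wphi hμ hΦ n, intphi hμ hΦ n, uI]

lemma rev_succ_ae (hμ : IsNontrivialOnCircle μ) (hΦ : IsMonicOPUC μ Φ) (n : ℕ) :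
    ∀ᵐ w ∂μ, (revStar (n+1) (Φ (n+1))).eval w
      = (revStar n (Φ n)).eval w - verblunsky Φ n * (w * (Φ n).eval w) := by
  filter_upwards [hae hμ] with w hw
  have hd1 : (Φ (n+1)).natDegree = n + 1 := (hΦ (n+1)).1.2
  have hdn : (Φ n).natDegree = n := (hΦ n).1.2
  rw [revStar_eval_circ hd1.le hw]
  have hs := szego hμ hΦ n
  have heval : (Φ (n+1)).eval w
      = w * (Φ n).eval w + (Φ (n+1)).eval 0 * (revStar n (Φ n)).eval w := by
    conv_lhs => rw [hs]
    simp only [Polynomial.eval_add, Polynomial.eval_mul, Polynomial.eval_C, Polynomial.eval_X]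
  rw [heval, map_add, map_mul, map_mul]
  rw [revStar_eval_circ hdn.le hw, eval0_phi (Φ := Φ) n]
  rw [map_mul, map_neg, Complex.conj_conj, map_pow, Complex.conj_conj]
  -- goal: w^{n+1} * (conj w * conj(eval) + (-(α)) * (w^n * conj(conj eval)? ...)
  have hc := circ_conj_mul hw
  have hcn : (starRingEnd ℂ) w ^ n * w ^ n = 1 := by
    rw [← mul_pow, hc, one_pow]
  linear_combination (w ^ n * (starRingEnd ℂ) ((Φ n).eval w)) * hc
    - (verblunsky Φ n * w * (Φ n).eval w) * hcn

lemma Urec (hμ : IsNontrivialOnCircle μ) (hΦ : IsMonicOPUC μ Φ) (n : ℕ) {z : ℂ}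
    (hz : ‖z‖ < 1) :
    UU μ Φ (n+1) z = z * UU μ Φ n z - (starRingEnd ℂ) (verblunsky Φ n) * VV μ Φ n z := by
  have hrw : ∀ᵐ w ∂μ, (w + z) / (w - z) * (Φ (n+1)).eval w
      = (w + z) / (w - z) * (w * (Φ n).eval w)
        + (Φ (n+1)).eval 0 * ((w + z) / (w - z) * (revStar n (Φ n)).eval w) := by
    filter_upwards [] with w
    have heval : (Φ (n+1)).eval w
        = w * (Φ n).eval w + (Φ (n+1)).eval 0 * (revStar n (Φ n)).eval w := by
      conv_lhs => rw [szego hμ hΦ n]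
      simp only [Polynomial.eval_add, Polynomial.eval_mul, Polynomial.eval_C, Polynomial.eval_X]
    rw [heval]
    ring
  have i1 : Integrable (fun w => (w + z) / (w - z) * (w * (Φ n).eval w)) μ := by
    have h := int_kernel_poly hμ hz (Polynomial.X * Φ n)
    refine h.congr ?_
    filter_upwards [] with w
    simp only [Polynomial.eval_mul, Polynomial.eval_X]
  have i2 := int_kernel_poly hμ hz (revStar n (Φ n))
  have hU1 : UU μ Φ (n+1) z = uI μ Φ (n+1) z := by
    rw [UU, if_neg (Nat.succ_ne_zero n), add_zero]
  rw [hU1, uI, MeasureTheory.integral_congr_ae hrw,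
    MeasureTheory.integral_add i1 (i2.const_mul _), MeasureTheory.integral_const_mul,
    int_kernel_xphi hμ hΦ n hz, eval0_phi (Φ := Φ) n]
  rw [UU, VV, sI]
  ring

lemma Vrec (hμ : IsNontrivialOnCircle μ) (hΦ : IsMonicOPUC μ Φ) (n : ℕ) {z : ℂ}
    (hz : ‖z‖ < 1) :
    VV μ Φ (n+1) z = VV μ Φ n z - verblunsky Φ n * (z * UU μ Φ n z) := by
  have hrw : ∀ᵐ w ∂μ, (w + z) / (w - z) * (revStar (n+1) (Φ (n+1))).eval w
      = (w + z) / (w - z) * (revStar n (Φ n)).eval w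
        - verblunsky Φ n * ((w + z) / (w - z) * (w * (Φ n).eval w)) := by
    filter_upwards [rev_succ_ae hμ hΦ n] with w hw
    rw [hw]
    ring
  have i1 := int_kernel_poly hμ hz (revStar n (Φ n))
  have i2 : Integrable (fun w => (w + z) / (w - z) * (w * (Φ n).eval w)) μ := by
    have h := int_kernel_poly hμ hz (Polynomial.X * Φ n)
    refine h.congr ?_
    filter_upwards [] with w
    simp only [Polynomial.eval_mul, Polynomial.eval_X]
  rw [VV, sI, MeasureTheory.integral_congr_ae hrw,
    MeasureTheory.integral_sub i1 (i2.const_mul _), MeasureTheory.integral_const_mul,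
    int_kernel_xphi hμ hΦ n hz, Nrec hμ hΦ n]
  rw [VV, sI, UU, uI]
  ring

end analytic


lemma rem_bound (hμ : IsNontrivialOnCircle μ) {z : ℂ} (hz : ‖z‖ ≤ 1/2) (j : ℕ)
    (p : Polynomial ℂ) :
    ‖∫ w, (starRingEnd ℂ) w^j * p.eval w / (w - z) ∂μ‖ ≤ 2 * pB p := by
  have := hμ.prob
  have hb : ∀ᵐ w ∂μ, ‖(starRingEnd ℂ) w^j * p.eval w / (w - z)‖ ≤ 2 * pB p := by
    filter_upwards [hae hμ] with w hw
    rw [norm_div, norm_mul, norm_pow, RCLike.norm_conj, hw, one_pow, one_mul]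
    have h2 : (1:ℝ)/2 ≤ ‖w - z‖ := by
      have := norm_sub_norm_le w z
      rw [hw] at this
      linarith
    have h3 := eval_bound p hw
    have h4 := norm_nonneg (p.eval w)
    rw [div_le_iff₀ (by linarith)]
    nlinarith
  calc ‖∫ w, (starRingEnd ℂ) w^j * p.eval w / (w - z) ∂μ‖
      ≤ (2 * pB p) * (μ Set.univ).toReal := norm_integral_le_of_norm_le_const hb
    _ = 2 * pB p := by simp

lemma tendsto_aux (hμ : IsNontrivialOnCircle μ) {g : ℂ → ℂ} {N : ℂ} (p : Polynomial ℂ) (m : ℕ)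
    (hexp : ∀ z : ℂ, ‖z‖ < 1 →
      g z = 2*N*z^m + (2*z^(m+1)) * ∫ w, (starRingEnd ℂ) w^m * p.eval w / (w - z) ∂μ) :
    Tendsto (fun z => g z / z^m) (nhdsWithin (0:ℂ) {(0:ℂ)}ᶜ) (nhds (2*N)) := by
  have hev : ∀ᶠ z in nhdsWithin (0:ℂ) {(0:ℂ)}ᶜ, ‖g z / z^m - 2*N‖ ≤ (4 * pB p) * ‖z‖ := by
    have h1 : ∀ᶠ z in nhds (0:ℂ), z ∈ Metric.ball (0:ℂ) (1/2) :=
      Metric.ball_mem_nhds _ (by norm_num)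
    filter_upwards [eventually_nhdsWithin_of_eventually_nhds h1, self_mem_nhdsWithin]
      with z hzb hz0m
    have hz0 : z ≠ 0 := hz0m
    have hzh : ‖z‖ ≤ 1/2 := le_of_lt (mem_ball_zero_iff.mp hzb)
    have hz1 : ‖z‖ < 1 := by linarith
    rw [hexp z hz1]
    have hpow : z^m ≠ 0 := pow_ne_zero _ hz0
    have heq : (2*N*z^m + (2*z^(m+1)) * ∫ w, (starRingEnd ℂ) w^m * p.eval w / (w - z) ∂μ)/z^m
          - 2*N
        = (2*z) * ∫ w, (starRingEnd ℂ) w^m * p.eval w / (w - z) ∂μ := by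
      field_simp
      ring
    rw [heq, norm_mul, norm_mul]
    have h2n : ‖(2:ℂ)‖ = 2 := by norm_num
    rw [h2n]
    have hrb := rem_bound hμ hzh m p
    have h0z := norm_nonneg z
    nlinarith [norm_nonneg (∫ w, (starRingEnd ℂ) w^m * p.eval w / (w - z) ∂μ),
      mul_le_mul_of_nonneg_left hrb (by positivity : (0:ℝ) ≤ 2*‖z‖)]
  have h0 : Tendsto (fun z : ℂ => (4*pB p)*‖z‖) (nhdsWithin (0:ℂ) {(0:ℂ)}ᶜ) (nhds 0) := by
    have h : Tendsto (fun z : ℂ => (4*pB p) * ‖z‖) (nhds 0) (nhds ((4*pB p) * ‖(0:ℂ)‖)) :=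
      (continuous_const.mul continuous_norm).tendsto 0
    simpa using h.mono_left nhdsWithin_le_nhds
  have hT := squeeze_zero_norm' hev h0
  have hT2 := hT.add_const (2*N)
  simp only [sub_add_cancel, zero_add] at hT2
  exact hT2

section limits
variable {Φ : ℕ → Polynomial ℂ}

lemma U_tendsto (hμ : IsNontrivialOnCircle μ) (hΦ : IsMonicOPUC μ Φ) (n : ℕ) :
    Tendsto (fun z => UU μ Φ n z / z^n) (nhdsWithin (0:ℂ) {(0:ℂ)}ᶜ)
      (nhds (2 * ((polyNormSq μ (Φ n) : ℝ) : ℂ))) :=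
  tendsto_aux hμ (Φ n) n fun z hz => Uexp hμ hΦ n hz

lemma V_tendsto (hμ : IsNontrivialOnCircle μ) (hΦ : IsMonicOPUC μ Φ) (n : ℕ) :
    Tendsto (fun z => VV μ Φ n z / z^(n+1)) (nhdsWithin (0:ℂ) {(0:ℂ)}ᶜ)
      (nhds (2 * (verblunsky Φ n * ((polyNormSq μ (Φ n) : ℝ) : ℂ)))) :=
  tendsto_aux hμ (revStar n (Φ n)) (n+1) fun z hz => by
    rw [Vexp hμ hΦ n hz]
    ring

end limits

/-- Geronimus' theorem: the Schur parameters of the Schur function of `μ`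
coincide with the Verblunsky coefficients of `μ`. Here `f 0` is the Schur function of
`μ` (related to the Carathéodory function `F(z) = ∫ (w+z)/(w−z) dμ(w)` by
`F = (1+zf)/(1−zf)`), and `f (n+1)` is obtained from `f n` via the Schur algorithm. -/
theorem stmt6 (μ : Measure ℂ) (hμ : IsNontrivialOnCircle μ)
    (Φ : ℕ → Polynomial ℂ) (hΦ : IsMonicOPUC μ Φ)
    (f : ℕ → ℂ → ℂ)
    (hanal : ∀ n, DifferentiableOn ℂ (f n) (Metric.ball 0 1))
    (hbound : ∀ n, ∀ z ∈ Metric.ball (0:ℂ) 1, ‖f n z‖ < 1)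
    (hCara : ∀ z ∈ Metric.ball (0:ℂ) 1,
      (∫ w, (w + z) / (w - z) ∂μ) = (1 + z * f 0 z) / (1 - z * f 0 z))
    (hSchur : ∀ n, ∀ z ∈ Metric.ball (0:ℂ) 1,
      f n z = (f n 0 + z * f (n + 1) z) / (1 + (starRingEnd ℂ) (f n 0) * z * f (n + 1) z)) :
    ∀ n : ℕ, f n 0 = verblunsky Φ n := by
  have hball0 : (0:ℂ) ∈ Metric.ball (0:ℂ) 1 := by
    simp
  have ext : ∀ n : ℕ, (∀ z ∈ Metric.ball (0:ℂ) 1, VV μ Φ n z = z * f n z * UU μ Φ n z) →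
      f n 0 = verblunsky Φ n := by
    intro n hC
    have hNpos : 0 < polyNormSq μ (Φ n) := npos hμ (hΦ n).1.1.ne_zero
    set N : ℂ := ((polyNormSq μ (Φ n) : ℝ) : ℂ) with hN
    have hN0 : N ≠ 0 := by
      rw [hN]
      exact_mod_cast hNpos.ne'
    have h2N : (2:ℂ) * N ≠ 0 := mul_ne_zero two_ne_zero hN0
    have hT1 := U_tendsto hμ hΦ n
    have hT2 := V_tendsto hμ hΦ n
    have hT3 : Tendsto (f n) (nhdsWithin (0:ℂ) {(0:ℂ)}ᶜ) (nhds (f n 0)) :=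
      (((hanal n).differentiableAt
        (Metric.isOpen_ball.mem_nhds hball0)).continuousAt.tendsto).mono_left nhdsWithin_le_nhds
    have hdiv := hT2.div hT1 h2N
    have hee : (fun z => VV μ Φ n z / z^(n+1)) / (fun z => UU μ Φ n z / z^n)
        =ᶠ[nhdsWithin (0:ℂ) {(0:ℂ)}ᶜ] f n := by
      have h1 : ∀ᶠ z in nhds (0:ℂ), z ∈ Metric.ball (0:ℂ) 1 :=
        Metric.ball_mem_nhds _ one_pos
      filter_upwards [eventually_nhdsWithin_of_eventually_nhds h1, self_mem_nhdsWithin,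
        hT1.eventually_ne h2N] with z hzb hz0m hUq
      have hz0 : z ≠ 0 := hz0m
      have hU : UU μ Φ n z ≠ 0 := by
        intro h
        apply hUq
        rw [h, zero_div]
      have hCz := hC z hzb
      simp only [Pi.div_apply]
      rw [hCz]
      have hp1 : z^n ≠ 0 := pow_ne_zero _ hz0
      have hp2 : z^(n+1) ≠ 0 := pow_ne_zero _ hz0
      field_simp
      ring
    have huniq := tendsto_nhds_unique (hdiv.congr' hee) hT3
    rw [← huniq, div_eq_iff h2N]
    ring
  have key : ∀ n : ℕ, ∀ z ∈ Metric.ball (0:ℂ) 1, VV μ Φ n z = z * f n z * UU μ Φ n z := by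
    intro n
    induction n with
    | zero =>
      intro z hz
      have hz1 : ‖z‖ < 1 := mem_ball_zero_iff.mp hz
      have hfz : ‖f 0 z‖ < 1 := hbound 0 z hz
      have hne : (1 : ℂ) - z * f 0 z ≠ 0 := by
        intro h
        rw [sub_eq_zero] at h
        have h2 : ‖z * f 0 z‖ < 1 := by
          rw [norm_mul]
          nlinarith [norm_nonneg z, norm_nonneg (f 0 z)]
        rw [← h] at h2
        simp at h2
      have hrev0 : revStar 0 (Φ 0) = 1 := by
        rw [phi0 hΦ]
        simp [revStar]
      have hF0 : sI μ Φ 0 z = ∫ w, (w + z)/(w - z) ∂μ := by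
        rw [sI, hrev0]
        simp only [Polynomial.eval_one, mul_one]
      have hU0 : uI μ Φ 0 z = ∫ w, (w + z)/(w - z) ∂μ := by
        rw [uI, phi0 hΦ]
        simp only [Polynomial.eval_one, mul_one]
      rw [VV, UU, if_pos rfl, hF0, hU0, N_zero hμ hΦ, hCara z hz]
      push_cast
      field_simp
      ring
    | succ n ih =>
      have hγ : f n 0 = verblunsky Φ n := ext n ih
      intro z hz
      have hz1 : ‖z‖ < 1 := mem_ball_zero_iff.mp hz
      have hg : ‖f (n+1) z‖ < 1 := hbound (n+1) z hz
      have ha : ‖f n 0‖ < 1 := hbound n 0 hball0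
      rw [hγ] at ha
      have hfn := hSchur n z hz
      rw [hγ] at hfn
      have hD : (1 : ℂ) + (starRingEnd ℂ) (verblunsky Φ n) * z * f (n+1) z ≠ 0 := by
        intro h
        have hnorm : ‖(starRingEnd ℂ) (verblunsky Φ n) * z * f (n+1) z‖ < 1 := by
          rw [norm_mul, norm_mul, RCLike.norm_conj]
          have hh1 : ‖verblunsky Φ n‖ * ‖z‖ ≤ ‖z‖ := by
            nlinarith [norm_nonneg (verblunsky Φ n), norm_nonneg z]
          have hh2 : ‖verblunsky Φ n‖ * ‖z‖ * ‖f (n+1) z‖ ≤ ‖verblunsky Φ n‖ * ‖z‖ :=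
            mul_le_of_le_one_right (by positivity) hg.le
          linarith
        have h2 : (starRingEnd ℂ) (verblunsky Φ n) * z * f (n+1) z = -1 :=
          eq_neg_of_add_eq_zero_right h
        rw [h2] at hnorm
        simp at hnorm
      have hfn' : f n z * (1 + (starRingEnd ℂ) (verblunsky Φ n) * z * f (n+1) z)
          = verblunsky Φ n + z * f (n+1) z := by
        rw [hfn]
        exact div_mul_cancel₀ _ hD
      rw [Vrec hμ hΦ n hz1, Urec hμ hΦ n hz1, ih z hz]
      linear_combination (z * UU μ Φ n z) * hfn'
  exact fun n => ext n (key n)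

end
end

section
/- Let f and g be Schur functions whose Schur algorithms do not terminate (i.e., no Schur iterate is a unimodular constant), with Schur parameter sequences (γ_n(f)) and (γ_n(g)) in 𝔻^∞. If γ_n(f) = γ_n(g) for all n ≥ 0, then f = g on 𝔻. Conversely, for every sequence (γ_n)_{n=0}^∞ with γ_n ∈ 𝔻 there exists a Schur function f with γ_n(f) = γ_n for all n. -/
open MeasureTheory Polynomial Filter

noncomputable section

/-- A Schur function: analytic on the open unit disk with values in the closed unit disk. -/
def IsSchur (f : ℂ → ℂ) : Prop :=
  DifferentiableOn ℂ f (Metric.ball 0 1) ∧ ∀ z ∈ Metric.ball (0:ℂ) 1, ‖f z‖ ≤ 1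

/-- A full (non-terminating) sequence of Schur iterates: `fs 0` is the original Schur
function, each `fs n` is a Schur function with Schur parameter `γ_n = fs n 0 ∈ 𝔻`, and
the Schur algorithm relates consecutive iterates. -/
def SchurIterates (fs : ℕ → ℂ → ℂ) : Prop :=
  (∀ n, IsSchur (fs n)) ∧ (∀ n, ‖fs n 0‖ < 1) ∧
    ∀ n, ∀ z ∈ Metric.ball (0:ℂ) 1,
      fs n z = (fs n 0 + z * fs (n + 1) z) / (1 + (starRingEnd ℂ) (fs n 0) * z * fs (n + 1) z)

local notation "conj'" => starRingEnd ℂ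

lemma normSq_identity (u v : ℂ) :
    Complex.normSq (1 - conj' u * v) - Complex.normSq (u - v)
      = (1 - Complex.normSq u) * (1 - Complex.normSq v) := by
  obtain ⟨a, b⟩ := u; obtain ⟨c, d⟩ := v
  simp [Complex.normSq_apply, Complex.mul_re, Complex.mul_im]
  ring

lemma norm_identity (u v : ℂ) :
    ‖1 - conj' u * v‖ ^ 2 - ‖u - v‖ ^ 2 = (1 - ‖u‖ ^ 2) * (1 - ‖v‖ ^ 2) := by
  rw [Complex.sq_norm, Complex.sq_norm, Complex.sq_norm, Complex.sq_norm]
  exact normSq_identity u v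

lemma sub_le_one_sub (u v : ℂ) (hu : ‖u‖ ≤ 1) (hv : ‖v‖ ≤ 1) :
    ‖u - v‖ ≤ ‖1 - conj' u * v‖ := by
  have h := norm_identity u v
  have h1 : ‖u‖ ^ 2 ≤ 1 := by nlinarith [norm_nonneg u]
  have h2 : ‖v‖ ^ 2 ≤ 1 := by nlinarith [norm_nonneg v]
  have h3 : ‖u - v‖ ^ 2 ≤ ‖1 - conj' u * v‖ ^ 2 := by nlinarith
  exact (pow_le_pow_iff_left₀ (norm_nonneg _) (norm_nonneg _) (by norm_num)).1 h3

/-- pseudo-hyperbolic distance (with junk value 0 when denominator is 0) -/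
def pd (u v : ℂ) : ℝ := ‖u - v‖ / ‖1 - conj' u * v‖

lemma pd_le_one (u v : ℂ) (hu : ‖u‖ ≤ 1) (hv : ‖v‖ ≤ 1) : pd u v ≤ 1 := by
  unfold pd
  rcases eq_or_lt_of_le (norm_nonneg (1 - conj' u * v)) with h | h
  · rw [← h, div_zero]; norm_num
  · exact (div_le_one h).2 (sub_le_one_sub u v hu hv)

lemma norm_sub_le_two_pd (u v : ℂ) (hu : ‖u‖ ≤ 1) (hv : ‖v‖ ≤ 1) :
    ‖u - v‖ ≤ 2 * pd u v := by
  unfold pd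
  rcases eq_or_lt_of_le (norm_nonneg (1 - conj' u * v)) with h | h
  · have := sub_le_one_sub u v hu hv
    rw [← h] at this
    have h0 : ‖u - v‖ = 0 := le_antisymm this (norm_nonneg _)
    simp [h0]
  · rw [← mul_div_assoc, le_div_iff₀ h]
    have hle : ‖1 - conj' u * v‖ ≤ 2 := by
      calc ‖1 - conj' u * v‖ ≤ ‖(1:ℂ)‖ + ‖conj' u * v‖ := norm_sub_le _ _
      _ ≤ 1 + 1 * 1 := by
          simp only [norm_one, norm_mul, RCLike.norm_conj]
          gcongr
      _ = 2 := by norm_num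
    nlinarith [norm_nonneg (u - v)]

/-- Möbius map -/
def mob (γ w : ℂ) : ℂ := (γ + w) / (1 + conj' γ * w)

lemma mob_denom_ne (γ w : ℂ) (hγ : ‖γ‖ < 1) (hw : ‖w‖ ≤ 1) : 1 + conj' γ * w ≠ 0 := by
  intro h
  have h1 : ‖conj' γ * w‖ < 1 := by
    rw [norm_mul, RCLike.norm_conj]
    calc ‖γ‖ * ‖w‖ ≤ ‖γ‖ * 1 := by gcongr
    _ < 1 := by simpa using hγ
  have h2 : conj' γ * w = -1 := by linear_combination h
  rw [h2] at h1; simp at h1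

lemma mob_norm_le (γ w : ℂ) (hγ : ‖γ‖ < 1) (hw : ‖w‖ ≤ 1) : ‖mob γ w‖ ≤ 1 := by
  have key := norm_identity (-γ) w
  simp only [map_neg, norm_neg, neg_mul, sub_neg_eq_add] at key
  have h2 : ‖-γ - w‖ = ‖γ + w‖ := by rw [← norm_neg]; ring_nf
  rw [h2] at key
  have hd : 0 < ‖1 + conj' γ * w‖ := by
    rcases (norm_nonneg (1 + conj' γ * w)).lt_or_eq with h | h
    · exact h
    · exact absurd (norm_eq_zero.1 h.symm) (mob_denom_ne γ w hγ hw)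
  rw [mob, norm_div, div_le_one hd]
  have hγ2 : ‖γ‖ ^ 2 ≤ 1 := by nlinarith [norm_nonneg γ]
  have hw2 : ‖w‖ ^ 2 ≤ 1 := by nlinarith [norm_nonneg w]
  have h3 : ‖γ + w‖ ^ 2 ≤ ‖1 + conj' γ * w‖ ^ 2 := by nlinarith
  exact (pow_le_pow_iff_left₀ (norm_nonneg _) (norm_nonneg _) (by norm_num)).1 h3

lemma pd_mob (γ u v : ℂ) (hγ : ‖γ‖ < 1) (hu : ‖u‖ ≤ 1) (hv : ‖v‖ ≤ 1) :
    pd (mob γ u) (mob γ v) = pd u v := by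
  have hA : (1 + conj' γ * u) ≠ 0 := mob_denom_ne γ u hγ hu
  have hB : (1 + conj' γ * v) ≠ 0 := mob_denom_ne γ v hγ hv
  have hA' : conj' (1 + conj' γ * u) ≠ 0 := by
    exact (_root_.map_ne_zero _).mpr hA
  have hA2 : (1 : ℂ) + γ * conj' u ≠ 0 := by
    intro h; apply hA
    have := congrArg conj' h
    simpa [map_add, map_mul, map_one, Complex.conj_conj] using this
  have hc : (1 : ℂ) - γ * conj' γ ≠ 0 := by
    intro h
    have h1 : γ * conj' γ = 1 := by linear_combination -h
    have h2 := congrArg (‖·‖) h1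
    rw [norm_mul, RCLike.norm_conj, norm_one] at h2
    nlinarith [norm_nonneg γ]
  have e1 : mob γ u - mob γ v
      = (1 - γ * conj' γ) * (u - v) / ((1 + conj' γ * u) * (1 + conj' γ * v)) := by
    rw [mob, mob]
    rw [div_sub_div _ _ hA hB]
    ring
  have e2 : 1 - conj' (mob γ u) * mob γ v
      = (1 - γ * conj' γ) * (1 - conj' u * v)
        / (conj' (1 + conj' γ * u) * (1 + conj' γ * v)) := by
    rw [mob, mob, map_div₀]
    simp only [map_add, map_mul, map_one, Complex.conj_conj]
    rw [div_mul_div_comm, one_sub_div (mul_ne_zero hA2 hB)]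
    ring
  rw [pd, pd, e1, e2]
  rw [norm_div, norm_div, norm_mul, norm_mul, norm_mul, norm_mul, RCLike.norm_conj]
  have hC : ‖(1:ℂ) - γ * conj' γ‖ ≠ 0 := norm_ne_zero_iff.2 hc
  have hAB : ‖1 + conj' γ * u‖ * ‖1 + conj' γ * v‖ ≠ 0 :=
    mul_ne_zero (norm_ne_zero_iff.2 hA) (norm_ne_zero_iff.2 hB)
  rw [div_div_div_comm, div_self hAB, div_one, mul_div_mul_left _ _ hC]

/-- The contraction factor. -/
def kf (r : ℝ) : ℝ := 2 * r / (1 + r ^ 2)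

lemma kf_nonneg {r : ℝ} (hr : 0 ≤ r) : 0 ≤ kf r := by
  have : (0:ℝ) < 1 + r ^ 2 := by positivity
  exact div_nonneg (by linarith) this.le

lemma kf_lt_one {r : ℝ} (hr0 : 0 ≤ r) (hr : r < 1) : kf r < 1 := by
  rw [kf, div_lt_one (by positivity)]
  nlinarith

lemma kf_mono {a b : ℝ} (ha : 0 ≤ a) (hab : a ≤ b) (hb : b ≤ 1) : kf a ≤ kf b := by
  rw [kf, kf, div_le_div_iff₀ (by positivity) (by positivity)]
  nlinarith [mul_nonneg (sub_nonneg.2 hab) (by nlinarith : (0:ℝ) ≤ 1 - a * b)]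

/-- The key pointwise inequality. -/
lemma key_ineq (z t : ℂ) (hz : ‖z‖ ≤ 1) (ht : ‖t‖ ≤ 1) :
    ‖z‖ * ‖1 - t‖ ≤ kf ‖z‖ * ‖1 - (‖z‖:ℂ) ^ 2 * t‖ := by
  set a := ‖z‖ with ha
  have ha0 : 0 ≤ a := norm_nonneg z
  rw [kf, div_mul_eq_mul_div, le_div_iff₀ (by positivity)]
  set c := t.re with hc
  set msq := Complex.normSq t with hm
  have hre : c ^ 2 ≤ msq := by
    rw [hm, Complex.normSq_apply]; nlinarith [sq_nonneg t.im]
  have hm1 : msq ≤ 1 := by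
    rw [hm, ← Complex.sq_norm] at *; nlinarith [norm_nonneg t]
  have hc1 : -1 ≤ c := by nlinarith
  have h1 : ‖(1:ℂ) - t‖ ^ 2 = 1 - 2 * c + msq := by
    rw [hc, hm, Complex.sq_norm, Complex.normSq_apply, Complex.normSq_apply]
    simp [Complex.sub_re, Complex.sub_im]
    ring
  have h2 : ‖1 - (a:ℂ) ^ 2 * t‖ ^ 2 = 1 - 2 * a ^ 2 * c + a ^ 4 * msq := by
    rw [hc, hm, Complex.sq_norm, Complex.normSq_apply, Complex.normSq_apply]
    simp [Complex.sub_re, Complex.sub_im, Complex.mul_re, Complex.mul_im, pow_two,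
      Complex.ofReal_re, Complex.ofReal_im]
    ring
  have hsq : (a * ‖1 - t‖ * (1 + a ^ 2)) ^ 2 ≤ (2 * a * ‖1 - (a:ℂ) ^ 2 * t‖) ^ 2 := by
    have expand1 : (a * ‖1 - t‖ * (1 + a ^ 2)) ^ 2
        = a ^ 2 * (1 + a ^ 2) ^ 2 * (1 - 2 * c + msq) := by
      rw [mul_pow, mul_pow, h1]; ring
    have expand2 : (2 * a * ‖1 - (a:ℂ) ^ 2 * t‖) ^ 2
        = 4 * a ^ 2 * (1 - 2 * a ^ 2 * c + a ^ 4 * msq) := by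
      rw [mul_pow, h2]; ring
    rw [expand1, expand2]
    nlinarith [mul_nonneg (sq_nonneg a)
        (mul_nonneg (by linarith : (0:ℝ) ≤ 1 + c) (sq_nonneg (1 - a ^ 2))),
      mul_nonneg (sq_nonneg a) (mul_nonneg (mul_nonneg
        (by linarith : (0:ℝ) ≤ 1 - msq) (by nlinarith : (0:ℝ) ≤ 1 - a ^ 2))
        (by positivity : (0:ℝ) ≤ 1 + 3 * a ^ 2))]
  exact (pow_le_pow_iff_left₀ (by positivity) (by positivity) (by norm_num)).1 hsq

lemma pd_smul (z u v : ℂ) (hz : ‖z‖ < 1) (hu : ‖u‖ ≤ 1) (hv : ‖v‖ ≤ 1) :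
    pd (z * u) (z * v) ≤ kf ‖z‖ * pd u v := by
  have hconj : conj' (z * u) * (z * v) = (‖z‖:ℂ) ^ 2 * (conj' u * v) := by
    simp only [map_mul]
    rw [show conj' z * conj' u * (z * v) = (z * conj' z) * (conj' u * v) by ring,
      Complex.mul_conj]
    norm_cast
    rw [Complex.normSq_eq_norm_sq]
  have ht : ‖conj' u * v‖ ≤ 1 := by
    rw [norm_mul, RCLike.norm_conj]
    calc ‖u‖ * ‖v‖ ≤ 1 * 1 := by gcongr
    _ = 1 := by norm_num
  have hD2 : 0 < ‖1 - (‖z‖:ℂ) ^ 2 * (conj' u * v)‖ := by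
    have h : ‖(‖z‖:ℂ) ^ 2 * (conj' u * v)‖ < 1 := by
      rw [norm_mul, norm_pow, Complex.norm_real, Real.norm_eq_abs, abs_of_nonneg (norm_nonneg z)]
      calc ‖z‖ ^ 2 * ‖conj' u * v‖ ≤ ‖z‖ ^ 2 * 1 := by gcongr
      _ < 1 := by nlinarith [norm_nonneg z]
    calc (0:ℝ) < 1 - ‖(‖z‖:ℂ) ^ 2 * (conj' u * v)‖ := by linarith
    _ ≤ ‖1 - (‖z‖:ℂ) ^ 2 * (conj' u * v)‖ := by
        have := norm_sub_norm_le (1 : ℂ) ((‖z‖:ℂ) ^ 2 * (conj' u * v))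
        simpa using this
  rw [pd, pd, hconj, ← mul_sub, norm_mul]
  rcases (norm_nonneg (1 - conj' u * v)).lt_or_eq with hD1 | hD1
  · rw [div_le_iff₀ hD2]
    have main := key_ineq z (conj' u * v) hz.le ht
    calc ‖z‖ * ‖u - v‖ = ‖z‖ * ‖u - v‖ * (‖1 - conj' u * v‖ / ‖1 - conj' u * v‖) := by
          rw [div_self hD1.ne', mul_one]
    _ = ‖u - v‖ * (‖z‖ * ‖1 - conj' u * v‖) / ‖1 - conj' u * v‖ := by ring
    _ ≤ ‖u - v‖ * (kf ‖z‖ * ‖1 - (‖z‖:ℂ) ^ 2 * (conj' u * v)‖) / ‖1 - conj' u * v‖ := by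
          gcongr
    _ = kf ‖z‖ * (‖u - v‖ / ‖1 - conj' u * v‖) * ‖1 - (‖z‖:ℂ) ^ 2 * (conj' u * v)‖ := by
          ring
  · have h0 : ‖u - v‖ = 0 :=
      le_antisymm ((sub_le_one_sub u v hu hv).trans hD1.symm.le) (norm_nonneg _)
    simp [h0]

def schurF (γ : ℕ → ℂ) : ℕ → ℕ → ℂ → ℂ
  | _, 0, _ => 0
  | n, N + 1, z => mob (γ n) (z * schurF γ (n + 1) N z)

lemma schurF_norm_le {γ : ℕ → ℂ} (hγ : ∀ n, ‖γ n‖ < 1) :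
    ∀ N n (z : ℂ), ‖z‖ ≤ 1 → ‖schurF γ n N z‖ ≤ 1 := by
  intro N
  induction N with
  | zero => intro n z _; simp [schurF]
  | succ N ih =>
    intro n z hz
    rw [schurF]
    refine mob_norm_le _ _ (hγ n) ?_
    calc ‖z * schurF γ (n+1) N z‖ = ‖z‖ * ‖schurF γ (n+1) N z‖ := norm_mul _ _
    _ ≤ 1 * 1 := by
        have := ih (n+1) z hz
        gcongr
    _ = 1 := by norm_num

lemma schurF_chain {γ : ℕ → ℂ} (hγ : ∀ n, ‖γ n‖ < 1) :
    ∀ N n M (z : ℂ), ‖z‖ < 1 → pd (schurF γ n N z) (schurF γ n (N + M) z) ≤ kf ‖z‖ ^ N := by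
  intro N
  induction N with
  | zero =>
    intro n M z hz
    simpa using pd_le_one _ _ (schurF_norm_le hγ 0 n z hz.le) (schurF_norm_le hγ M n z hz.le)
  | succ N ih =>
    intro n M z hz
    have harr : N + 1 + M = (N + M) + 1 := by omega
    rw [harr, schurF, schurF,
      pd_mob _ _ _ (hγ n)
        (by calc ‖z * schurF γ (n+1) N z‖ = ‖z‖ * ‖schurF γ (n+1) N z‖ := norm_mul _ _
            _ ≤ 1 * 1 := by have := schurF_norm_le hγ N (n+1) z hz.le; gcongr
            _ = 1 := one_mul 1)
        (by calc ‖z * schurF γ (n+1) (N+M) z‖ = ‖z‖ * ‖schurF γ (n+1) (N+M) z‖ := norm_mul _ _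
            _ ≤ 1 * 1 := by have := schurF_norm_le hγ (N+M) (n+1) z hz.le; gcongr
            _ = 1 := one_mul 1)]
    calc pd (z * schurF γ (n+1) N z) (z * schurF γ (n+1) (N+M) z)
        ≤ kf ‖z‖ * pd (schurF γ (n+1) N z) (schurF γ (n+1) (N+M) z) :=
          pd_smul _ _ _ hz (schurF_norm_le hγ N (n+1) z hz.le)
            (schurF_norm_le hγ (N+M) (n+1) z hz.le)
    _ ≤ kf ‖z‖ * kf ‖z‖ ^ N := by
          have := ih (n+1) M z hz
          have h0 := kf_nonneg (norm_nonneg z)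
          gcongr
    _ = kf ‖z‖ ^ (N + 1) := by ring

lemma schurF_diff {γ : ℕ → ℂ} (hγ : ∀ n, ‖γ n‖ < 1) :
    ∀ N n, DifferentiableOn ℂ (fun z => schurF γ n N z) (Metric.ball 0 1) := by
  intro N
  induction N with
  | zero => intro n; simpa [schurF] using differentiableOn_const (0:ℂ)
  | succ N ih =>
    intro n
    have hdiff : DifferentiableOn ℂ (fun z => z * schurF γ (n+1) N z) (Metric.ball 0 1) :=
      differentiableOn_id.mul (ih (n+1))
    have heq : (fun z => schurF γ n (N+1) z)
        = fun z => (γ n + z * schurF γ (n+1) N z)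
            / (1 + conj' (γ n) * (z * schurF γ (n+1) N z)) := by
      funext z; rw [schurF, mob]
    rw [heq]
    refine DifferentiableOn.div ((differentiableOn_const _).add hdiff)
      ((differentiableOn_const _).add ((differentiableOn_const _).mul hdiff)) ?_
    intro z hz
    refine mob_denom_ne (γ n) _ (hγ n) ?_
    have hz1 : ‖z‖ < 1 := by simpa [Metric.mem_ball] using hz
    calc ‖z * schurF γ (n+1) N z‖ = ‖z‖ * ‖schurF γ (n+1) N z‖ := norm_mul _ _
    _ ≤ 1 * 1 := by have := schurF_norm_le hγ N (n+1) z hz1.le; gcongr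
    _ = 1 := one_mul 1

lemma schurF_zero_eval {γ : ℕ → ℂ} (n N : ℕ) : schurF γ n (N + 1) 0 = γ n := by
  rw [schurF]
  simp [mob]

/-- a Schur function with non-terminating Schur algorithm is determined by
its Schur parameters, and every sequence in `𝔻^∞` arises as the Schur parameters of
some Schur function. -/
theorem stmt7 :
    (∀ fs gs : ℕ → ℂ → ℂ, SchurIterates fs → SchurIterates gs →
      (∀ n, fs n 0 = gs n 0) → ∀ z ∈ Metric.ball (0:ℂ) 1, fs 0 z = gs 0 z) ∧
    (∀ γ : ℕ → ℂ, (∀ n, ‖γ n‖ < 1) →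
      ∃ fs : ℕ → ℂ → ℂ, SchurIterates fs ∧ ∀ n, fs n 0 = γ n) := by
  constructor
  · -- Uniqueness
    rintro fs gs ⟨hfS, hfγ, hfrec⟩ ⟨hgS, hgγ, hgrec⟩ heq z hz
    rw [Metric.mem_ball, dist_zero_right] at hz
    have hzball : z ∈ Metric.ball (0:ℂ) 1 := by rwa [Metric.mem_ball, dist_zero_right]
    have hfb : ∀ n, ‖fs n z‖ ≤ 1 := fun n => (hfS n).2 z hzball
    have hgb : ∀ n, ‖gs n z‖ ≤ 1 := fun n => (hgS n).2 z hzball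
    have key : ∀ N n, pd (fs n z) (gs n z) ≤ kf ‖z‖ ^ N := by
      intro N
      induction N with
      | zero => intro n; simpa using pd_le_one _ _ (hfb n) (hgb n)
      | succ N ih =>
        intro n
        have hf' : fs n z = mob (fs n 0) (z * fs (n+1) z) := by
          rw [hfrec n z hzball, mob, mul_assoc]
        have hg' : gs n z = mob (fs n 0) (z * gs (n+1) z) := by
          rw [hgrec n z hzball, mob, mul_assoc, heq n]
        have hub : ‖z * fs (n+1) z‖ ≤ 1 := by
          rw [norm_mul]
          calc ‖z‖ * ‖fs (n+1) z‖ ≤ 1 * 1 := by have := hfb (n+1); gcongr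
          _ = 1 := one_mul 1
        have hvb : ‖z * gs (n+1) z‖ ≤ 1 := by
          rw [norm_mul]
          calc ‖z‖ * ‖gs (n+1) z‖ ≤ 1 * 1 := by have := hgb (n+1); gcongr
          _ = 1 := one_mul 1
        rw [hf', hg', pd_mob _ _ _ (hfγ n) hub hvb]
        calc pd (z * fs (n+1) z) (z * gs (n+1) z)
            ≤ kf ‖z‖ * pd (fs (n+1) z) (gs (n+1) z) :=
              pd_smul _ _ _ hz (hfb (n+1)) (hgb (n+1))
        _ ≤ kf ‖z‖ * kf ‖z‖ ^ N := by
              have := ih (n+1)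
              have h0 := kf_nonneg (norm_nonneg z)
              gcongr
        _ = kf ‖z‖ ^ (N + 1) := by ring
    have hlim : Tendsto (fun N : ℕ => 2 * kf ‖z‖ ^ N) atTop (nhds 0) := by
      have := tendsto_pow_atTop_nhds_zero_of_lt_one (kf_nonneg (norm_nonneg z))
        (kf_lt_one (norm_nonneg z) hz)
      simpa using (this.const_mul 2)
    have hle : ‖fs 0 z - gs 0 z‖ ≤ 0 := by
      refine ge_of_tendsto' hlim fun N => ?_
      calc ‖fs 0 z - gs 0 z‖ ≤ 2 * pd (fs 0 z) (gs 0 z) :=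
            norm_sub_le_two_pd _ _ (hfb 0) (hgb 0)
      _ ≤ 2 * kf ‖z‖ ^ N := by have := key N 0; gcongr
    have := le_antisymm hle (norm_nonneg _)
    rwa [norm_eq_zero, sub_eq_zero] at this
  · -- Existence
    intro γ hγ
    set F := schurF γ with hF
    -- Cauchy at every point of the ball
    have hcauchy : ∀ n (z : ℂ), ‖z‖ < 1 → CauchySeq (fun N => F n N z) := by
      intro n z hz
      refine cauchySeq_of_le_geometric (kf ‖z‖) 2 (kf_lt_one (norm_nonneg z) hz) fun N => ?_
      rw [dist_eq_norm]
      calc ‖F n N z - F n (N+1) z‖ ≤ 2 * pd (F n N z) (F n (N+1) z) :=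
            norm_sub_le_two_pd _ _ (schurF_norm_le hγ N n z hz.le)
              (schurF_norm_le hγ (N+1) n z hz.le)
      _ ≤ 2 * kf ‖z‖ ^ N := by have := schurF_chain hγ N n 1 z hz; gcongr
    set fs : ℕ → ℂ → ℂ := fun n z => limUnder atTop (fun N => F n N z) with hfsdef
    have htend : ∀ n (z : ℂ), ‖z‖ < 1 → Tendsto (fun N => F n N z) atTop (nhds (fs n z)) :=
      fun n z hz => (hcauchy n z hz).tendsto_limUnder
    have hzero : ∀ n, fs n 0 = γ n := by
      intro n
      have h0 : ‖(0:ℂ)‖ < 1 := by norm_num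
      have h1 : Tendsto (fun N => F n N 0) atTop (nhds (γ n)) := by
        refine Tendsto.congr' ?_ tendsto_const_nhds
        filter_upwards [eventually_ge_atTop 1] with N hN
        obtain ⟨M, rfl⟩ : ∃ M, N = M + 1 := ⟨N - 1, by omega⟩
        exact (schurF_zero_eval n M).symm
      exact tendsto_nhds_unique (htend n 0 h0) h1
    have hbound : ∀ n N (z : ℂ), ‖z‖ < 1 → ‖F n N z - fs n z‖ ≤ 2 * kf ‖z‖ ^ N := by
      intro n N z hz
      have h1 : Tendsto (fun M => F n (M + N) z) atTop (nhds (fs n z)) :=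
        (htend n z hz).comp (tendsto_add_atTop_nat N)
      have h3 : Tendsto (fun M => ‖F n N z - F n (M + N) z‖) atTop
          (nhds ‖F n N z - fs n z‖) := (tendsto_const_nhds.sub h1).norm
      refine le_of_tendsto h3 (Eventually.of_forall fun M => ?_)
      have hch := schurF_chain hγ N n M z hz
      rw [add_comm M N]
      calc ‖F n N z - F n (N + M) z‖ ≤ 2 * pd (F n N z) (F n (N + M) z) :=
            norm_sub_le_two_pd _ _ (schurF_norm_le hγ N n z hz.le)
              (schurF_norm_le hγ (N + M) n z hz.le)
      _ ≤ 2 * kf ‖z‖ ^ N := by gcongr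
    have hnorm : ∀ n (z : ℂ), ‖z‖ < 1 → ‖fs n z‖ ≤ 1 := fun n z hz =>
      le_of_tendsto (htend n z hz).norm
        (Eventually.of_forall fun N => schurF_norm_le hγ N n z hz.le)
    have hzfs : ∀ n (z : ℂ), ‖z‖ < 1 → ‖z * fs (n + 1) z‖ ≤ 1 := by
      intro n z hz
      rw [norm_mul]
      calc ‖z‖ * ‖fs (n+1) z‖ ≤ 1 * 1 := by have := hnorm (n+1) z hz; gcongr
      _ = 1 := one_mul 1
    have htlu : ∀ n, TendstoLocallyUniformlyOn (fun N z => F n N z) (fs n) atTop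
        (Metric.ball 0 1) := by
      intro n
      rw [Metric.tendstoLocallyUniformlyOn_iff]
      intro ε hε x hx
      rw [Metric.mem_ball, dist_zero_right] at hx
      set r := (‖x‖ + 1) / 2 with hr
      have hr0 : 0 ≤ r := by positivity
      have hxr : ‖x‖ < r := by rw [hr]; linarith
      have hr1 : r < 1 := by rw [hr]; linarith
      refine ⟨Metric.ball 0 r, mem_nhdsWithin_of_mem_nhds
        (Metric.isOpen_ball.mem_nhds (by rwa [Metric.mem_ball, dist_zero_right])), ?_⟩
      have hk := tendsto_pow_atTop_nhds_zero_of_lt_one (kf_nonneg hr0) (kf_lt_one hr0 hr1)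
      filter_upwards [hk.eventually (eventually_lt_nhds (show (0:ℝ) < ε / 2 by linarith))]
        with N hN y hy
      rw [Metric.mem_ball, dist_zero_right] at hy
      rw [dist_comm, dist_eq_norm]
      have hkm := kf_mono (norm_nonneg y) hy.le hr1.le
      have hk0 := kf_nonneg (norm_nonneg y)
      calc ‖F n N y - fs n y‖ ≤ 2 * kf ‖y‖ ^ N := hbound n N y (hy.trans hr1)
      _ ≤ 2 * kf r ^ N := by gcongr
      _ < ε := by linarith
    have hdiff : ∀ n, DifferentiableOn ℂ (fs n) (Metric.ball 0 1) := fun n =>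
      (htlu n).differentiableOn (Eventually.of_forall fun N => schurF_diff hγ N n)
        Metric.isOpen_ball
    refine ⟨fs, ⟨fun n => ⟨hdiff n, fun z hz => hnorm n z
        (by rwa [Metric.mem_ball, dist_zero_right] at hz)⟩,
      fun n => by rw [hzero n]; exact hγ n, ?_⟩, hzero⟩
    intro n z hzball
    have hz : ‖z‖ < 1 := by rwa [Metric.mem_ball, dist_zero_right] at hzball
    have h1 : Tendsto (fun N => F n (N + 1) z) atTop (nhds (fs n z)) :=
      (htend n z hz).comp (tendsto_add_atTop_nat 1)
    have hden : 1 + conj' (γ n) * (z * fs (n + 1) z) ≠ 0 :=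
      mob_denom_ne _ _ (hγ n) (hzfs n z hz)
    have h2 : Tendsto
        (fun N => (γ n + z * F (n + 1) N z) / (1 + conj' (γ n) * (z * F (n + 1) N z)))
        atTop (nhds ((γ n + z * fs (n + 1) z) / (1 + conj' (γ n) * (z * fs (n + 1) z)))) :=
      Tendsto.div
        (tendsto_const_nhds.add (tendsto_const_nhds.mul (htend (n + 1) z hz)))
        (tendsto_const_nhds.add
          (tendsto_const_nhds.mul (tendsto_const_nhds.mul (htend (n + 1) z hz)))) hden
    have heqN : ∀ N, F n (N + 1) z
        = (γ n + z * F (n + 1) N z) / (1 + conj' (γ n) * (z * F (n + 1) N z)) := by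
      intro N
      rw [hF]
      rw [schurF, mob]
    have h3 := tendsto_nhds_unique h1 (h2.congr fun N => (heqN N).symm)
    rw [h3, hzero n, mul_assoc]

end
end

section
/- Let f and g be Schur functions and suppose their Schur parameters agree for the first n steps: γ_j(f) = γ_j(g) for j = 0, …, n−1 (with all these parameters in 𝔻). Then |f(z) − g(z)| ≤ 2|z|^n for all z ∈ 𝔻. -/
open MeasureTheory Polynomial Filter

noncomputable section

open Metric

lemma one_add_ne {w : ℂ} (h : ‖w‖ < 1) : 1 + w ≠ 0 := by
  intro h0
  have hw : w = -1 := by linear_combination h0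
  rw [hw] at h
  simp at h

lemma schur_aux : ∀ (n : ℕ) (fs gs : ℕ → ℂ → ℂ),
    (∀ j ≤ n, IsSchur (fs j)) → (∀ j ≤ n, IsSchur (gs j)) →
    (∀ j < n, ‖fs j 0‖ < 1) →
    (∀ j < n, ∀ z ∈ ball (0:ℂ) 1,
      fs j z = (fs j 0 + z * fs (j + 1) z) / (1 + (starRingEnd ℂ) (fs j 0) * z * fs (j + 1) z)) →
    (∀ j < n, ∀ z ∈ ball (0:ℂ) 1,
      gs j z = (gs j 0 + z * gs (j + 1) z) / (1 + (starRingEnd ℂ) (gs j 0) * z * gs (j + 1) z)) →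
    (∀ j < n, fs j 0 = gs j 0) →
    ∃ H : ℂ → ℂ, DifferentiableOn ℂ H (ball 0 1) ∧
      ∀ z ∈ ball (0:ℂ) 1, fs 0 z - gs 0 z = z ^ n * H z := by
  intro n
  induction n with
  | zero =>
    intro fs gs hfS hgS _ _ _ _
    exact ⟨fun z => fs 0 z - gs 0 z, (hfS 0 le_rfl).1.sub (hgS 0 le_rfl).1,
      fun z hz => by simp⟩
  | succ n ih =>
    intro fs gs hfS hgS hfγ hfrec hgrec hagree
    obtain ⟨H', hH'd, hH'⟩ := ih (fun j => fs (j+1)) (fun j => gs (j+1))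
      (fun j hj => hfS (j+1) (by omega)) (fun j hj => hgS (j+1) (by omega))
      (fun j hj => hfγ (j+1) (by omega))
      (fun j hj => hfrec (j+1) (by omega)) (fun j hj => hgrec (j+1) (by omega))
      (fun j hj => hagree (j+1) (by omega))
    set γ := fs 0 0 with hγdef
    have hγ : ‖γ‖ < 1 := hfγ 0 (Nat.succ_pos n)
    have hgγ0 : gs 0 0 = γ := (hagree 0 (Nat.succ_pos n)).symm
    have hFb : ∀ z ∈ ball (0:ℂ) 1, ‖fs 1 z‖ ≤ 1 := (hfS 1 (by omega)).2
    have hGb : ∀ z ∈ ball (0:ℂ) 1, ‖gs 1 z‖ ≤ 1 := (hgS 1 (by omega)).2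
    have hsmall : ∀ (F : ℂ → ℂ), (∀ z ∈ ball (0:ℂ) 1, ‖F z‖ ≤ 1) →
        ∀ z ∈ ball (0:ℂ) 1, (1 + (starRingEnd ℂ) γ * z * F z) ≠ 0 := by
      intro F hF z hz
      apply one_add_ne
      have hz1 : ‖z‖ < 1 := by simpa [Complex.dist_eq] using hz
      calc ‖(starRingEnd ℂ) γ * z * F z‖ = ‖γ‖ * ‖z‖ * ‖F z‖ := by
            simp [norm_mul]
        _ ≤ ‖γ‖ * ‖z‖ * 1 := by
            apply mul_le_mul_of_nonneg_left (hF z hz) (by positivity)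
        _ < 1 := by nlinarith [norm_nonneg γ, norm_nonneg z, hγ, hz1]
    have hd1 := hsmall _ hFb
    have hd2 := hsmall _ hGb
    refine ⟨fun z => (1 - (starRingEnd ℂ) γ * γ) * H' z /
        ((1 + (starRingEnd ℂ) γ * z * fs 1 z) * (1 + (starRingEnd ℂ) γ * z * gs 1 z)),
      ?_, ?_⟩
    · apply DifferentiableOn.div
      · exact (differentiableOn_const _).mul hH'd
      · apply DifferentiableOn.mul
        · exact (differentiableOn_const _).add
            (((differentiableOn_const _).mul differentiableOn_id).mul (hfS 1 (by omega)).1)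
        · exact (differentiableOn_const _).add
            (((differentiableOn_const _).mul differentiableOn_id).mul (hgS 1 (by omega)).1)
      · intro z hz
        exact mul_ne_zero (hd1 z hz) (hd2 z hz)
    · intro z hz
      have e1 : fs 1 z - gs 1 z = z ^ n * H' z := hH' z hz
      rw [hfrec 0 (Nat.succ_pos n) z hz, hgrec 0 (Nat.succ_pos n) z hz, hgγ0, ← hγdef]
      simp only [zero_add]
      rw [div_sub_div _ _ (hd1 z hz) (hd2 z hz)]
      show _ = z ^ (n + 1) * ((1 - (starRingEnd ℂ) γ * γ) * H' z /
          ((1 + (starRingEnd ℂ) γ * z * fs 1 z) * (1 + (starRingEnd ℂ) γ * z * gs 1 z)))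
      rw [mul_div_assoc', div_left_inj' (mul_ne_zero (hd1 z hz) (hd2 z hz))]
      rw [show fs 1 z = gs 1 z + z ^ n * H' z by linear_combination e1]
      ring


lemma maxmod_step {H : ℂ → ℂ} (n : ℕ) (hHd : DifferentiableOn ℂ H (ball 0 1))
    (hb : ∀ w ∈ ball (0:ℂ) 1, ‖(w:ℂ) ^ n * H w‖ ≤ 2) {z : ℂ} (hz : z ∈ ball (0:ℂ) 1) :
    ‖H z‖ ≤ 2 := by
  have hz1 : ‖z‖ < 1 := by simpa [Complex.dist_eq] using hz
  have key : ∀ ρ ∈ Set.Ioo ‖z‖ 1, ‖H z‖ ≤ 2 / ρ ^ n := by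
    rintro ρ ⟨hρ1, hρ2⟩
    have hρ0 : 0 < ρ := lt_of_le_of_lt (norm_nonneg z) hρ1
    have hsub : closure (ball (0:ℂ) ρ) ⊆ ball (0:ℂ) 1 := by
      rw [closure_ball (0:ℂ) (ne_of_gt hρ0)]
      exact closedBall_subset_ball hρ2
    refine Complex.norm_le_of_forall_mem_frontier_norm_le (U := ball (0:ℂ) ρ) isBounded_ball ?_ ?_ ?_
    · exact ((hHd.mono hsub).diffContOnCl)
    · intro w hw
      rw [frontier_ball (0:ℂ) (ne_of_gt hρ0)] at hw
      have hwρ : ‖w‖ = ρ := by simpa using hw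
      have hwb : w ∈ ball (0:ℂ) 1 := by
        simp [Complex.dist_eq, hwρ, hρ2]
      have h2 := hb w hwb
      rw [norm_mul, norm_pow, hwρ] at h2
      rw [le_div_iff₀ (pow_pos hρ0 n)]
      linarith [h2]
    · rw [closure_ball (0:ℂ) (ne_of_gt hρ0)]
      simpa using hρ1.le
  have hten : Tendsto (fun ρ : ℝ => 2 / ρ ^ n) (nhdsWithin 1 (Set.Iio 1)) (nhds 2) := by
    have hc : ContinuousAt (fun ρ : ℝ => 2 / ρ ^ n) 1 := by
      apply ContinuousAt.div continuousAt_const (continuousAt_pow _ _)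
      norm_num
    have := hc.tendsto.mono_left (nhdsWithin_le_nhds (s := Set.Iio (1:ℝ)))
    simpa using this
  refine ge_of_tendsto hten ?_
  filter_upwards [Ioo_mem_nhdsLT_of_mem (Set.mem_Ioc.2 ⟨hz1, le_rfl⟩)] with ρ hρ
  exact key ρ hρ

/-- if the Schur parameters of `f = fs 0` and `g = gs 0` agree for
`j = 0, …, n−1` (all lying in `𝔻`), then `|f(z) − g(z)| ≤ 2|z|^n` on `𝔻`. -/
theorem stmt8 (n : ℕ) (fs gs : ℕ → ℂ → ℂ)
    (hfS : ∀ j ≤ n, IsSchur (fs j)) (hgS : ∀ j ≤ n, IsSchur (gs j))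
    (hfγ : ∀ j < n, ‖fs j 0‖ < 1) (hgγ : ∀ j < n, ‖gs j 0‖ < 1)
    (hfrec : ∀ j < n, ∀ z ∈ Metric.ball (0:ℂ) 1,
      fs j z = (fs j 0 + z * fs (j + 1) z) / (1 + (starRingEnd ℂ) (fs j 0) * z * fs (j + 1) z))
    (hgrec : ∀ j < n, ∀ z ∈ Metric.ball (0:ℂ) 1,
      gs j z = (gs j 0 + z * gs (j + 1) z) / (1 + (starRingEnd ℂ) (gs j 0) * z * gs (j + 1) z))
    (hagree : ∀ j < n, fs j 0 = gs j 0) :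
    ∀ z ∈ Metric.ball (0:ℂ) 1, ‖fs 0 z - gs 0 z‖ ≤ 2 * ‖z‖ ^ n := by
  intro z hz
  obtain ⟨H, hHd, hH⟩ := schur_aux n fs gs hfS hgS hfγ hfrec hgrec hagree
  have hb : ∀ w ∈ Metric.ball (0:ℂ) 1, ‖(w:ℂ) ^ n * H w‖ ≤ 2 := by
    intro w hw
    rw [← hH w hw]
    have h1 := (hfS 0 (Nat.zero_le n)).2 w hw
    have h2 := (hgS 0 (Nat.zero_le n)).2 w hw
    calc ‖fs 0 w - gs 0 w‖ ≤ ‖fs 0 w‖ + ‖gs 0 w‖ := norm_sub_le _ _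
      _ ≤ 2 := by linarith
  have hHb : ‖H z‖ ≤ 2 := maxmod_step n hHd hb hz
  calc ‖fs 0 z - gs 0 z‖ = ‖z ^ n * H z‖ := by rw [hH z hz]
    _ = ‖z‖ ^ n * ‖H z‖ := by rw [norm_mul, norm_pow]
    _ ≤ ‖z‖ ^ n * 2 := by
        apply mul_le_mul_of_nonneg_left hHb (by positivity)
    _ = 2 * ‖z‖ ^ n := by ring

end
end

section
/- Let μ be a nontrivial probability measure on the unit circle. Then every zero of the monic orthogonal polynomial Φ_n(·; dμ) lies in the open unit disk 𝔻, and every zero of the reversed polynomial Φ_n^* lies in ℂ \ closure(𝔻). -/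
open MeasureTheory Polynomial Filter

noncomputable section

section Aux

variable {μ : Measure ℂ}

lemma circle_ae (hμ : IsNontrivialOnCircle μ) : ∀ᵐ z ∂μ, ‖z‖ = 1 := by
  rw [MeasureTheory.ae_iff]
  exact hμ.onCircle

/-- Any continuous function is integrable w.r.t. a probability measure on the circle. -/
lemma integrable_of_continuous {E : Type*} [NormedAddCommGroup E]
    (hμ : IsNontrivialOnCircle μ) {f : ℂ → E} (hf : Continuous f) :
    Integrable f μ := by
  have := hμ.prob
  obtain ⟨z₀, _, hC⟩ := (isCompact_sphere (0:ℂ) 1).exists_isMaxOn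
    (NormedSpace.sphere_nonempty.mpr zero_le_one) hf.norm.continuousOn
  refine Integrable.mono' (integrable_const (‖f z₀‖)) hf.aestronglyMeasurable ?_
  filter_upwards [circle_ae hμ] with z hz
  exact hC (by simpa [Metric.mem_sphere, dist_zero_right] using hz)

lemma polyNormSq_pos (hμ : IsNontrivialOnCircle μ) {P : Polynomial ℂ} (hP : P ≠ 0) :
    0 < polyNormSq μ P := by
  have hnn : (0 : ℂ → ℝ) ≤ fun z => ‖P.eval z‖ ^ 2 := fun z => sq_nonneg _
  have hint : Integrable (fun z => ‖P.eval z‖ ^ 2) μ :=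
    integrable_of_continuous hμ ((P.continuous.norm).pow 2)
  rcases lt_or_eq_of_le (integral_nonneg hnn) with h | h
  · exact h
  exfalso
  have h0 := (integral_eq_zero_iff_of_nonneg hnn hint).mp h.symm
  apply hμ.infiniteSupport P.roots.toFinset
  have hae : ∀ᵐ z ∂μ, z ∈ (↑P.roots.toFinset : Set ℂ) := by
    filter_upwards [h0] with z hz
    have hz' : P.eval z = 0 := by
      have : ‖P.eval z‖ ^ 2 = (0 : ℂ → ℝ) z := hz
      simpa using this
    simp only [Finset.coe_sort_coe, Finset.mem_coe, Multiset.mem_toFinset]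
    rw [Polynomial.mem_roots hP]
    exact hz'
  exact MeasureTheory.ae_iff.mp hae

lemma normSq_cast (w : ℂ) : (starRingEnd ℂ) w * w = ((‖w‖ ^ 2 : ℝ) : ℂ) := by
  rw [mul_comm, Complex.mul_conj]
  norm_cast
  rw [Complex.normSq_eq_norm_sq]

/-- Extended orthogonality: `Φ n` is orthogonal to every polynomial of degree `< n`. -/
lemma orth_ext (hμ : IsNontrivialOnCircle μ) {Φ : ℕ → Polynomial ℂ}
    (hΦ : IsMonicOPUC μ Φ) (n : ℕ) {q : Polynomial ℂ} (hq : q.natDegree < n) :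
    ∫ z, (starRingEnd ℂ) (q.eval z) * (Φ n).eval z ∂μ = 0 := by
  have key : ∀ z : ℂ, (starRingEnd ℂ) (q.eval z) * (Φ n).eval z
      = ∑ j ∈ Finset.range n,
          (starRingEnd ℂ) (q.coeff j) * ((starRingEnd ℂ) z ^ j * (Φ n).eval z) := by
    intro z
    rw [eval_eq_sum_range' hq, map_sum, Finset.sum_mul]
    refine Finset.sum_congr rfl fun j _ => ?_
    rw [map_mul, map_pow]; ring
  simp_rw [key]
  rw [integral_finset_sum]
  · refine Finset.sum_eq_zero fun j hj => ?_
    rw [integral_const_mul, (hΦ n).2 j (Finset.mem_range.mp hj), mul_zero]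
  · intro j _
    exact integrable_of_continuous hμ
      (continuous_const.mul ((Complex.continuous_conj.pow j).mul (Φ n).continuous))

/-- All zeros of `Φ n` lie in the open unit disk. -/
lemma zeros_in_disk (hμ : IsNontrivialOnCircle μ) {Φ : ℕ → Polynomial ℂ}
    (hΦ : IsMonicOPUC μ Φ) (n : ℕ) (z₀ : ℂ) (hz : (Φ n).eval z₀ = 0) : ‖z₀‖ < 1 := by
  have hmon := (hΦ n).1.1
  have hdeg := (hΦ n).1.2
  rcases Nat.eq_zero_or_pos n with rfl | hn
  · exfalso
    have h1 : Φ 0 = 1 := (hmon.natDegree_eq_zero).mp hdeg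
    rw [h1] at hz; simp at hz
  obtain ⟨q, hq⟩ := Polynomial.dvd_iff_isRoot.mpr hz
  have hΦne : Φ n ≠ 0 := hmon.ne_zero
  have hqne : q ≠ 0 := by rintro rfl; rw [mul_zero] at hq; exact hΦne hq
  have hqlt : q.natDegree < n := by
    have hXne : (X - C z₀ : Polynomial ℂ) ≠ 0 := X_sub_C_ne_zero z₀
    have := Polynomial.natDegree_mul hXne hqne
    rw [← hq, hdeg, Polynomial.natDegree_X_sub_C] at this
    omega
  -- evaluation of the factorization
  have heval : ∀ z : ℂ, (Φ n).eval z = (z - z₀) * q.eval z := by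
    intro z; rw [hq]; simp
  set cq : ℂ → ℂ := fun z => (starRingEnd ℂ) (q.eval z) with hcq
  have hcont_cq : Continuous cq := Complex.continuous_conj.comp q.continuous
  have hcont_q : Continuous fun z => q.eval z := q.continuous
  -- the two basic complex integrals
  have hintA : Integrable (fun z => z * (cq z * q.eval z)) μ :=
    integrable_of_continuous hμ (continuous_id.mul (hcont_cq.mul hcont_q))
  have hintB : Integrable (fun z => cq z * q.eval z) μ :=
    integrable_of_continuous hμ (hcont_cq.mul hcont_q)
  set A : ℂ := ∫ z, z * (cq z * q.eval z) ∂μ with hA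
  set B : ℝ := polyNormSq μ q with hB
  have hBpos : 0 < B := polyNormSq_pos hμ hqne
  have hBc : (∫ z, cq z * q.eval z ∂μ) = (B : ℂ) := by
    have : ∀ z : ℂ, cq z * q.eval z = ((‖q.eval z‖ ^ 2 : ℝ) : ℂ) := fun z => normSq_cast _
    simp_rw [this]
    rw [show ((B : ℝ) : ℂ) = ((∫ z, ‖q.eval z‖ ^ 2 ∂μ : ℝ) : ℂ) from rfl]
    exact integral_ofReal
  -- orthogonality gives A = z₀ * B
  have horth : ∫ z, cq z * (Φ n).eval z ∂μ = 0 := orth_ext hμ hΦ n hqlt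
  have hAeq : A = z₀ * (B : ℂ) := by
    have hsplit : ∀ z : ℂ, cq z * (Φ n).eval z
        = z * (cq z * q.eval z) - z₀ * (cq z * q.eval z) := by
      intro z; rw [heval z]; ring
    rw [show (fun z => cq z * (Φ n).eval z) = fun z =>
        z * (cq z * q.eval z) - z₀ * (cq z * q.eval z) from funext hsplit] at horth
    rw [integral_sub hintA (hintB.const_mul z₀), integral_const_mul, hBc] at horth
    rw [hA, hBc] at *
    linear_combination horth
  -- compute polyNormSq of Φ n
  have hreA : Integrable (fun z => ((starRingEnd ℂ) z₀ * (z * ((‖q.eval z‖ ^ 2 : ℝ) : ℂ)))) μ := by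
    refine integrable_of_continuous hμ ?_
    exact continuous_const.mul (continuous_id.mul
      (Complex.continuous_ofReal.comp ((q.continuous.norm).pow 2)))
  have hint1 : Integrable (fun z => ‖q.eval z‖ ^ 2) μ :=
    integrable_of_continuous hμ ((q.continuous.norm).pow 2)
  have hint2 : Integrable
      (fun z => ((starRingEnd ℂ) z₀ * (z * ((‖q.eval z‖ ^ 2 : ℝ) : ℂ))).re) μ := by
    refine integrable_of_continuous hμ ?_
    exact Complex.continuous_re.comp (continuous_const.mul (continuous_id.mul
      (Complex.continuous_ofReal.comp ((q.continuous.norm).pow 2))))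
  have hkey : polyNormSq μ (Φ n)
      = ∫ z, ((1 + ‖z₀‖ ^ 2) * ‖q.eval z‖ ^ 2
          - 2 * ((starRingEnd ℂ) z₀ * (z * ((‖q.eval z‖ ^ 2 : ℝ) : ℂ))).re) ∂μ := by
    rw [polyNormSq]
    refine integral_congr_ae ?_
    filter_upwards [circle_ae hμ] with z hz
    rw [heval z, norm_mul, mul_pow]
    have hz2 : ‖z - z₀‖ ^ 2 = 1 + ‖z₀‖ ^ 2 - 2 * ((starRingEnd ℂ) z₀ * z).re := by
      have h1 : ‖z - z₀‖ ^ 2 = Complex.normSq (z - z₀) := by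
        rw [← Complex.sq_norm]
      rw [h1, Complex.normSq_sub]
      have h2 : Complex.normSq z = 1 := by
        rw [← Complex.sq_norm, hz]; norm_num
      have h3 : Complex.normSq z₀ = ‖z₀‖ ^ 2 := by
        rw [← Complex.sq_norm]
      rw [h2, h3]
      have h4 : (z * (starRingEnd ℂ) z₀).re = ((starRingEnd ℂ) z₀ * z).re := by
        rw [mul_comm]
      rw [h4]
    have h4 : ((starRingEnd ℂ) z₀ * (z * ((‖q.eval z‖ ^ 2 : ℝ) : ℂ))).re
        = ((starRingEnd ℂ) z₀ * z).re * ‖q.eval z‖ ^ 2 := by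
      rw [← mul_assoc, mul_comm ((starRingEnd ℂ) z₀ * z) (((‖q.eval z‖ ^ 2 : ℝ)) : ℂ),
        Complex.re_ofReal_mul]
      ring
    rw [hz2, h4]
    ring
  have hΦnorm : polyNormSq μ (Φ n) = (1 - ‖z₀‖ ^ 2) * B := by
    rw [hkey]
    rw [integral_sub (hint1.const_mul _) (hint2.const_mul 2), integral_const_mul,
      integral_const_mul]
    have hre := integral_re hreA
    simp only [RCLike.re_to_complex] at hre
    rw [hre]
    have h5 : (∫ z, (starRingEnd ℂ) z₀ * (z * ((‖q.eval z‖ ^ 2 : ℝ) : ℂ)) ∂μ)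
        = (starRingEnd ℂ) z₀ * A := by
      rw [integral_const_mul, hA]
      congr 1
      refine integral_congr_ae (Eventually.of_forall fun z => ?_)
      simp only [hcq, normSq_cast]
    rw [h5, hAeq]
    have h6 : ((starRingEnd ℂ) z₀ * (z₀ * (B : ℂ))).re = ‖z₀‖ ^ 2 * B := by
      rw [← mul_assoc, normSq_cast z₀]
      norm_cast
    rw [h6]
    have hBint : (∫ z, ‖q.eval z‖ ^ 2 ∂μ) = B := rfl
    rw [hBint]
    ring
  have hΦpos : 0 < polyNormSq μ (Φ n) := polyNormSq_pos hμ hΦne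
  rw [hΦnorm] at hΦpos
  have h7 : 0 < 1 - ‖z₀‖ ^ 2 := by
    rcases mul_pos_iff.mp hΦpos with ⟨h, _⟩ | ⟨_, h⟩
    · exact h
    · linarith
  nlinarith [norm_nonneg z₀]

lemma revStar_eval {n : ℕ} {P : Polynomial ℂ} (hP : P.natDegree ≤ n) {w : ℂ} (hw : w ≠ 0) :
    (revStar n P).eval w = w ^ n * (starRingEnd ℂ) (P.eval (1 / (starRingEnd ℂ) w)) := by
  rw [revStar, eval_finset_sum]
  simp only [eval_mul, eval_C, eval_pow, eval_X]
  rw [eval_eq_sum_range' (lt_of_le_of_lt hP (Nat.lt_succ_self n)), map_sum, Finset.mul_sum]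
  rw [← Finset.sum_range_reflect (fun j => w ^ n *
    (starRingEnd ℂ) (P.coeff j * (1 / (starRingEnd ℂ) w) ^ j)) (n + 1)]
  refine Finset.sum_congr rfl fun j hj => ?_
  have hj' : j ≤ n := Nat.lt_succ_iff.mp (Finset.mem_range.mp hj)
  have hred : n + 1 - 1 - j = n - j := by omega
  rw [hred, map_mul, map_pow]
  have h1 : (starRingEnd ℂ) (1 / (starRingEnd ℂ) w) = 1 / w := by
    rw [map_div₀, map_one, Complex.conj_conj]
  rw [h1]
  have h2 : w ^ n * (1 / w) ^ (n - j) = w ^ j := by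
    have hkey : w ^ j * w ^ (n - j) = w ^ n := by
      rw [← pow_add]
      congr 1
      omega
    have hne : w ^ (n - j) ≠ 0 := pow_ne_zero _ hw
    rw [one_div, inv_pow, ← hkey, mul_assoc, mul_inv_cancel₀ hne, mul_one]
  rw [← h2]
  ring

lemma revStar_eval_zero (n : ℕ) (P : Polynomial ℂ) :
    (revStar n P).eval 0 = (starRingEnd ℂ) (P.coeff n) := by
  rw [revStar, eval_finset_sum]
  simp only [eval_mul, eval_C, eval_pow, eval_X]
  rw [Finset.sum_eq_single 0]
  · simp
  · intro j _ hj; simp [zero_pow hj]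
  · intro h; simp at h

end Aux

/-- all zeros of `Φ_n` lie in the open unit disk, and all zeros of `Φ_n^*`
lie outside the closed unit disk. -/
theorem stmt9 (μ : Measure ℂ) (hμ : IsNontrivialOnCircle μ)
    (Φ : ℕ → Polynomial ℂ) (hΦ : IsMonicOPUC μ Φ) :
    (∀ (n : ℕ) (z : ℂ), (Φ n).eval z = 0 → ‖z‖ < 1) ∧
    (∀ (n : ℕ) (z : ℂ), (revStar n (Φ n)).eval z = 0 → 1 < ‖z‖) := by
  have hdisk : ∀ (n : ℕ) (z : ℂ), (Φ n).eval z = 0 → ‖z‖ < 1 :=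
    fun n z hz => zeros_in_disk hμ hΦ n z hz
  refine ⟨hdisk, fun n w hw => ?_⟩
  have hmon := (hΦ n).1.1
  have hdeg := (hΦ n).1.2
  have hw0 : w ≠ 0 := by
    rintro rfl
    rw [revStar_eval_zero] at hw
    have : (Φ n).coeff n = 1 := by
      have := hmon.leadingCoeff
      rwa [Polynomial.leadingCoeff, hdeg] at this
    rw [this] at hw
    simp at hw
  rw [revStar_eval hdeg.le hw0] at hw
  rcases mul_eq_zero.mp hw with h | h
  · exact absurd h (pow_ne_zero n hw0)
  · have hroot : (Φ n).eval (1 / (starRingEnd ℂ) w) = 0 := by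
      have := congrArg (starRingEnd ℂ) h
      rwa [Complex.conj_conj, map_zero] at this
    have hlt := hdisk n _ hroot
    rw [norm_div, norm_one, RCLike.norm_conj] at hlt
    have hwpos : 0 < ‖w‖ := norm_pos_iff.mpr hw0
    rw [div_lt_one hwpos] at hlt
    exact hlt


end
end
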